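/- arXiv:2003.13553 — 3 statements merged into one kernel-verified Lean document; each statement's English description precedes it below -/
import Mathlib

section
/- Suppose 𝒜 is an essential, central hyperplane arrangement in a finite-dimensional complex vector space whose decomposition into irreducible factors has k factors, and let G=π₁(M(𝒜)). Then the center Z(G) contains a free abelian subgroup of rank k. -/
open CategoryTheory
open scoped FundamentalGroupoid Classical

noncomputable section

namespace MyWind

open Set unitInterval


/-- `L` is a continuous logarithm of `γ`. -/
def ExpLift (γ L : unitInterval → ℂ) : Prop :=
  Continuous L ∧ ∀ t, Complex.exp (L t) = γ t

lemma abs_min_sub_min (t a b : ℝ) : |min t a - min t b| ≤ |a - b| := by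
  rcases le_total t a with h1 | h1 <;> rcases le_total t b with h2 | h2
  · rw [min_eq_left h1, min_eq_left h2]; simp [abs_nonneg]
  · rw [min_eq_left h1, min_eq_right h2, abs_of_nonneg (by linarith),
      abs_of_nonneg (by linarith : (0:ℝ) ≤ a - b)]
    linarith
  · rw [min_eq_right h1, min_eq_left h2, abs_of_nonpos (by linarith),
      abs_of_nonpos (by linarith : a - b ≤ 0)]
    linarith
  · rw [min_eq_right h1, min_eq_right h2]

lemma intmul_const {f : unitInterval → ℂ} (hf : Continuous f)
    (h : ∀ t, ∃ m : ℤ, f t = m * (2 * Real.pi * Complex.I)) : f 1 = f 0 := by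
  have key : IsClopen {t : unitInterval | f t = f 0} := by
    constructor
    · exact isClosed_eq hf continuous_const
    · rw [isOpen_iff_mem_nhds]
      intro t ht
      have h1 : ∀ᶠ s in nhds t, f s ∈ Metric.ball (f t) (2 * Real.pi) :=
        (hf.tendsto t) (Metric.ball_mem_nhds _ (by positivity))
      filter_upwards [h1] with s hs
      obtain ⟨ms, hms⟩ := h s
      obtain ⟨mt, hmt⟩ := h t
      have hd : f s - f t = ((ms - mt : ℤ) : ℂ) * (2 * Real.pi * Complex.I) := by
        rw [hms, hmt]; push_cast; ring
      have hn : ‖f s - f t‖ < 2 * Real.pi := by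
        simpa [Metric.mem_ball, dist_eq_norm] using hs
      rw [hd] at hn
      have hnorm : ‖((ms - mt : ℤ) : ℂ) * (2 * Real.pi * Complex.I)‖ =
          |((ms - mt : ℤ) : ℝ)| * (2 * Real.pi) := by
        rw [norm_mul, norm_mul, norm_mul, Complex.norm_I, Complex.norm_real]
        rw [show ((ms - mt : ℤ) : ℂ) = (((ms - mt : ℤ) : ℝ) : ℂ) by push_cast; ring,
          Complex.norm_real, Real.norm_eq_abs, Real.norm_eq_abs,
          abs_of_nonneg Real.pi_pos.le]
        rw [show ‖(2:ℂ)‖ = 2 by norm_num]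
        ring
      rw [hnorm] at hn
      have hms0 : ms - mt = 0 := by
        by_contra hne
        have h1le : (1 : ℝ) ≤ |((ms - mt : ℤ) : ℝ)| := by
          exact_mod_cast Int.one_le_abs (by omega)
        nlinarith [Real.pi_pos]
      have hfst : f s = f t := by
        rw [hms, hmt]
        have : ms = mt := by omega
        rw [this]
      show f s = f 0
      rw [hfst]; exact ht
  have huniv : {t : unitInterval | f t = f 0} = Set.univ :=
    key.eq_univ ⟨0, rfl⟩
  have h1 : (1 : unitInterval) ∈ {t : unitInterval | f t = f 0} :=
    huniv ▸ Set.mem_univ _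
  exact h1

lemma expLift_diff_unique {γ L L' : unitInterval → ℂ} (hL : ExpLift γ L)
    (hL' : ExpLift γ L') : L 1 - L 0 = L' 1 - L' 0 := by
  have h : ∀ t, ∃ m : ℤ, (L t - L' t) = m * (2 * Real.pi * Complex.I) := by
    intro t
    have he : Complex.exp (L t - L' t) = 1 := by
      rw [Complex.exp_sub, hL.2 t, hL'.2 t, div_self]
      rw [← hL'.2 t]; exact Complex.exp_ne_zero _
    rwa [Complex.exp_eq_one_iff] at he
  have h0 := intmul_const (f := fun t => L t - L' t) (hL.1.sub hL'.1) h
  linear_combination h0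

section Exists

lemma prod_div_telescope {g : ℕ → ℂ} (hg : ∀ j, g j ≠ 0) (n : ℕ) :
    ∏ j ∈ Finset.range n, (g (j + 1) / g j) = g n / g 0 := by
  induction n with
  | zero => rw [Finset.range_zero, Finset.prod_empty, div_self (hg 0)]
  | succ n ih =>
    rw [Finset.prod_range_succ, ih]
    field_simp
    rw [mul_div_mul_left _ _ (hg n)]

lemma exists_expLift {γ : unitInterval → ℂ} (hγ : Continuous γ)
    (h0 : ∀ t, γ t ≠ 0) : ∃ L, ExpLift γ L := by
  -- minimum of the norm
  obtain ⟨t₀, -, ht₀⟩ := isCompact_univ.exists_isMinOn (Set.univ_nonempty)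
    ((hγ.norm).continuousOn (s := Set.univ))
  set ρ : ℝ := ‖γ t₀‖ with hρdef
  have hρ : 0 < ρ := norm_pos_iff.mpr (h0 t₀)
  have hρle : ∀ t, ρ ≤ ‖γ t‖ := fun t => ht₀ (Set.mem_univ t)
  -- uniform continuity
  obtain ⟨δ, hδ, hUC⟩ := Metric.uniformContinuous_iff.mp
    (CompactSpace.uniformContinuous_of_continuous hγ) ρ hρ
  obtain ⟨n, hn⟩ := exists_nat_gt (1 / δ)
  have hn0 : (0 : ℝ) < n := lt_trans (by positivity) hn
  have hnδ : 1 / (n : ℝ) < δ := by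
    rw [div_lt_iff₀ hn0]
    rw [div_lt_iff₀ hδ] at hn
    nlinarith
  -- the clamped points
  have hmc : ∀ (j : ℕ) (t : unitInterval), min (t : ℝ) (j / n) ∈ unitInterval := by
    intro j t
    constructor
    · exact le_min t.2.1 (by positivity)
    · exact le_trans (min_le_left _ _) t.2.2
  set mc : ℕ → unitInterval → unitInterval := fun j t => ⟨min (t : ℝ) (j / n), hmc j t⟩
    with hmcdef
  have hmccont : ∀ j, Continuous fun t => mc j t := fun j =>
    Continuous.subtype_mk (continuous_subtype_val.min continuous_const) _
  have hmcdist : ∀ (j : ℕ) (t : unitInterval), dist (mc (j + 1) t) (mc j t) ≤ 1 / n := by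
    intro j t
    rw [Subtype.dist_eq, Real.dist_eq]
    refine le_trans (abs_min_sub_min _ _ _) ?_
    rw [show ((j + 1 : ℕ) : ℝ) / n - (j : ℕ) / n = 1 / n by push_cast; field_simp; ring]
    rw [abs_of_nonneg (by positivity)]
  have key : ∀ (j : ℕ) (t : unitInterval),
      ‖γ (mc (j + 1) t) / γ (mc j t) - 1‖ < 1 := by
    intro j t
    have hne := h0 (mc j t)
    have : γ (mc (j + 1) t) / γ (mc j t) - 1 =
        (γ (mc (j + 1) t) - γ (mc j t)) / γ (mc j t) := by field_simp
    rw [this, norm_div, div_lt_one (norm_pos_iff.mpr hne)]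
    have hd : dist (mc (j + 1) t) (mc j t) < δ := lt_of_le_of_lt (hmcdist j t) hnδ
    calc ‖γ (mc (j + 1) t) - γ (mc j t)‖ = dist (γ (mc (j + 1) t)) (γ (mc j t)) :=
          (dist_eq_norm _ _).symm
      _ < ρ := hUC hd
      _ ≤ ‖γ (mc j t)‖ := hρle _
  have slit : ∀ (j : ℕ) (t : unitInterval),
      γ (mc (j + 1) t) / γ (mc j t) ∈ Complex.slitPlane := by
    intro j t
    left
    have h1 := key j t
    set z := γ (mc (j + 1) t) / γ (mc j t)
    have : |(z - 1).re| ≤ ‖z - 1‖ := Complex.abs_re_le_norm _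
    have hre : (z - 1).re = z.re - 1 := by simp
    have : |z.re - 1| < 1 := by rw [← hre]; exact lt_of_le_of_lt this h1
    have := abs_lt.mp this
    linarith [this.1]
  refine ⟨fun t => Complex.log (γ 0) +
    ∑ j ∈ Finset.range n, Complex.log (γ (mc (j + 1) t) / γ (mc j t)), ?_, ?_⟩
  · refine continuous_const.add (continuous_finset_sum _ fun j _ => ?_)
    exact Continuous.clog ((hγ.comp (hmccont (j + 1))).div (hγ.comp (hmccont j))
      (fun t => h0 _)) (fun t => slit j t)
  · intro t
    rw [Complex.exp_add, Complex.exp_sum]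
    have hprod : ∀ j ∈ Finset.range n,
        Complex.exp (Complex.log (γ (mc (j + 1) t) / γ (mc j t))) =
          γ (mc (j + 1) t) / γ (mc j t) := by
      intro j _
      exact Complex.exp_log (div_ne_zero (h0 _) (h0 _))
    rw [Finset.prod_congr rfl hprod, Complex.exp_log (h0 0),
      prod_div_telescope (fun j => h0 (mc j t)) n]
    have hmcn : mc n t = t := by
      apply Subtype.ext
      show min (t : ℝ) ((n : ℝ) / n) = t
      rw [div_self (ne_of_gt hn0)]
      exact min_eq_left t.2.2
    have hmc0 : mc 0 t = 0 := by
      apply Subtype.ext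
      show min (t : ℝ) ((0 : ℕ) / n) = 0
      simp [min_eq_right t.2.1]
    rw [hmcn, hmc0]
    rw [mul_div_assoc']
    rw [mul_comm, mul_div_assoc, div_self (h0 0), mul_one]

end Exists

section Wind

theorem two_atLeastTwo : Nat.AtLeastTwo 2 := inferInstance

attribute [local instance] two_atLeastTwo

open scoped Classical in
/-- Winding number (as a complex number, `(L 1 - L 0)/(2πi)` for a continuous log `L`). -/
def wind (γ : unitInterval → ℂ) : ℂ :=
  if h : ∃ L, ExpLift γ L then (h.choose 1 - h.choose 0) / (2 * Real.pi * Complex.I)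
  else 0

lemma two_pi_I_ne_zero : (2 * Real.pi * Complex.I : ℂ) ≠ 0 := by
  simp [Real.pi_ne_zero, Complex.I_ne_zero, Complex.ofReal_ne_zero]

lemma wind_eq {γ L : unitInterval → ℂ} (h : ExpLift γ L) :
    wind γ = (L 1 - L 0) / (2 * Real.pi * Complex.I) := by
  have hex : ∃ L, ExpLift γ L := ⟨L, h⟩
  rw [wind, dif_pos hex, expLift_diff_unique hex.choose_spec h]

lemma wind_const (c : ℂ) (hc : c ≠ 0) : wind (fun _ => c) = 0 := by
  have h : ExpLift (fun _ => c) (fun _ => Complex.log c) :=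
    ⟨continuous_const, fun _ => Complex.exp_log hc⟩
  rw [wind_eq h, sub_self, zero_div]

lemma wind_mul {γ₁ γ₂ : unitInterval → ℂ} (h₁ : Continuous γ₁) (h₂ : Continuous γ₂)
    (h01 : ∀ t, γ₁ t ≠ 0) (h02 : ∀ t, γ₂ t ≠ 0) :
    wind (fun t => γ₁ t * γ₂ t) = wind γ₁ + wind γ₂ := by
  obtain ⟨L₁, hL₁⟩ := exists_expLift h₁ h01
  obtain ⟨L₂, hL₂⟩ := exists_expLift h₂ h02
  have h : ExpLift (fun t => γ₁ t * γ₂ t) (fun t => L₁ t + L₂ t) :=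
    ⟨hL₁.1.add hL₂.1, fun t => by rw [Complex.exp_add, hL₁.2 t, hL₂.2 t]⟩
  rw [wind_eq h, wind_eq hL₁, wind_eq hL₂]
  field_simp
  ring

lemma wind_zero_of_slit {γ : unitInterval → ℂ} (hγ : Continuous γ)
    (hs : ∀ t, γ t ∈ Complex.slitPlane) (hloop : γ 0 = γ 1) : wind γ = 0 := by
  have h : ExpLift γ (fun t => Complex.log (γ t)) :=
    ⟨hγ.clog hs, fun t => Complex.exp_log (Complex.slitPlane_ne_zero (hs t))⟩
  rw [wind_eq h]
  simp [hloop]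

/-- "Dog on a leash": loops uniformly closer than the norm have the same winding. -/
lemma wind_close {γ₁ γ₂ : unitInterval → ℂ} (h₁ : Continuous γ₁) (h₂ : Continuous γ₂)
    (h02 : ∀ t, γ₂ t ≠ 0) (hclose : ∀ t, ‖γ₁ t - γ₂ t‖ < ‖γ₂ t‖)
    (hl1 : γ₁ 0 = γ₁ 1) (hl2 : γ₂ 0 = γ₂ 1) : wind γ₁ = wind γ₂ := by
  set r : unitInterval → ℂ := fun t => γ₁ t / γ₂ t with hr
  have hrunit : ∀ t, ‖r t - 1‖ < 1 := by
    intro t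
    have : r t - 1 = (γ₁ t - γ₂ t) / γ₂ t := by
      show γ₁ t / γ₂ t - 1 = (γ₁ t - γ₂ t) / γ₂ t
      rw [eq_div_iff (h02 t), sub_mul, one_mul, div_mul_cancel₀ _ (h02 t)]
    rw [this, norm_div, div_lt_one (norm_pos_iff.mpr (h02 t))]
    exact hclose t
  have hrslit : ∀ t, r t ∈ Complex.slitPlane := by
    intro t
    left
    have h1 := hrunit t
    have h2 : |(r t - 1).re| ≤ ‖r t - 1‖ := Complex.abs_re_le_norm _
    have hre : (r t - 1).re = (r t).re - 1 := by simp
    have h3 : |(r t).re - 1| < 1 := by rw [← hre]; exact lt_of_le_of_lt h2 h1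
    linarith [(abs_lt.mp h3).1]
  have hrcont : Continuous r := h₁.div h₂ h02
  have hr0 : ∀ t, r t ≠ 0 := fun t => Complex.slitPlane_ne_zero (hrslit t)
  have hwr : wind r = 0 := wind_zero_of_slit hrcont hrslit (by simp only [hr, hl1, hl2])
  have hfact : γ₁ = fun t => γ₂ t * r t := by
    funext t
    show γ₁ t = γ₂ t * (γ₁ t / γ₂ t)
    rw [mul_comm]
    exact (div_mul_cancel₀ _ (h02 t)).symm
  calc wind γ₁ = wind (fun t => γ₂ t * r t) := by rw [← hfact]
    _ = wind γ₂ + wind r := wind_mul h₂ hrcont h02 hr0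
    _ = wind γ₂ := by rw [hwr, add_zero]

end Wind

lemma wind_exp_mul (c : ℂ) (hc : c ≠ 0) :
    wind (fun t : unitInterval =>
      Complex.exp (2 * (Real.pi : ℂ) * Complex.I * ((t : ℝ) : ℂ)) * c) = 1 := by
  have h : ExpLift _ (fun t : unitInterval =>
      2 * (Real.pi : ℂ) * Complex.I * ((t : ℝ) : ℂ) + Complex.log c) :=
    ⟨(continuous_const.mul (Complex.continuous_ofReal.comp
        continuous_subtype_val)).add continuous_const,
     fun t => by rw [Complex.exp_add, Complex.exp_log hc]⟩
  rw [wind_eq h]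
  rw [show (((1 : unitInterval) : ℝ) : ℂ) = 1 from rfl,
    show (((0 : unitInterval) : ℝ) : ℂ) = 0 from rfl]
  rw [mul_one, mul_zero, zero_add, add_sub_cancel_right]
  exact div_self two_pi_I_ne_zero


section Paths

variable {X : Type} [TopologicalSpace X]

attribute [local instance] Path.Homotopic.setoid

lemma wind_trans {x y z : X} (α : Path x y) (β : Path y z) (f : X → ℂ)
    (hf : Continuous f) (h0 : ∀ x, f x ≠ 0) :
    wind (fun t => f ((α.trans β) t)) =
      wind (fun t => f (α t)) + wind (fun t => f (β t)) := by
  obtain ⟨L₁, hL₁⟩ := exists_expLift (γ := fun t => f (α t))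
    (hf.comp α.continuous) (fun t => h0 _)
  obtain ⟨L₂, hL₂⟩ := exists_expLift (γ := fun t => f (β t))
    (hf.comp β.continuous) (fun t => h0 _)
  set c : ℂ := L₁ 1 - L₂ 0 with hc
  have hexpc : Complex.exp c = 1 := by
    rw [hc, Complex.exp_sub, hL₁.2 1, hL₂.2 0]
    show f (α 1) / f (β 0) = 1
    rw [α.target, β.source, div_self (h0 y)]
  set P₁ : Path (L₁ 0) (L₁ 1) := ⟨⟨L₁, hL₁.1⟩, rfl, rfl⟩ with hP₁
  set P₂ : Path (L₁ 1) (L₂ 1 + c) :=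
    ⟨⟨fun t => L₂ t + c, hL₂.1.add continuous_const⟩, by simp [hc], rfl⟩ with hP₂
  set P : Path (L₁ 0) (L₂ 1 + c) := P₁.trans P₂ with hP
  have hlift : ExpLift (fun t => f ((α.trans β) t)) (fun t => P t) := by
    refine ⟨P.continuous, fun t => ?_⟩
    show Complex.exp ((P₁.trans P₂) t) = f ((α.trans β) t)
    rw [Path.trans_apply, Path.trans_apply]
    split_ifs with h
    · exact hL₁.2 _
    · show Complex.exp (L₂ _ + c) = f (β _)
      rw [Complex.exp_add, hexpc, mul_one, hL₂.2]
  rw [wind_eq hlift]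
  rw [wind_eq hL₁, wind_eq hL₂]
  have h1 : P 1 = L₂ 1 + c := P.target
  have h2 : P 0 = L₁ 0 := P.source
  rw [h1, h2, hc]
  field_simp
  ring

lemma wind_homotopic {x₀ : X} {α β : Path x₀ x₀} (h : α.Homotopic β)
    (f : X → ℂ) (hf : Continuous f) (h0 : ∀ x, f x ≠ 0) :
    wind (fun t => f (α t)) = wind (fun t => f (β t)) := by
  obtain ⟨H⟩ := h
  set Γ : unitInterval → unitInterval → ℂ := fun s t => f (H (s, t)) with hΓ
  have hΓcont : ∀ s, Continuous (Γ s) :=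
    fun s => (hf.comp H.continuous).comp (Continuous.prodMk_right s)
  have hΓloop : ∀ s, Γ s 0 = Γ s 1 := by
    intro s
    show f (H (s, 0)) = f (H (s, 1))
    rw [H.source, H.target]
  -- minimum of the norm on the compact square
  obtain ⟨p₀, -, hp₀⟩ := isCompact_univ.exists_isMinOn (Set.univ_nonempty)
    (((hf.comp H.continuous).norm).continuousOn (s := Set.univ))
  set ρ : ℝ := ‖f (H p₀)‖ with hρdef
  have hρ : 0 < ρ := norm_pos_iff.mpr (h0 _)
  have hρle : ∀ p, ρ ≤ ‖f (H p)‖ := fun p => hp₀ (Set.mem_univ p)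
  obtain ⟨δ, hδ, hUC⟩ := Metric.uniformContinuous_iff.mp
    (CompactSpace.uniformContinuous_of_continuous (hf.comp H.continuous)) ρ hρ
  -- nearby slices have equal winding
  have step : ∀ s s' : unitInterval, dist s s' < δ → wind (Γ s) = wind (Γ s') := by
    intro s s' hss
    refine wind_close (hΓcont s) (hΓcont s') (fun t => h0 _) ?_ (hΓloop s) (hΓloop s')
    intro t
    have hd : dist ((s, t) : unitInterval × unitInterval) (s', t) < δ := by
      rw [Prod.dist_eq]
      simp only [dist_self]
      exact max_lt hss hδ
    calc ‖Γ s t - Γ s' t‖ = dist (f (H (s, t))) (f (H (s', t))) := (dist_eq_norm _ _).symm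
      _ < ρ := hUC hd
      _ ≤ ‖Γ s' t‖ := hρle _
  -- chain from 0 to 1
  obtain ⟨n, hn⟩ := exists_nat_gt (1 / δ)
  have hn0 : (0 : ℝ) < n := lt_trans (by positivity) hn
  have hnδ : 1 / (n : ℝ) < δ := by
    rw [div_lt_iff₀ hn0]
    rw [div_lt_iff₀ hδ] at hn
    nlinarith
  have hsc : ∀ j : ℕ, min (1 : ℝ) ((j : ℝ) / n) ∈ unitInterval :=
    fun j => ⟨le_min zero_le_one (by positivity), min_le_left _ _⟩
  set sc : ℕ → unitInterval := fun j => ⟨min (1 : ℝ) ((j : ℝ) / n), hsc j⟩ with hscdef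
  have hchain : ∀ j : ℕ, wind (Γ (sc j)) = wind (Γ (sc 0)) := by
    intro j
    induction j with
    | zero => rfl
    | succ j ih =>
      rw [← ih]
      refine (step _ _ ?_).symm
      rw [Subtype.dist_eq, Real.dist_eq, abs_sub_comm]
      refine lt_of_le_of_lt (le_trans (abs_min_sub_min _ _ _) ?_) hnδ
      rw [show ((j + 1 : ℕ) : ℝ) / n - (j : ℕ) / n = 1 / n by push_cast; field_simp; ring]
      rw [abs_of_nonneg (by positivity)]
  have hsc0 : sc 0 = 0 := by
    apply Subtype.ext
    show min (1 : ℝ) ((0 : ℕ) / n) = 0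
    simp
  have hscn : sc n = 1 := by
    apply Subtype.ext
    show min (1 : ℝ) ((n : ℝ) / n) = 1
    rw [div_self (ne_of_gt hn0)]
    simp
  have h0eq : ∀ t, Γ 0 t = f (α t) := by
    intro t
    show f (H (0, t)) = f (α t)
    rw [H.apply_zero]
    rfl
  have h1eq : ∀ t, Γ 1 t = f (β t) := by
    intro t
    show f (H (1, t)) = f (β t)
    rw [H.apply_one]
    rfl
  have := hchain n
  rw [hscn, hsc0] at this
  calc wind (fun t => f (α t)) = wind (Γ 0) := by rw [funext h0eq]
    _ = wind (Γ 1) := by rw [this]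
    _ = wind (fun t => f (β t)) := by rw [funext h1eq]

/-- Winding number on homotopy classes of loops. -/
def windQ {x₀ : X} (f : X → ℂ) (hf : Continuous f) (h0 : ∀ x, f x ≠ 0) :
    Path.Homotopic.Quotient x₀ x₀ → ℂ :=
  Quotient.lift (fun α : Path x₀ x₀ => wind (fun t => f (α t)))
    (fun _ _ h => wind_homotopic h f hf h0)

lemma windQ_mk {x₀ : X} (f : X → ℂ) (hf : Continuous f) (h0 : ∀ x, f x ≠ 0)
    (α : Path x₀ x₀) : windQ f hf h0 ⟦α⟧ = wind (fun t => f (α t)) := rfl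

lemma windQ_comp {x₀ : X} (f : X → ℂ) (hf : Continuous f) (h0 : ∀ x, f x ≠ 0)
    (P Q : Path.Homotopic.Quotient x₀ x₀) :
    windQ f hf h0 (P.trans Q) = windQ f hf h0 P + windQ f hf h0 Q := by
  induction P using Quotient.inductionOn with
  | h α =>
    induction Q using Quotient.inductionOn with
    | h β =>
      change windQ f hf h0 ⟦α.trans β⟧ = _
      rw [windQ_mk, windQ_mk, windQ_mk]
      exact wind_trans α β f hf h0

end Paths



attribute [local instance] Path.Homotopic.setoid

variable {X : Type} [TopologicalSpace X]

lemma sigma_mem (s u : unitInterval) (a b : ℝ) (ha : a ∈ unitInterval)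
    (hb : b ∈ unitInterval) : (1 - (s : ℝ)) * a + (s : ℝ) * b ∈ unitInterval := by
  constructor
  · have h1 : 0 ≤ 1 - (s : ℝ) := by linarith [s.2.2]
    nlinarith [s.2.1, ha.1, hb.1]
  · nlinarith [s.2.1, s.2.2, ha.1, ha.2, hb.1, hb.2]

lemma min_two_mem (u : unitInterval) : min (2 * (u : ℝ)) 1 ∈ unitInterval :=
  ⟨le_min (by nlinarith [u.2.1]) zero_le_one, min_le_right _ _⟩

lemma max_two_mem (u : unitInterval) : max (2 * (u : ℝ) - 1) 0 ∈ unitInterval :=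
  ⟨le_max_right _ _, max_le (by nlinarith [u.2.2]) zero_le_one⟩

/-- If a loop is the orbit of the basepoint under a "circle-like action" (a continuous
family of self-maps which is the identity at times 0 and 1), then it commutes with
every loop up to homotopy. -/
lemma trans_homotopic_of_action {x₀ : X} (A : C(ℝ × X, X))
    (h0 : ∀ x, A (0, x) = x) (h1 : ∀ x, A (1, x) = x)
    (ℓ : Path x₀ x₀) (hℓ : ∀ t : unitInterval, ℓ t = A ((t : ℝ), x₀))
    (α : Path x₀ x₀) : (ℓ.trans α).Homotopic (α.trans ℓ) := by
  classical
  set τ : unitInterval × unitInterval → ℝ := fun q =>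
    (1 - (q.1 : ℝ)) * min (2 * (q.2 : ℝ)) 1 + (q.1 : ℝ) * max (2 * (q.2 : ℝ) - 1) 0 with hτ
  set sg : unitInterval × unitInterval → unitInterval := fun q =>
    ⟨(1 - (q.1 : ℝ)) * max (2 * (q.2 : ℝ) - 1) 0 + (q.1 : ℝ) * min (2 * (q.2 : ℝ)) 1,
      sigma_mem q.1 q.2 _ _ (max_two_mem q.2) (min_two_mem q.2)⟩ with hsg
  have hcoe1 : Continuous fun q : unitInterval × unitInterval => (q.1 : ℝ) :=
    continuous_subtype_val.comp continuous_fst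
  have hcoe2 : Continuous fun q : unitInterval × unitInterval => (q.2 : ℝ) :=
    continuous_subtype_val.comp continuous_snd
  have hmincont : Continuous fun q : unitInterval × unitInterval =>
      min (2 * (q.2 : ℝ)) 1 := ((continuous_const.mul hcoe2).min continuous_const)
  have hmaxcont : Continuous fun q : unitInterval × unitInterval =>
      max (2 * (q.2 : ℝ) - 1) 0 := (((continuous_const.mul hcoe2).sub
        continuous_const).max continuous_const)
  have hτcont : Continuous τ :=
    ((continuous_const.sub hcoe1).mul hmincont).add (hcoe1.mul hmaxcont)
  have hsgcont : Continuous sg :=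
    Continuous.subtype_mk (((continuous_const.sub hcoe1).mul hmaxcont).add
      (hcoe1.mul hmincont)) _
  set F : unitInterval × unitInterval → X := fun q => A (τ q, α (sg q)) with hF
  have hFcont : Continuous F :=
    A.continuous.comp (hτcont.prodMk (α.continuous.comp hsgcont))
  refine ⟨⟨⟨⟨F, hFcont⟩, ?_, ?_⟩, ?_⟩⟩
  · -- map_zero_left : F (0, u) = (ℓ.trans α) u
    intro u
    show F (0, u) = (ℓ.trans α) u
    rw [Path.trans_apply]
    split_ifs with h
    · -- u ≤ 1/2
      have hτval : τ (0, u) = 2 * (u : ℝ) := by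
        show (1 - ((0:unitInterval) : ℝ)) * min (2 * (u : ℝ)) 1 +
          ((0:unitInterval) : ℝ) * max (2 * (u : ℝ) - 1) 0 = 2 * (u : ℝ)
        rw [show ((0:unitInterval) : ℝ) = 0 from rfl, min_eq_left (by linarith)]
        ring
      have hsgval : sg (0, u) = 0 := by
        apply Subtype.ext
        show (1 - ((0:unitInterval) : ℝ)) * max (2 * (u : ℝ) - 1) 0 +
          ((0:unitInterval) : ℝ) * min (2 * (u : ℝ)) 1 = 0
        rw [show ((0:unitInterval) : ℝ) = 0 from rfl, max_eq_right (by linarith)]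
        ring
      show A (τ (0, u), α (sg (0, u))) = ℓ _
      rw [hτval, hsgval, hℓ ⟨2 * (u : ℝ), _⟩, α.source]
    · push_neg at h
      have hτval : τ (0, u) = 1 := by
        show (1 - ((0:unitInterval) : ℝ)) * min (2 * (u : ℝ)) 1 +
          ((0:unitInterval) : ℝ) * max (2 * (u : ℝ) - 1) 0 = 1
        rw [show ((0:unitInterval) : ℝ) = 0 from rfl, min_eq_right (by linarith)]
        ring
      have hsgval : (sg (0, u) : ℝ) = 2 * (u : ℝ) - 1 := by
        show (1 - ((0:unitInterval) : ℝ)) * max (2 * (u : ℝ) - 1) 0 +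
          ((0:unitInterval) : ℝ) * min (2 * (u : ℝ)) 1 = 2 * (u : ℝ) - 1
        rw [show ((0:unitInterval) : ℝ) = 0 from rfl, max_eq_left (by linarith)]
        ring
      show A (τ (0, u), α (sg (0, u))) = α _
      rw [hτval, h1]
      congr 1
      exact Subtype.ext hsgval
  · -- map_one_left : F (1, u) = (α.trans ℓ) u
    intro u
    show F (1, u) = (α.trans ℓ) u
    rw [Path.trans_apply]
    split_ifs with h
    · have hτval : τ (1, u) = 0 := by
        show (1 - ((1:unitInterval) : ℝ)) * min (2 * (u : ℝ)) 1 +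
          ((1:unitInterval) : ℝ) * max (2 * (u : ℝ) - 1) 0 = 0
        rw [show ((1:unitInterval) : ℝ) = 1 from rfl, max_eq_right (by linarith)]
        ring
      have hsgval : (sg (1, u) : ℝ) = 2 * (u : ℝ) := by
        show (1 - ((1:unitInterval) : ℝ)) * max (2 * (u : ℝ) - 1) 0 +
          ((1:unitInterval) : ℝ) * min (2 * (u : ℝ)) 1 = 2 * (u : ℝ)
        rw [show ((1:unitInterval) : ℝ) = 1 from rfl, min_eq_left (by linarith)]
        ring
      show A (τ (1, u), α (sg (1, u))) = α _
      rw [hτval, h0]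
      congr 1
      exact Subtype.ext hsgval
    · push_neg at h
      have hτval : τ (1, u) = 2 * (u : ℝ) - 1 := by
        show (1 - ((1:unitInterval) : ℝ)) * min (2 * (u : ℝ)) 1 +
          ((1:unitInterval) : ℝ) * max (2 * (u : ℝ) - 1) 0 = 2 * (u : ℝ) - 1
        rw [show ((1:unitInterval) : ℝ) = 1 from rfl, max_eq_left (by linarith)]
        ring
      have hsgval : sg (1, u) = 1 := by
        apply Subtype.ext
        show (1 - ((1:unitInterval) : ℝ)) * max (2 * (u : ℝ) - 1) 0 +
          ((1:unitInterval) : ℝ) * min (2 * (u : ℝ)) 1 = 1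
        rw [show ((1:unitInterval) : ℝ) = 1 from rfl, min_eq_right (by linarith)]
        ring
      show A (τ (1, u), α (sg (1, u))) = ℓ _
      rw [hτval, hsgval, hℓ ⟨2 * (u : ℝ) - 1, _⟩, α.target]
  · -- prop' : fixed at endpoints
    intro s u hu
    rcases hu with hu | hu
    · subst hu
      have hτval : τ (s, 0) = 0 := by
        show (1 - (s : ℝ)) * min (2 * ((0:unitInterval) : ℝ)) 1 +
          (s : ℝ) * max (2 * ((0:unitInterval) : ℝ) - 1) 0 = 0
        rw [show ((0:unitInterval) : ℝ) = 0 from rfl, min_eq_left (by norm_num),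
          max_eq_right (by norm_num)]
        ring
      have hsgval : sg (s, 0) = 0 := by
        apply Subtype.ext
        show (1 - (s : ℝ)) * max (2 * ((0:unitInterval) : ℝ) - 1) 0 +
          (s : ℝ) * min (2 * ((0:unitInterval) : ℝ)) 1 = 0
        rw [show ((0:unitInterval) : ℝ) = 0 from rfl, min_eq_left (by norm_num),
          max_eq_right (by norm_num)]
        ring
      show A (τ (s, 0), α (sg (s, 0))) = (ℓ.trans α) 0
      rw [hτval, hsgval, h0, α.source, (ℓ.trans α).source]
    · simp only [Set.mem_singleton_iff] at hu
      subst hu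
      have hτval : τ (s, 1) = 1 := by
        show (1 - (s : ℝ)) * min (2 * ((1:unitInterval) : ℝ)) 1 +
          (s : ℝ) * max (2 * ((1:unitInterval) : ℝ) - 1) 0 = 1
        rw [show ((1:unitInterval) : ℝ) = 1 from rfl, min_eq_right (by norm_num),
          max_eq_left (by norm_num)]
        ring
      have hsgval : sg (s, 1) = 1 := by
        apply Subtype.ext
        show (1 - (s : ℝ)) * max (2 * ((1:unitInterval) : ℝ) - 1) 0 +
          (s : ℝ) * min (2 * ((1:unitInterval) : ℝ)) 1 = 1
        rw [show ((1:unitInterval) : ℝ) = 1 from rfl, min_eq_right (by norm_num),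
          max_eq_left (by norm_num)]
        ring
      show A (τ (s, 1), α (sg (s, 1))) = (ℓ.trans α) 1
      rw [hτval, hsgval, h1, α.target, (ℓ.trans α).target]


end MyWind

namespace CxArr

/-- The functor between fundamental groupoids induced by a continuous map, with
`Type`-valued spaces. -/
def toTopHom {X Y : Type} [TopologicalSpace X] [TopologicalSpace Y] (f : C(X, Y)) :
    TopCat.of X ⟶ TopCat.of Y := TopCat.ofHom f

def indFunctor {X Y : Type} [TopologicalSpace X] [TopologicalSpace Y]
    (f : C(X, Y)) : FundamentalGroupoid X ⥤ FundamentalGroupoid Y :=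
  πₘ (toTopHom f)

/-- The homomorphism induced by a continuous map on fundamental groups. -/
def indHom {X Y : Type} [TopologicalSpace X] [TopologicalSpace Y]
    (f : C(X, Y)) (x : X) :
    FundamentalGroup X x →* FundamentalGroup Y (f x) :=
  CategoryTheory.Functor.mapEnd ⟨x⟩ (indFunctor f)

attribute [local instance] Path.Homotopic.setoid

/-- The element of the fundamental group determined by a loop. -/
def loopElt {X : Type} [TopologicalSpace X] {x : X} (p : Path x x) :
    FundamentalGroup X x :=
  FundamentalGroup.fromPath (X := TopCat.of X) ⟦p⟧

/-- Change of basepoint along a path. -/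
def transport {X : Type} [TopologicalSpace X] {a b : X} (γ : Path a b) :
    FundamentalGroup X a ≃* FundamentalGroup X b :=
  FundamentalGroup.fundamentalGroupMulEquivOfPath γ

variable {V : Type} [NormedAddCommGroup V] [NormedSpace ℂ V] [FiniteDimensional ℂ V]

/-- The complement `M(𝒜)` of a (central) arrangement of subspaces. -/
def Mset (𝒜 : Finset (Submodule ℂ V)) : Set V := {x | ∀ H ∈ 𝒜, x ∉ H}

/-- `E ∈ Q(𝒜)`: `E` is a (proper) intersection of hyperplanes of `𝒜`. -/
def QMem (𝒜 : Finset (Submodule ℂ V)) (E : Submodule ℂ V) : Prop :=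
  ∃ S : Finset (Submodule ℂ V), S ⊆ 𝒜 ∧ S.Nonempty ∧ E = S.inf id

/-- The normal arrangement `𝒜_{V/E}` of the subspace `E` is reducible, i.e. splits as a
nontrivial direct sum.  (Expressed in `V`: there are `W₁, W₂` lying over `E` with
`W₁ ∩ W₂ = E`, `W₁ + W₂ = V`, both strictly bigger than `E`, so that every hyperplane of `𝒜`
containing `E` contains `W₁` or `W₂`.) -/
def NormalReducible (𝒜 : Finset (Submodule ℂ V)) (E : Submodule ℂ V) : Prop :=
  ∃ W₁ W₂ : Submodule ℂ V, E ≤ W₁ ∧ E ≤ W₂ ∧ W₁ ⊓ W₂ = E ∧ W₁ ⊔ W₂ = ⊤ ∧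
    W₁ ≠ E ∧ W₂ ≠ E ∧ ∀ H ∈ 𝒜, E ≤ H → (W₁ ≤ H ∨ W₂ ≤ H)

/-- `E` is an irreducible subspace of the arrangement `𝒜`. -/
def IrredSub (𝒜 : Finset (Submodule ℂ V)) (E : Submodule ℂ V) : Prop :=
  QMem 𝒜 E ∧ ¬ NormalReducible 𝒜 E

/-- A decomposition `𝒜 ≅ 𝒜₁ ⊕ ⋯ ⊕ 𝒜_k` of an arrangement into `k` irreducible factors,
along the internal direct sum decomposition `V = W 1 ⊕ ⋯ ⊕ W k`. -/
def IrredDecomp (𝒜 : Finset (Submodule ℂ V)) (k : ℕ) (W : Fin k → Submodule ℂ V) : Prop :=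
  DirectSum.IsInternal W ∧ (∀ i, W i ≠ ⊥) ∧
  (∀ H ∈ 𝒜, ∃ i, ∀ j, j ≠ i → W j ≤ H) ∧
  (∀ i, ¬ ∃ U₁ U₂ : Submodule ℂ V, U₁ ≤ W i ∧ U₂ ≤ W i ∧ U₁ ⊔ U₂ = W i ∧ U₁ ⊓ U₂ = ⊥ ∧
    U₁ ≠ ⊥ ∧ U₂ ≠ ⊥ ∧
    ∀ H ∈ 𝒜, ¬ W i ≤ H → (∀ j, j ≠ i → W j ≤ H) → (U₁ ≤ H ∨ U₂ ≤ H))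

/-- The complement of the normal arrangement `𝒜_{V/E}`, realized inside a linear
complement `W` of `E` in `V`. -/
def MW (𝒜 : Finset (Submodule ℂ V)) (E W : Submodule ℂ V) : Set ↥W :=
  {w : ↥W | ∀ H ∈ 𝒜, E ≤ H → (w : V) ∉ H}

/-- `P` is the parabolic subgroup of `π₁(M(𝒜), x₀)` of type `E` determined by some choice of
normal-disk embedding `i : M(𝒜_{V/E}) → M(𝒜)` and connecting path `γ`, and `Z` is the
corresponding central `ℤ`-subgroup (generated by the image of the Hopf fiber). -/
def IsParabolicPair (𝒜 : Finset (Submodule ℂ V)) (E : Submodule ℂ V) (x₀ : ↥(Mset 𝒜))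
    (P Z : Subgroup (FundamentalGroup ↥(Mset 𝒜) x₀)) : Prop :=
  ∃ (W : Submodule ℂ V), IsCompl E W ∧
  ∃ (p : V), p ∈ E ∧ (∀ H ∈ 𝒜, ¬ E ≤ H → p ∉ H) ∧
  ∃ (ε : ℝ), 0 < ε ∧
  ∃ (i : C(↥(MW 𝒜 E W), ↥(Mset 𝒜))),
    (∀ w : ↥(MW 𝒜 E W), ((i w : V)) = p + (ε / (1 + ‖((w : ↥W) : V)‖)) • ((w : ↥W) : V)) ∧
  ∃ (w₀ : ↥(MW 𝒜 E W)) (γ : Path x₀ (i w₀)) (hopf : Path w₀ w₀),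
    (∀ t : unitInterval,
      (((hopf t) : ↥W) : V) = Complex.exp (2 * Real.pi * Complex.I * ((t : ℝ) : ℂ)) •
        (((w₀ : ↥W) : V))) ∧
    P = Subgroup.map ((transport γ).symm.toMonoidHom.comp (indHom i w₀)) ⊤ ∧
    Z = Subgroup.zpowers ((transport γ).symm (indHom i w₀ (loopElt hopf)))

end CxArr

section MainProof

open CxArr MyWind

attribute [local instance] Path.Homotopic.setoid

/-- Elements of the fundamental group are equal if their underlying arrows agree. -/
lemma FG.ext {X : Type} [TopologicalSpace X] {x : X} {a b : FundamentalGroup X x}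
    (h : FundamentalGroup.toPath a = FundamentalGroup.toPath b) : a = b := h

end MainProof

attribute [local instance] Path.Homotopic.setoid

open CxArr in
/-- If `𝒜` is an essential central hyperplane arrangement in a
finite-dimensional complex vector space whose irreducible decomposition has `k` factors, then
the center of `G = π₁(M(𝒜))` contains a free abelian subgroup of rank `k`. -/
theorem statement_2 {V : Type} [NormedAddCommGroup V] [NormedSpace ℂ V]
    [FiniteDimensional ℂ V] (𝒜 : Finset (Submodule ℂ V))
    (hhyp : ∀ H ∈ 𝒜, IsCoatom H) (hess : 𝒜.inf id = ⊥)
    (k : ℕ) (W : Fin k → Submodule ℂ V) (hdec : IrredDecomp 𝒜 k W)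
    (x₀ : ↥(Mset 𝒜)) :
    ∃ S : Subgroup (FundamentalGroup ↥(Mset 𝒜) x₀),
      S ≤ Subgroup.center (FundamentalGroup ↥(Mset 𝒜) x₀) ∧
      Nonempty (↥S ≃* Multiplicative (Fin k → ℤ)) := by
    classical
  obtain ⟨hint, hWne, htype, -⟩ := hdec
  -- complements of the direct summands
  have hcompl : ∀ i : Fin k, IsCompl (W i) (⨆ j ∈ {j : Fin k | j ≠ i}, W j) := by
    intro i
    constructor
    · exact hint.submodule_iSupIndep.disjoint_biSup (by simp)
    · rw [codisjoint_iff, ← top_le_iff, ← hint.submodule_iSup_eq_top]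
      refine iSup_le fun j => ?_
      by_cases hj : j = i
      · subst hj; exact le_sup_left
      · exact le_trans (le_iSup₂ (f := fun j _ => W j) j hj) le_sup_right
  set Ci : Fin k → Submodule ℂ V := fun i => ⨆ j ∈ {j : Fin k | j ≠ i}, W j with hCidef
  have hCile : ∀ (i : Fin k) (H : Submodule ℂ V), (∀ j, j ≠ i → W j ≤ H) → Ci i ≤ H :=
    fun i H h => iSup₂_le fun j hj => h j hj
  -- projections onto the summands
  set p : Fin k → (V →ₗ[ℂ] V) := fun i =>
    (W i).subtype.comp ((W i).projectionOnto (Ci i) (hcompl i)) with hpdef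
  have hpmem : ∀ (i : Fin k) (x : V), p i x ∈ W i := fun i x =>
    ((W i).projectionOnto (Ci i) (hcompl i) x).2
  have hpdiff : ∀ (i : Fin k) (x : V), x - p i x ∈ Ci i := by
    intro i x
    have h := Submodule.projection_add_projection_eq_self (hcompl i) x
    have : x - p i x = ((Ci i).projectionOnto (W i) (hcompl i).symm x : V) := by
      exact sub_eq_iff_eq_add'.mpr h.symm
    rw [this]
    exact ((Ci i).projectionOnto (W i) (hcompl i).symm x).2
  have hpcont : ∀ i : Fin k, Continuous (p i) := fun i =>
    (p i).continuous_of_finiteDimensional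
  -- for each i, a hyperplane of "type i" and a defining functional for it
  have hHexists : ∀ i : Fin k, ∃ H ∈ 𝒜, (∀ j, j ≠ i → W j ≤ H) ∧ ¬ W i ≤ H := by
    intro i
    by_contra hno
    push_neg at hno
    have hWile : W i ≤ 𝒜.inf id := by
      refine Finset.le_inf fun H hH => ?_
      obtain ⟨m, hm⟩ := htype H hH
      by_cases hmi : m = i
      · exact hno H hH (hmi ▸ hm)
      · exact hm i fun h => hmi (h ▸ rfl)
    rw [hess] at hWile
    exact hWne i (le_bot_iff.mp hWile)
  have hfi : ∀ i : Fin k, ∃ (H : Submodule ℂ V) (f : V →ₗ[ℂ] ℂ), H ∈ 𝒜 ∧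
      (∀ j, j ≠ i → W j ≤ H) ∧ ¬ W i ≤ H ∧ (∀ x, f x = 0 ↔ x ∈ H) := by
    intro i
    obtain ⟨H, hH, hHj, hHiW⟩ := hHexists i
    have hco : IsCoatom H := hhyp H hH
    obtain ⟨v, hv⟩ : ∃ v, v ∉ H := by
      by_contra hc; push_neg at hc
      exact hco.1 (Submodule.eq_top_iff'.mpr hc)
    have hv0 : v ≠ 0 := fun h => hv (h ▸ H.zero_mem)
    have hdis : Disjoint H (Submodule.span ℂ {v}) := by
      rw [Submodule.disjoint_def]
      intro x hxH hxs
      obtain ⟨c, rfl⟩ := Submodule.mem_span_singleton.mp hxs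
      by_cases hc : c = 0
      · simp [hc]
      · exact absurd (by
          simpa [smul_smul, inv_mul_cancel₀ hc] using H.smul_mem c⁻¹ hxH) hv
    have hsup : H ⊔ Submodule.span ℂ {v} = ⊤ := by
      refine hco.2 _ (lt_of_le_of_ne le_sup_left fun hEq => hv ?_)
      rw [hEq]
      exact Submodule.mem_sup_right (Submodule.mem_span_singleton_self v)
    have hcompl2 : IsCompl H (Submodule.span ℂ {v}) := ⟨hdis, codisjoint_iff.mpr hsup⟩
    set e := LinearEquiv.toSpanNonzeroSingleton ℂ V v hv0 with he
    refine ⟨H, e.symm.toLinearMap.comp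
      ((Submodule.span ℂ {v}).projectionOnto H hcompl2.symm), hH, hHj, hHiW, ?_⟩
    intro x
    rw [LinearMap.comp_apply]
    constructor
    · intro h
      have h2 : (Submodule.span ℂ {v}).projectionOnto H hcompl2.symm x = 0 := by
        have := congrArg e h
        simpa using this
      exact (Submodule.projectionOnto_apply_eq_zero_iff hcompl2.symm).mp h2
    · intro h
      rw [Submodule.projectionOnto_apply_of_mem_right hcompl2.symm h]
      simp
  choose Hi fi hHmem hHj hHiW hfker using hfi
  have hficont : ∀ i : Fin k, Continuous (fi i) := fun i =>
    (fi i).continuous_of_finiteDimensional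
  -- the circle action on the i-th coordinate
  set eℝ : ℝ → ℂ := fun r => Complex.exp (2 * (Real.pi : ℂ) * Complex.I * (r : ℂ)) with heR
  have hecont : Continuous eℝ :=
    Complex.continuous_exp.comp (continuous_const.mul Complex.continuous_ofReal)
  have hene : ∀ r, eℝ r ≠ 0 := fun r => Complex.exp_ne_zero _
  have he0 : eℝ 0 = 1 := by simp [heR]
  have he1 : eℝ 1 = 1 := by
    show Complex.exp (2 * (Real.pi : ℂ) * Complex.I * ((1 : ℝ) : ℂ)) = 1
    rw [Complex.ofReal_one, mul_one, Complex.exp_two_pi_mul_I]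
  set act : Fin k → ℝ → V → V := fun i r x => x + (eℝ r - 1) • p i x with hactdef
  have hact : ∀ (i : Fin k) (r : ℝ) (x : V), x ∈ Mset 𝒜 → act i r x ∈ Mset 𝒜 := by
    intro i r x hx H hH hmem
    by_cases hpx : p i x ∈ H
    · refine hx H hH ?_
      have hxe : x = act i r x - (eℝ r - 1) • p i x := by
        show x = x + (eℝ r - 1) • p i x - (eℝ r - 1) • p i x
        rw [add_sub_cancel_right]
      rw [hxe]
      exact H.sub_mem hmem (H.smul_mem _ hpx)
    · obtain ⟨m, hm⟩ := htype H hH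
      have hmi : m = i := by
        by_contra hne
        exact hpx (hm i (fun h => hne (h ▸ rfl)) (hpmem i x))
      subst hmi
      have hxp : x - p m x ∈ H := hCile m H hm (hpdiff m x)
      have hsm : eℝ r • p m x ∈ H := by
        have hEq : eℝ r • p m x = act m r x - (x - p m x) := by
          show eℝ r • p m x = x + (eℝ r - 1) • p m x - (x - p m x)
          rw [sub_smul, one_smul]
          abel
        rw [hEq]
        exact H.sub_mem hmem hxp
      exact hpx (by
        simpa [smul_smul, inv_mul_cancel₀ (hene r)] using H.smul_mem (eℝ r)⁻¹ hsm)
  -- the loops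
  have hloopmem : ∀ (i : Fin k) (t : unitInterval), act i (t : ℝ) (x₀ : V) ∈ Mset 𝒜 :=
    fun i t => hact i _ _ x₀.2
  set ℓ : Fin k → Path x₀ x₀ := fun i =>
    { toFun := fun t => ⟨act i (t : ℝ) (x₀ : V), hloopmem i t⟩
      continuous_toFun := by
        refine Continuous.subtype_mk ?_ _
        show Continuous fun t : unitInterval => (x₀ : V) + (eℝ (t : ℝ) - 1) • p i (x₀ : V)
        exact continuous_const.add
          (((hecont.comp continuous_subtype_val).sub continuous_const).smul continuous_const)
      source' := by
        apply Subtype.ext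
        show act i ((0 : unitInterval) : ℝ) (x₀ : V) = (x₀ : V)
        show (x₀ : V) + (eℝ ((0 : unitInterval) : ℝ) - 1) • p i (x₀ : V) = (x₀ : V)
        rw [show ((0 : unitInterval) : ℝ) = 0 from rfl, he0]
        simp
      target' := by
        apply Subtype.ext
        show act i ((1 : unitInterval) : ℝ) (x₀ : V) = (x₀ : V)
        show (x₀ : V) + (eℝ ((1 : unitInterval) : ℝ) - 1) • p i (x₀ : V) = (x₀ : V)
        rw [show ((1 : unitInterval) : ℝ) = 1 from rfl, he1]
        simp } with hldef
  set li : Fin k → FundamentalGroup ↥(Mset 𝒜) x₀ := fun i => loopElt (ℓ i) with hlidef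
  -- multiplication of loop classes
  have hmul : ∀ a b : Path x₀ x₀, loopElt b * loopElt a = loopElt (a.trans b) := by
    intro a b
    apply FG.ext
    show Path.Homotopic.Quotient.trans ⟦a⟧ ⟦b⟧ = ⟦a.trans b⟧
    rfl
  -- centrality of the loops
  have hcentral : ∀ i, li i ∈ Subgroup.center (FundamentalGroup ↥(Mset 𝒜) x₀) := by
    intro i
    rw [Subgroup.mem_center_iff]
    intro g
    have hg : g = FundamentalGroup.fromPath (X := TopCat.of ↥(Mset 𝒜)) (FundamentalGroup.toPath g) := FG.ext rfl
    rw [hg]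
    generalize ((FundamentalGroup.toPath g) : Path.Homotopic.Quotient x₀ x₀) = q
    induction q using Quotient.inductionOn with
    | h α =>
      show loopElt α * li i = li i * loopElt α
      rw [hlidef]
      rw [hmul (ℓ i) α, hmul α (ℓ i)]
      refine congrArg (fun q => FundamentalGroup.fromPath
        (X := TopCat.of ↥(Mset 𝒜)) q) (Quotient.sound ?_)
      -- the action as a continuous map
      set A : C(ℝ × ↥(Mset 𝒜), ↥(Mset 𝒜)) :=
        ⟨fun q => ⟨act i q.1 (q.2 : V), hact i q.1 _ q.2.2⟩, by
          refine Continuous.subtype_mk ?_ _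
          show Continuous fun q : ℝ × ↥(Mset 𝒜) =>
            ((q.2 : V) + (eℝ q.1 - 1) • p i (q.2 : V))
          exact (continuous_subtype_val.comp continuous_snd).add
            (((hecont.comp continuous_fst).sub continuous_const).smul
              ((hpcont i).comp (continuous_subtype_val.comp continuous_snd)))⟩ with hA
      refine MyWind.trans_homotopic_of_action A ?_ ?_ (ℓ i) (fun t => rfl) α
      · intro x
        apply Subtype.ext
        show act i 0 (x : V) = (x : V)
        show (x : V) + (eℝ 0 - 1) • p i (x : V) = (x : V)
        rw [he0]; simp
      · intro x
        apply Subtype.ext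
        show act i 1 (x : V) = (x : V)
        show (x : V) + (eℝ 1 - 1) • p i (x : V) = (x : V)
        rw [he1]; simp
  -- the winding-number homomorphisms
  set gfun : Fin k → (↥(Mset 𝒜) → ℂ) := fun i x => fi i (x : V) with hgdef
  have hgcont : ∀ i, Continuous (gfun i) :=
    fun i => (hficont i).comp continuous_subtype_val
  have hgne : ∀ i x, gfun i x ≠ 0 := by
    intro i x h
    exact x.2 (Hi i) (hHmem i) ((hfker i _).mp h)
  set Wd : Fin k → (FundamentalGroup ↥(Mset 𝒜) x₀ →* Multiplicative ℂ) := fun i =>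
    MonoidHom.mk' (fun g =>
      Multiplicative.ofAdd (MyWind.windQ (gfun i) (hgcont i) (hgne i)
        ((FundamentalGroup.toPath g) : Path.Homotopic.Quotient x₀ x₀)))
      (by
        intro a b
        show Multiplicative.ofAdd (MyWind.windQ (gfun i) (hgcont i) (hgne i)
            ((FundamentalGroup.toPath (a * b)) : Path.Homotopic.Quotient x₀ x₀)) =
          Multiplicative.ofAdd (MyWind.windQ (gfun i) (hgcont i) (hgne i)
            ((FundamentalGroup.toPath a) : Path.Homotopic.Quotient x₀ x₀)) *
          Multiplicative.ofAdd (MyWind.windQ (gfun i) (hgcont i) (hgne i)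
            ((FundamentalGroup.toPath b) : Path.Homotopic.Quotient x₀ x₀))
        have h1 : ((FundamentalGroup.toPath (a * b)) : Path.Homotopic.Quotient x₀ x₀) =
            Path.Homotopic.Quotient.trans (FundamentalGroup.toPath b) (FundamentalGroup.toPath a) := rfl
        rw [h1, MyWind.windQ_comp, ofAdd_add]
        exact mul_comm _ _) with hWddef
  -- values of the winding numbers on the loops
  have hWdli : ∀ i j, Wd i (li j) =
      Multiplicative.ofAdd (if j = i then (1 : ℂ) else 0) := by
    intro i j
    have hhom : ((FundamentalGroup.toPath (li j)) : Path.Homotopic.Quotient x₀ x₀) = ⟦ℓ j⟧ := rfl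
    show Multiplicative.ofAdd (MyWind.windQ (gfun i) (hgcont i) (hgne i) (FundamentalGroup.toPath (li j))) = _
    rw [hhom, MyWind.windQ_mk]
    congr 1
    have hval : ∀ t : unitInterval,
        gfun i ((ℓ j) t) = fi i (x₀ : V) + (eℝ (t : ℝ) - 1) * fi i (p j (x₀ : V)) := by
      intro t
      show fi i ((x₀ : V) + (eℝ (t : ℝ) - 1) • p j (x₀ : V)) = _
      rw [map_add, map_smul, smul_eq_mul]
    by_cases hji : j = i
    · subst hji
      have hker : fi j ((x₀ : V) - p j (x₀ : V)) = 0 :=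
        (hfker j _).mpr (hCile j (Hi j) (hHj j) (hpdiff j (x₀ : V)))
      have hpx0 : fi j (p j (x₀ : V)) = fi j (x₀ : V) := by
        rw [map_sub, sub_eq_zero] at hker
        exact hker.symm
      have harg : (fun t : unitInterval => gfun j ((ℓ j) t)) =
          (fun t : unitInterval =>
            Complex.exp (2 * (Real.pi : ℂ) * Complex.I * ((t : ℝ) : ℂ)) * fi j (x₀ : V)) := by
        funext t
        rw [hval t, hpx0]
        show fi j (x₀ : V) + (eℝ (t : ℝ) - 1) * fi j (x₀ : V) = eℝ (t : ℝ) * fi j (x₀ : V)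
        ring
      rw [harg, if_pos rfl]
      exact MyWind.wind_exp_mul _ (hgne j x₀)
    · have hpj0 : fi i (p j (x₀ : V)) = 0 :=
        (hfker i _).mpr (hHj i j hji (hpmem j (x₀ : V)))
      have harg : (fun t : unitInterval => gfun i ((ℓ j) t)) =
          (fun _ : unitInterval => fi i (x₀ : V)) := by
        funext t
        rw [hval t, hpj0, mul_zero, add_zero]
      rw [harg, if_neg hji]
      exact MyWind.wind_const _ (hgne i x₀)
  -- the homomorphism from ℤ^k
  letI : CommGroup ↥(Subgroup.center (FundamentalGroup ↥(Mset 𝒜) x₀)) :=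
    { (inferInstance : Group _) with
      mul_comm := fun a b => Subtype.ext (Subgroup.mem_center_iff.mp b.2 a) }
  set ci : Fin k → ↥(Subgroup.center (FundamentalGroup ↥(Mset 𝒜) x₀)) :=
    fun i => ⟨li i, hcentral i⟩ with hcidef
  set ψ : Multiplicative (Fin k → ℤ) →* ↥(Subgroup.center (FundamentalGroup ↥(Mset 𝒜) x₀)) :=
    MonoidHom.mk' (fun m => ∏ i, ci i ^ (Multiplicative.toAdd m i))
      (by
        intro a b
        rw [← Finset.prod_mul_distrib]
        refine Finset.prod_congr rfl fun i _ => ?_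
        rw [← zpow_add]
        rfl) with hψdef
  set φ : Multiplicative (Fin k → ℤ) →* FundamentalGroup ↥(Mset 𝒜) x₀ :=
    (Subgroup.center (FundamentalGroup ↥(Mset 𝒜) x₀)).subtype.comp ψ with hφdef
  have hinj : Function.Injective φ := by
    rw [injective_iff_map_eq_one]
    intro m hm
    have hval : ∀ i : Fin k, Multiplicative.toAdd (Wd i (φ m)) =
        ((Multiplicative.toAdd m i : ℤ) : ℂ) := by
      intro i
      have hφm : Wd i (φ m) = ∏ j, (Wd i (li j)) ^ (Multiplicative.toAdd m j) := by
        show ((Wd i).comp ((Subgroup.center _).subtype)) (ψ m) = _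
        rw [hψdef]
        show ((Wd i).comp ((Subgroup.center _).subtype))
          (∏ j, ci j ^ (Multiplicative.toAdd m j)) = _
        rw [map_prod]
        refine Finset.prod_congr rfl fun j _ => ?_
        rw [map_zpow]
        rfl
      rw [hφm, toAdd_prod]
      have hterm : ∀ j, Multiplicative.toAdd ((Wd i (li j)) ^ (Multiplicative.toAdd m j)) =
          (if j = i then ((Multiplicative.toAdd m j : ℤ) : ℂ) else 0) := by
        intro j
        rw [toAdd_zpow, hWdli]
        show (Multiplicative.toAdd m j : ℤ) • (if j = i then (1 : ℂ) else 0) = _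
        split_ifs <;> simp
      rw [Finset.sum_congr rfl fun j _ => hterm j]
      simp
    have hzero : ∀ i : Fin k, Multiplicative.toAdd m i = 0 := by
      intro i
      have h := hval i
      rw [hm, map_one, toAdd_one] at h
      exact_mod_cast h.symm
    have hadd : Multiplicative.toAdd m = 0 := funext hzero
    calc m = Multiplicative.ofAdd (Multiplicative.toAdd m) := rfl
      _ = Multiplicative.ofAdd 0 := by rw [hadd]
      _ = 1 := ofAdd_zero
  refine ⟨φ.range, ?_, ?_⟩
  · rintro g ⟨m, rfl⟩
    exact (ψ m).2
  · exact ⟨(MonoidHom.ofInjective hinj).symm⟩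
end
end

section
/- Let 𝒜 be a central hyperplane arrangement in a finite-dimensional complex vector space V and let E∈Q(𝒜). Let i:M(𝒜_{V/E})→M(𝒜) be the embedding obtained by identifying M(𝒜_{V/E}) with the intersection of M(𝒜_{V/E}) with a sufficiently small disk D about E/E in V/E, regarded as a normal disk to E at a point of E∩M(𝒜^E), and let r:M(𝒜)→M(𝒜_{V/E}) be the composition of the inclusion M(𝒜)↪M(𝒜_E)≅E×M(𝒜_{V/E}) with the projection to M(𝒜_{V/E}), where 𝒜_E={H∈𝒜 : E⊆H}. Then the composition r∘i is homotopic to the identity map of M(𝒜_{V/E}); in particular, i induces an injective homomorphism on fundamental groups. -/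
open CategoryTheory
open scoped FundamentalGroupoid Classical

noncomputable section

namespace CxArr

attribute [local instance] Path.Homotopic.setoid

variable {V : Type} [NormedAddCommGroup V] [NormedSpace ℂ V] [FiniteDimensional ℂ V]

end CxArr


section Aux

open CxArr ContinuousMap

attribute [local instance] Path.Homotopic.setoid

/-- The map induced on fundamental-groupoid homs by the identity is the identity. -/
theorem pi_map_id_eq {X : Type} [TopologicalSpace X] {x y : X}
    (p : @Quiver.Hom (FundamentalGroupoid X) _ ⟨x⟩ ⟨y⟩) :
    (πₘ (toTopHom (ContinuousMap.id X))).map p = p := by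
  refine Quotient.inductionOn p fun p' => ?_
  erw [FundamentalGroupoid.map_eq]
  rfl

/-- Functoriality of the induced map on path classes. -/
theorem pi_map_comp_eq {X Y Z : Type} [TopologicalSpace X] [TopologicalSpace Y]
    [TopologicalSpace Z] (f : C(X, Y)) (g : C(Y, Z)) {x y : X}
    (p : @Quiver.Hom (FundamentalGroupoid X) _ ⟨x⟩ ⟨y⟩) :
    (πₘ (toTopHom (g.comp f))).map p
      = (πₘ (toTopHom g)).map ((πₘ (toTopHom f)).map p) := by
  refine Quotient.inductionOn p fun p' => ?_
  rfl

end Aux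

open CxArr in
/-- For a central arrangement `𝒜` and `E ∈ Q(𝒜)`, the composition `r ∘ i`
of the normal-disk embedding `i : M(𝒜_{V/E}) → M(𝒜)` with the retraction
`r : M(𝒜) → M(𝒜_{V/E})` is homotopic to the identity; in particular `i` is `π₁`-injective.
(Here `V/E` is realized as a linear complement `W` of `E`, `i` is given by
`w ↦ p + (ε/(1+‖w‖))•w` for a point `p ∈ E ∩ M(𝒜^E)` — i.e. the image of the small normal
disk `D` about `E/E` — and `r` is induced by the linear projection of `V` onto `W` along `E`,
i.e. by the composition `M(𝒜) ↪ M(𝒜_E) ≅ E × M(𝒜_{V/E}) → M(𝒜_{V/E})`.) -/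
theorem statement_4 {V : Type} [NormedAddCommGroup V] [NormedSpace ℂ V]
    [FiniteDimensional ℂ V] (𝒜 : Finset (Submodule ℂ V))
    (hhyp : ∀ H ∈ 𝒜, IsCoatom H)
    (E : Submodule ℂ V) (hE : QMem 𝒜 E)
    (W : Submodule ℂ V) (hW : IsCompl E W)
    (p : V) (hpE : p ∈ E) (hpM : ∀ H ∈ 𝒜, ¬ E ≤ H → p ∉ H)
    (ε : ℝ) (hε : 0 < ε)
    (i : C(↥(MW 𝒜 E W), ↥(Mset 𝒜)))
    (hi : ∀ w : ↥(MW 𝒜 E W),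
      ((i w : V)) = p + (ε / (1 + ‖((w : ↥W) : V)‖)) • ((w : ↥W) : V))
    (r : C(↥(Mset 𝒜), ↥(MW 𝒜 E W)))
    (hr : ∀ x : ↥(Mset 𝒜),
      ((r x : ↥W)) = Submodule.linearProjOfIsCompl W E hW.symm (x : V)) :
    (r.comp i).Homotopic (ContinuousMap.id ↥(MW 𝒜 E W)) ∧
    ∀ w₀ : ↥(MW 𝒜 E W), Function.Injective (indHom i w₀) := by
  classical
  set c : ↥(MW 𝒜 E W) → ℝ := fun w => ε / (1 + ‖((w : ↥W) : V)‖) with hc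
  have hnorm : ∀ w : ↥(MW 𝒜 E W), (0:ℝ) < 1 + ‖((w : ↥W) : V)‖ := fun w => by positivity
  have hcpos : ∀ w, 0 < c w := fun w => div_pos hε (hnorm w)
  set s : unitInterval × ↥(MW 𝒜 E W) → ℝ :=
    fun q => (1 - (q.1 : ℝ)) * c q.2 + (q.1 : ℝ) with hs
  have hspos : ∀ q, 0 < s q := by
    intro ⟨t, w⟩
    rcases t.2.1.eq_or_lt with h | h
    · simp only [hs, ← h]
      simpa using (hcpos w)
    · have h1 : (0:ℝ) ≤ (1 - (t:ℝ)) * c w :=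
        mul_nonneg (by linarith [t.2.2]) (hcpos w).le
      simp only [hs]
      linarith
  have hmemW : ∀ (a : ℝ) (w : ↥(MW 𝒜 E W)), a • (((w : ↥W)) : V) ∈ W :=
    fun a w => W.smul_of_tower_mem a (w : ↥W).2
  have hmemM : ∀ (a : ℝ), 0 < a → ∀ w : ↥(MW 𝒜 E W),
      (⟨a • (((w : ↥W)) : V), hmemW a w⟩ : ↥W) ∈ MW 𝒜 E W := by
    intro a ha w H hH hEH hmem
    have h2 := H.smul_of_tower_mem a⁻¹ hmem
    rw [inv_smul_smul₀ ha.ne'] at h2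
    exact w.2 H hH hEH h2
  have hhtpy : (r.comp i).Homotopic (ContinuousMap.id ↥(MW 𝒜 E W)) := by
    refine ⟨⟨⟨fun q => ⟨⟨s q • (((q.2 : ↥W)) : V), hmemW _ _⟩, hmemM _ (hspos q) q.2⟩, ?_⟩,
      ?_, ?_⟩⟩
    · refine Continuous.subtype_mk (Continuous.subtype_mk ?_ _) _
      refine Continuous.smul (M := ℝ) ?_
        (continuous_subtype_val.comp (continuous_subtype_val.comp continuous_snd))
      have hn : Continuous fun q : unitInterval × ↥(MW 𝒜 E W) =>
          (1 + ‖((q.2 : ↥W) : V)‖) :=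
        continuous_const.add ((continuous_subtype_val.comp
          (continuous_subtype_val.comp continuous_snd)).norm)
      have hcc : Continuous fun q : unitInterval × ↥(MW 𝒜 E W) => c q.2 :=
        continuous_const.div hn (fun q => (hnorm q.2).ne')
      have ht : Continuous fun q : unitInterval × ↥(MW 𝒜 E W) => (q.1 : ℝ) :=
        continuous_subtype_val.comp continuous_fst
      exact ((continuous_const.sub ht).mul hcc).add ht
    · intro w
      apply Subtype.ext
      apply Subtype.ext
      show s (0, w) • (((w : ↥W)) : V) = (((r (i w) : ↥W)) : V)
      have h1 : (((r (i w) : ↥W)) : V)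
          = (Submodule.projectionOnto W E hW.symm ((i w : V)) : V) := by
        exact congrArg Subtype.val (hr (i w))
      rw [h1, hi w]
      rw [map_add, LinearMap.map_smul_of_tower,
        Submodule.projectionOnto_apply_left hW.symm ((w : ↥W)),
        Submodule.projectionOnto_apply_right (p := W) hW.symm ⟨p, hpE⟩]
      simp [hs, hc]
    · intro w
      apply Subtype.ext
      apply Subtype.ext
      show s (1, w) • (((w : ↥W)) : V) = (((w : ↥W)) : V)
      simp [hs]
  refine ⟨hhtpy, ?_⟩
  intro w₀ a b hab
  obtain ⟨H⟩ := hhtpy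
  -- reduce to equality of the underlying groupoid homs
  have hab' : (πₘ (toTopHom i)).map a = (πₘ (toTopHom i)).map b := by
    have h0 := congrArg (fun z : FundamentalGroup ↥(Mset 𝒜) (i w₀) => z) hab
    exact h0
  have hab2 : (πₘ (toTopHom (r.comp i))).map a
      = (πₘ (toTopHom (r.comp i))).map b := by
    rw [pi_map_comp_eq i r a, pi_map_comp_eq i r b, hab']
  -- use the homotopy with the identity
  have key : ∀ q : @Quiver.Hom (FundamentalGroupoid ↥(MW 𝒜 E W)) _ ⟨w₀⟩ ⟨w₀⟩,
      (πₘ (toTopHom (r.comp i))).map q ≫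
        (⟦H.evalAt w₀⟧ :
          @Quiver.Hom (FundamentalGroupoid ↥(MW 𝒜 E W)) _ ⟨(r.comp i) w₀⟩ ⟨w₀⟩)
        = ⟦H.evalAt w₀⟧ ≫ q := by
    intro q
    have h1 := (H.eq_diag_path (X := TopCat.of ↥(MW 𝒜 E W))
      (Y := TopCat.of ↥(MW 𝒜 E W)) (x₀ := w₀) (x₁ := w₀) q).1
    have h2 := (H.eq_diag_path (X := TopCat.of ↥(MW 𝒜 E W))
      (Y := TopCat.of ↥(MW 𝒜 E W)) (x₀ := w₀) (x₁ := w₀) q).2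
    have h3 := h1.trans h2.symm
    exact h3.trans (congrArg (fun z => (⟦H.evalAt w₀⟧ :
      @Quiver.Hom (FundamentalGroupoid ↥(MW 𝒜 E W)) _ ⟨(r.comp i) w₀⟩ ⟨w₀⟩) ≫ z)
      (pi_map_id_eq q))
  have h3 : (⟦H.evalAt w₀⟧ :
        @Quiver.Hom (FundamentalGroupoid ↥(MW 𝒜 E W)) _ ⟨(r.comp i) w₀⟩ ⟨w₀⟩) ≫ a
      = ⟦H.evalAt w₀⟧ ≫ b :=
    (key a).symm.trans ((congrArg (fun z => z ≫ (⟦H.evalAt w₀⟧ :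
      @Quiver.Hom (FundamentalGroupoid ↥(MW 𝒜 E W)) _ ⟨(r.comp i) w₀⟩ ⟨w₀⟩)) hab2).trans
      (key b))
  have h4 : a = b := by
    have h5 := congrArg (fun z => CategoryTheory.Groupoid.inv (⟦H.evalAt w₀⟧ :
      @Quiver.Hom (FundamentalGroupoid ↥(MW 𝒜 E W)) _ ⟨(r.comp i) w₀⟩ ⟨w₀⟩) ≫ z) h3
    dsimp only at h5
    erw [← CategoryTheory.Category.assoc, ← CategoryTheory.Category.assoc,
      CategoryTheory.Groupoid.inv_comp, CategoryTheory.Category.id_comp,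
      CategoryTheory.Category.id_comp] at h5
    exact h5
  exact h4
end
end

section
/- Let 𝒜 be a finite, central, essential, simplicial real arrangement. Let F and F′ be adjacent parallel faces of Z(𝒜) dual to B, both contained in a face F₀ with dim F₀ = dim F + 1, and let p:F→F′ be parallel translation. Then: (1) for any vertex x∈F, with y = Ant(x,F₀) (which lies in F′), the morphism Δ_x(F₀)(Δ^y(F′))⁻¹ is an elementary B-segment, and every elementary B-segment from F to F′ is of this form for some vertex x∈F; (2) if u is an elementary B-segment with x=s(u)∈F and x′=t(u)∈F′, then (Δ_x(F))^k u = u (Δ_{x′}(F′))^k for every positive even integer k; (3) a positive path representing an elementary B-segment crosses no hyperplane dual to an edge of F. -/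
open scoped Classical

noncomputable section

namespace DelGrpd

variable {A : Type} [NormedAddCommGroup A] [InnerProductSpace ℝ A] [FiniteDimensional ℝ A]

/-- A finite, central, essential arrangement of linear hyperplanes in the real vector
space `A`. -/
structure RealArr (A : Type) [NormedAddCommGroup A] [InnerProductSpace ℝ A]
    [FiniteDimensional ℝ A] where
  hyps : Finset (Submodule ℝ A)
  coatoms : ∀ H ∈ hyps, IsCoatom H
  essential : hyps.inf id = ⊥

/-- The complement of the arrangement. -/
def cmpl (𝒜 : RealArr A) : Set A := {x | ∀ H ∈ 𝒜.hyps, x ∉ H}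

/-- A chamber: a connected component of the complement. -/
def IsChamber (𝒜 : RealArr A) (C : Set A) : Prop :=
  ∃ x ∈ cmpl 𝒜, C = connectedComponentIn (cmpl 𝒜) x

/-- The type of chambers of `𝒜`. -/
def Chamber (𝒜 : RealArr A) : Type := {C : Set A // IsChamber 𝒜 C}

/-- The arrangement is simplicial: every chamber is an open simplicial cone. -/
def Simplicial (𝒜 : RealArr A) : Prop :=
  ∀ C : Set A, IsChamber 𝒜 C →
    ∃ f : Fin (Module.finrank ℝ A) → (A →ₗ[ℝ] ℝ),
      LinearIndependent ℝ f ∧ C = {x | ∀ i, 0 < f i x}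

/-- The arrangement is irreducible (not a nontrivial direct sum). -/
def Irred (𝒜 : RealArr A) : Prop :=
  ¬ ∃ V₁ V₂ : Submodule ℝ A, IsCompl V₁ V₂ ∧ V₁ ≠ ⊥ ∧ V₂ ≠ ⊥ ∧
    ∀ H ∈ 𝒜.hyps, V₁ ≤ H ∨ V₂ ≤ H

/-- The hyperplane `H` separates the sets `C` and `D`. -/
def Separates (H : Submodule ℝ A) (C D : Set A) : Prop :=
  ∃ f : A →ₗ[ℝ] ℝ, LinearMap.ker f = H ∧ (∀ x ∈ C, 0 < f x) ∧ (∀ x ∈ D, f x < 0)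

/-- Two chambers are adjacent when exactly one hyperplane of `𝒜` separates them. -/
def Adj (𝒜 : RealArr A) (C D : Chamber 𝒜) : Prop :=
  ∃! H : Submodule ℝ A, H ∈ 𝒜.hyps ∧ Separates H C.1 D.1

/-- A step of an edge path in the graph `Γ(𝒜)`: an arrow of `Γ(𝒜)` traversed either
positively or negatively (formal inverse). -/
inductive Step (𝒜 : RealArr A) : Chamber 𝒜 → Chamber 𝒜 → Type
  | pos {x y : Chamber 𝒜} (h : Adj 𝒜 x y) : Step 𝒜 x y
  | neg {x y : Chamber 𝒜} (h : Adj 𝒜 y x) : Step 𝒜 x y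

/-- The sign of a step. -/
def Step.sign {𝒜 : RealArr A} {x y : Chamber 𝒜} : Step 𝒜 x y → ℤ
  | .pos _ => 1
  | .neg _ => -1

/-- Reversal of a step. -/
def Step.symm {𝒜 : RealArr A} {x y : Chamber 𝒜} : Step 𝒜 x y → Step 𝒜 y x
  | .pos h => .neg h
  | .neg h => .pos h

/-- Edge paths in `Γ(𝒜)` (words in the arrows and their formal inverses). -/
inductive Path (𝒜 : RealArr A) : Chamber 𝒜 → Chamber 𝒜 → Type
  | nil (x : Chamber 𝒜) : Path 𝒜 x x
  | cons {x y z : Chamber 𝒜} (s : Step 𝒜 x y) (p : Path 𝒜 y z) : Path 𝒜 x z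

namespace Path

variable {𝒜 : RealArr A}

/-- Concatenation of paths. -/
def comp : {x y z : Chamber 𝒜} → Path 𝒜 x y → Path 𝒜 y z → Path 𝒜 x z
  | _, _, _, .nil _, q => q
  | _, _, _, .cons s p, q => .cons s (comp p q)

/-- The inverse path. -/
def inv : {x y : Chamber 𝒜} → Path 𝒜 x y → Path 𝒜 y x
  | _, _, .nil x => .nil x
  | _, _, .cons s p => comp (inv p) (.cons s.symm (.nil _))

/-- The length of a path. -/
def length : {x y : Chamber 𝒜} → Path 𝒜 x y → ℕ
  | _, _, .nil _ => 0
  | _, _, .cons _ p => length p + 1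

/-- A path is positive when all of its steps are positive. -/
def Positive : {x y : Chamber 𝒜} → Path 𝒜 x y → Prop
  | _, _, .nil _ => True
  | _, _, .cons (.pos _) p => Positive p
  | _, _, .cons (.neg _) _ => False

/-- A path is minimal when no path with the same endpoints is shorter. -/
def Minimal {x y : Chamber 𝒜} (p : Path 𝒜 x y) : Prop :=
  ∀ q : Path 𝒜 x y, p.length ≤ q.length

@[simp] theorem nil_comp {x y : Chamber 𝒜} (p : Path 𝒜 x y) : comp (.nil x) p = p := rfl

@[simp] theorem comp_nil {x y : Chamber 𝒜} (p : Path 𝒜 x y) : comp p (.nil y) = p := by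
  induction p with
  | nil _ => rfl
  | cons s p ih => simp [comp, ih]

theorem comp_assoc {w x y z : Chamber 𝒜} (p : Path 𝒜 w x) (q : Path 𝒜 x y) (r : Path 𝒜 y z) :
    comp (comp p q) r = comp p (comp q r) := by
  induction p with
  | nil _ => rfl
  | cons s p ih => simp [comp, ih]

@[simp] theorem step_symm_symm {x y : Chamber 𝒜} (s : Step 𝒜 x y) : s.symm.symm = s := by
  cases s <;> rfl

theorem inv_comp {x y z : Chamber 𝒜} (p : Path 𝒜 x y) (q : Path 𝒜 y z) :
    inv (comp p q) = comp (inv q) (inv p) := by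
  induction p with
  | nil _ => simp [inv]
  | cons s p ih => simp [comp, inv, ih, comp_assoc]

@[simp] theorem inv_inv {x y : Chamber 𝒜} (p : Path 𝒜 x y) : inv (inv p) = p := by
  induction p with
  | nil _ => rfl
  | cons s p ih =>
      show inv (comp (inv p) (.cons s.symm (.nil _))) = _
      rw [inv_comp, ih]
      simp [inv, comp]

end Path

/-- Equivalence of edge paths: the smallest equivalence relation such that (a) `p ⬝ p⁻¹` is
equivalent to the constant path, (b) it is closed under inversion, (c) it is preserved by
pre- and post-concatenation, and (d) any two minimal positive paths with the same endpoints
are equivalent. -/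
inductive Rel (𝒜 : RealArr A) : {x y : Chamber 𝒜} → Path 𝒜 x y → Path 𝒜 x y → Prop
  | refl {x y : Chamber 𝒜} (p : Path 𝒜 x y) : Rel 𝒜 p p
  | symm {x y : Chamber 𝒜} {p q : Path 𝒜 x y} : Rel 𝒜 p q → Rel 𝒜 q p
  | trans {x y : Chamber 𝒜} {p q r : Path 𝒜 x y} : Rel 𝒜 p q → Rel 𝒜 q r → Rel 𝒜 p r
  | cancel {x y : Chamber 𝒜} (p : Path 𝒜 x y) : Rel 𝒜 (p.comp p.inv) (Path.nil x)
  | inv {x y : Chamber 𝒜} {p q : Path 𝒜 x y} : Rel 𝒜 p q → Rel 𝒜 p.inv q.inv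
  | congr_left {w x y : Chamber 𝒜} (h : Path 𝒜 w x) {p q : Path 𝒜 x y} :
      Rel 𝒜 p q → Rel 𝒜 (h.comp p) (h.comp q)
  | congr_right {x y z : Chamber 𝒜} (h : Path 𝒜 y z) {p q : Path 𝒜 x y} :
      Rel 𝒜 p q → Rel 𝒜 (p.comp h) (q.comp h)
  | minpos {x y : Chamber 𝒜} (p q : Path 𝒜 x y) :
      p.Positive → q.Positive → p.Minimal → q.Minimal → Rel 𝒜 p q

instance pathSetoid (𝒜 : RealArr A) (x y : Chamber 𝒜) : Setoid (Path 𝒜 x y) :=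
  ⟨Rel 𝒜, ⟨Rel.refl, Rel.symm, Rel.trans⟩⟩

/-- Morphisms of the Deligne groupoid `G(𝒜)`: equivalence classes of edge paths. -/
def Mor (𝒜 : RealArr A) (x y : Chamber 𝒜) : Type := Quotient (pathSetoid 𝒜 x y)

namespace Mor

variable {𝒜 : RealArr A}

/-- Composition of morphisms of the Deligne groupoid. -/
def comp {x y z : Chamber 𝒜} : Mor 𝒜 x y → Mor 𝒜 y z → Mor 𝒜 x z :=
  Quotient.lift₂ (fun p q => (⟦p.comp q⟧ : Mor 𝒜 x z))
    (fun _ _ _ _ hp hq =>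
      Quotient.sound ((Rel.congr_right _ hp).trans (Rel.congr_left _ hq)))

/-- Inversion of morphisms of the Deligne groupoid. -/
def symm {x y : Chamber 𝒜} : Mor 𝒜 x y → Mor 𝒜 y x :=
  Quotient.map Path.inv (fun _ _ h => Rel.inv h)

@[simp] theorem comp_mk {x y z : Chamber 𝒜} (p : Path 𝒜 x y) (q : Path 𝒜 y z) :
    comp (⟦p⟧ : Mor 𝒜 x y) ⟦q⟧ = ⟦p.comp q⟧ := rfl

/-- A positive morphism: one represented by a positive path. -/
def Pos {x y : Chamber 𝒜} (φ : Mor 𝒜 x y) : Prop :=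
  ∃ p : Path 𝒜 x y, p.Positive ∧ φ = ⟦p⟧

/-- The identity morphisms (possibly after identification of the endpoints): morphisms
represented by a path of length zero. -/
def IsId {x y : Chamber 𝒜} (φ : Mor 𝒜 x y) : Prop :=
  ∃ p : Path 𝒜 x y, p.length = 0 ∧ φ = ⟦p⟧

end Mor

/-- The isotropy group of the Deligne groupoid at the chamber `x`. -/
instance morGroup (𝒜 : RealArr A) (x : Chamber 𝒜) : Group (Mor 𝒜 x x) where
  mul := Mor.comp
  one := (⟦Path.nil x⟧ : Mor 𝒜 x x)
  inv := Mor.symm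
  mul_assoc a b c := by
    refine Quotient.inductionOn₃ a b c fun p q r => ?_
    show (⟦(p.comp q).comp r⟧ : Mor 𝒜 x x) = ⟦p.comp (q.comp r)⟧
    rw [Path.comp_assoc]
  one_mul a := by
    refine Quotient.inductionOn a fun p => ?_
    show (⟦(Path.nil x).comp p⟧ : Mor 𝒜 x x) = ⟦p⟧
    rw [Path.nil_comp]
  mul_one a := by
    refine Quotient.inductionOn a fun p => ?_
    show (⟦p.comp (Path.nil x)⟧ : Mor 𝒜 x x) = ⟦p⟧
    rw [Path.comp_nil]
  inv_mul_cancel a := by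
    refine Quotient.inductionOn a fun p => ?_
    show (⟦p.inv.comp p⟧ : Mor 𝒜 x x) = ⟦Path.nil x⟧
    have h := Rel.cancel (𝒜 := 𝒜) p.inv
    rw [Path.inv_inv] at h
    exact Quotient.sound h

/-- The prefix order on morphisms: `f ≼ g` iff `g = f ⬝ h` for a positive `h`. -/
def prefixLe {𝒜 : RealArr A} {x y z : Chamber 𝒜} (f : Mor 𝒜 x y) (g : Mor 𝒜 x z) : Prop :=
  ∃ h : Mor 𝒜 y z, h.Pos ∧ g = f.comp h

/-- The suffix order on morphisms: `f` is a suffix of `g` iff `g = h ⬝ f` for a positive `h`. -/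
def suffixLe {𝒜 : RealArr A} {x y z : Chamber 𝒜} (f : Mor 𝒜 y z) (g : Mor 𝒜 x z) : Prop :=
  ∃ h : Mor 𝒜 x y, h.Pos ∧ g = h.comp f

end DelGrpd

namespace DelGrpd

variable {A : Type} [NormedAddCommGroup A] [InnerProductSpace ℝ A] [FiniteDimensional ℝ A]

/-- A face of the dual zonotope `Z(𝒜)`, encoded by the corresponding cone of the fan of `𝒜`:
the face is dual to the subspace `B ∈ Q̂(𝒜)` and corresponds to the connected component `c`
of `B` minus the hyperplanes not containing `B`. -/
structure Face (𝒜 : RealArr A) where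
  B : Submodule ℝ A
  c : Set A
  hB : ∃ S : Finset (Submodule ℝ A), S ⊆ 𝒜.hyps ∧ B = S.inf id
  hc : ∃ x : A, x ∈ B ∧ (∀ H ∈ 𝒜.hyps, ¬ B ≤ H → x ∉ H) ∧
    c = connectedComponentIn {y : A | y ∈ B ∧ ∀ H ∈ 𝒜.hyps, ¬ B ≤ H → y ∉ H} x

variable {𝒜 : RealArr A}

/-- The chamber `v` is a vertex of the face `F`. -/
def Face.vert (F : Face 𝒜) (v : Chamber 𝒜) : Prop := F.c ⊆ closure v.1


section Paths

variable {𝒜 : RealArr A}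

/-- All chambers visited by the path are vertices of the face `F` (see `Face.vert`);
i.e. the image of the path under `π` is contained in `F`. -/
def Path.InFace (F : Face 𝒜) : {x y : Chamber 𝒜} → Path 𝒜 x y → Prop
  | x, _, .nil _ => F.vert x
  | x, _, .cons _ p => F.vert x ∧ Path.InFace F p

/-- The path crosses the hyperplane `H` (some step of it is dual to `H`). -/
def Path.Crosses (H : Submodule ℝ A) : {x y : Chamber 𝒜} → Path 𝒜 x y → Prop
  | _, _, .nil _ => False
  | _, _, @Path.cons _ _ _ _ _ x y _ _ p => Separates H x.1 y.1 ∨ Path.Crosses H p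

/-- The signed intersection number of a path with the hyperplane `H`: the sum of the signs
of the steps dual to `H`. -/
def Path.icount (H : Submodule ℝ A) : {x y : Chamber 𝒜} → Path 𝒜 x y → ℤ
  | _, _, .nil _ => 0
  | _, _, @Path.cons _ _ _ _ _ x y _ s p =>
      (if Separates H x.1 y.1 then s.sign else 0) + Path.icount H p

end Paths


/-- Containment of faces of the zonotope (every vertex of `F` is a vertex of `F'`). -/
def Face.le (F F' : Face 𝒜) : Prop := ∀ v : Chamber 𝒜, F.vert v → F'.vert v

/-- A proper face of `Z(𝒜)`: neither a vertex nor the whole zonotope. -/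
def Face.Proper (F : Face 𝒜) : Prop := F.B ≠ ⊤ ∧ F.B ≠ ⊥

/-- The face `F` is irreducible, i.e. the normal arrangement `𝒜_{A/B}` of its dual subspace
`B` does not decompose as a nontrivial direct sum. -/
def Face.Irr (F : Face 𝒜) : Prop :=
  ¬ ∃ W₁ W₂ : Submodule ℝ A, F.B ≤ W₁ ∧ F.B ≤ W₂ ∧ W₁ ⊓ W₂ = F.B ∧ W₁ ⊔ W₂ = ⊤ ∧
    W₁ ≠ F.B ∧ W₂ ≠ F.B ∧ ∀ H ∈ 𝒜.hyps, F.B ≤ H → (W₁ ≤ H ∨ W₂ ≤ H)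

/-- `H` is dual to an edge of the face `F`. -/
def DualEdge (F : Face 𝒜) (H : Submodule ℝ A) : Prop :=
  H ∈ 𝒜.hyps ∧ ∃ v w : Chamber 𝒜, F.vert v ∧ F.vert w ∧ Adj 𝒜 v w ∧ Separates H v.1 w.1

/-- `y = Ant(x, F)`, the antipodal vertex of `x` in the face `F`: the vertex of `F`
separated from `x` by exactly the hyperplanes dual to the edges of `F` (equivalently, by
exactly the hyperplanes containing the dual subspace `B` of `F`). -/
def IsAnt (F : Face 𝒜) (x y : Chamber 𝒜) : Prop :=
  F.vert x ∧ F.vert y ∧ ∀ H ∈ 𝒜.hyps, (F.B ≤ H ↔ Separates H x.1 y.1)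

/-- `v = proj_F x`, the vertex of `F` of minimal distance to `x` in the `1`-skeleton of
`Z(𝒜)`. -/
def IsProj (F : Face 𝒜) (x v : Chamber 𝒜) : Prop :=
  F.vert v ∧ ∀ w : Chamber 𝒜, F.vert w → ∀ q : Path 𝒜 x w,
    ∃ p : Path 𝒜 x v, p.length ≤ q.length

/-- `φ = Δ_x(F)` (equivalently `Δ^{Ant(x,F)}(F)`): the Garside morphism of the face `F`,
represented by a minimal positive path from `x` to `Ant(x, F)` inside `F`. -/
def IsGarside (F : Face 𝒜) {x y : Chamber 𝒜} (φ : Mor 𝒜 x y) : Prop :=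
  IsAnt F x y ∧ ∃ p : Path 𝒜 x y, p.Positive ∧ p.Minimal ∧ p.InFace F ∧ φ = ⟦p⟧

/-- `x' = p(x)` where `p : F → F'` is the parallel translation between the parallel faces
`F` and `F'`: `x'` is the vertex of `F'` not separated from `x` by any hyperplane
containing the common dual subspace `B`. -/
def ParTrans (F F' : Face 𝒜) (x x' : Chamber 𝒜) : Prop :=
  F.B = F'.B ∧ F.vert x ∧ F'.vert x' ∧
    ∀ H ∈ 𝒜.hyps, F.B ≤ H → ¬ Separates H x.1 x'.1

/-- The parallel faces `F` and `F'` are adjacent: they are distinct, dual to the same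
subspace, and contained in a common face of one higher dimension. -/
def AdjFaces (F F' : Face 𝒜) : Prop :=
  F ≠ F' ∧ F.B = F'.B ∧ ∃ F₀ : Face 𝒜, F.le F₀ ∧ F'.le F₀ ∧
    Module.finrank ℝ F.B = Module.finrank ℝ F₀.B + 1

/-- `φ` is an `(F, F')`-elementary `B`-segment: `F` and `F'` are adjacent parallel faces
dual to `B` and `φ` is represented by a minimal positive path from a vertex `x ∈ F` to the
parallel translate `p(x) ∈ F'`. -/
def IsElemSeg (F F' : Face 𝒜) {x x' : Chamber 𝒜} (φ : Mor 𝒜 x x') : Prop :=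
  AdjFaces F F' ∧ ParTrans F F' x x' ∧
    ∃ p : Path 𝒜 x x', p.Positive ∧ p.Minimal ∧ φ = ⟦p⟧

/-- `φ` is an elementary `Bs`-segment (for some pair of adjacent parallel faces dual
to `Bs`). -/
def IsElemSegB (Bs : Submodule ℝ A) {x x' : Chamber 𝒜} (φ : Mor 𝒜 x x') : Prop :=
  ∃ F F' : Face 𝒜, F.B = Bs ∧ IsElemSeg F F' φ

/-- `φ` is a (possibly empty) concatenation of elementary `Bs`-segments. -/
inductive IsElemComp (𝒜 : RealArr A) (Bs : Submodule ℝ A) :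
    {x y : Chamber 𝒜} → Mor 𝒜 x y → Prop
  | nil (x : Chamber 𝒜) : IsElemComp 𝒜 Bs (⟦Path.nil x⟧ : Mor 𝒜 x x)
  | single {x y : Chamber 𝒜} (φ : Mor 𝒜 x y) : IsElemSegB Bs φ → IsElemComp 𝒜 Bs φ
  | comp {x y z : Chamber 𝒜} (φ : Mor 𝒜 x y) (ψ : Mor 𝒜 y z) :
      IsElemComp 𝒜 Bs φ → IsElemComp 𝒜 Bs ψ → IsElemComp 𝒜 Bs (φ.comp ψ)

/-- `z = 𝒵_F`, the standard Dehn twist of the face `F` with respect to the base chamber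
`x₀`: `z = h_F (Δ_{x_F}(F))² h_F⁻¹`, where `x_F = proj_F x₀` and `h_F` is (the class of) a
minimal positive path from `x₀` to `x_F`. -/
def IsDehnTwist (x₀ : Chamber 𝒜) (F : Face 𝒜) (z : Mor 𝒜 x₀ x₀) : Prop :=
  ∃ (v y : Chamber 𝒜) (h : Mor 𝒜 x₀ v) (δ : Mor 𝒜 v y) (δ' : Mor 𝒜 y v),
    IsProj F x₀ v ∧
    (∃ p : Path 𝒜 x₀ v, p.Positive ∧ p.Minimal ∧ h = ⟦p⟧) ∧
    IsGarside F δ ∧ IsGarside F δ' ∧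
    z = h.comp (δ.comp (δ'.comp h.symm))

/-- `Z` is a standard `ℤ`-subgroup of the isotropy group `G_{x₀}` of the Deligne groupoid:
a conjugate of the cyclic subgroup generated by the standard Dehn twist of a proper
irreducible face. -/
def IsStdZSubgroup (x₀ : Chamber 𝒜) (Z : Subgroup (Mor 𝒜 x₀ x₀)) : Prop :=
  ∃ (F : Face 𝒜) (z g : Mor 𝒜 x₀ x₀), F.Proper ∧ F.Irr ∧ IsDehnTwist x₀ F z ∧
    Z = Subgroup.zpowers (g * z * g⁻¹)

/-- The geometric realization of an abstract simplicial complex `K` on the vertex set `α`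
(the faces are the nonempty finite sets belonging to `K`). -/
def realization {α : Type*} (K : Set (Finset α)) : Type _ :=
  {f : α → ℝ // (∀ a, 0 ≤ f a) ∧ (∃ s ∈ K, ∀ a, f a ≠ 0 → a ∈ s) ∧ ∑ᶠ a, f a = 1}

instance {α : Type*} (K : Set (Finset α)) : TopologicalSpace (realization K) :=
  instTopologicalSpaceSubtype

end DelGrpd
namespace DelGrpd

variable {A : Type} [NormedAddCommGroup A] [InnerProductSpace ℝ A] [FiniteDimensional ℝ A]

/-- Two functionals with nested kernels are proportional. -/
theorem aux_prop {V : Type*} [AddCommGroup V] [Module ℝ V] (f g : V →ₗ[ℝ] ℝ)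
    (hker : LinearMap.ker f ≤ LinearMap.ker g) (hf : f ≠ 0) : ∃ c : ℝ, g = c • f := by
  obtain ⟨v, hv⟩ : ∃ v, f v ≠ 0 := by
    by_contra h; push_neg at h; exact hf (LinearMap.ext fun x => h x)
  refine ⟨g v / f v, LinearMap.ext fun x => ?_⟩
  have hx : x - (f x / f v) • v ∈ LinearMap.ker f := by
    simp only [LinearMap.mem_ker, map_sub, map_smul, smul_eq_mul]
    field_simp
    ring
  have h2 := hker hx
  simp only [LinearMap.mem_ker, map_sub, map_smul, smul_eq_mul] at h2
  have : g x = f x / f v * g v := by linarith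
  rw [this]; simp only [LinearMap.smul_apply, smul_eq_mul]; ring

theorem exists_ker_eq {H : Submodule ℝ A} (hH : IsCoatom H) :
    ∃ f : A →ₗ[ℝ] ℝ, LinearMap.ker f = H := by
  obtain ⟨x, hx⟩ : ∃ x, x ∉ H := by
    by_contra h; push_neg at h
    exact hH.1 (Submodule.eq_top_iff'.2 h)
  have htop : H ⊔ Submodule.span ℝ {x} = ⊤ := by
    refine hH.2 _ (lt_of_le_of_ne le_sup_left ?_)
    intro h
    exact hx (h ▸ (le_sup_right : Submodule.span ℝ {x} ≤ _) (Submodule.mem_span_singleton_self x))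
  set Q := A ⧸ H
  have hxQ : (H.mkQ x : Q) ≠ 0 := by
    simpa [Submodule.mkQ_apply, Submodule.Quotient.mk_eq_zero] using hx
  have hspan : Submodule.span ℝ {H.mkQ x} = (⊤ : Submodule ℝ Q) := by
    have := congrArg (Submodule.map H.mkQ) htop
    rw [Submodule.map_sup, Submodule.map_span, Submodule.map_top, Submodule.range_mkQ] at this
    have h0 : Submodule.map H.mkQ H = ⊥ := by
      ext q
      simp only [Submodule.mem_map, Submodule.mem_bot]
      constructor
      · rintro ⟨a, ha, rfl⟩
        simpa [Submodule.Quotient.mk_eq_zero] using ha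
      · rintro rfl
        exact ⟨0, H.zero_mem, map_zero _⟩
    rw [h0, bot_sup_eq, Set.image_singleton] at this
    exact this
  have hbij : Function.Bijective (LinearMap.toSpanSingleton ℝ Q (H.mkQ x)) := by
    constructor
    · intro a b hab
      simp only [LinearMap.toSpanSingleton_apply] at hab
      have := sub_eq_zero.2 hab
      rw [← sub_smul] at this
      rcases smul_eq_zero.1 this with h | h
      · exact sub_eq_zero.1 h
      · exact absurd h hxQ
    · intro q
      have : q ∈ Submodule.span ℝ {H.mkQ x} := hspan ▸ Submodule.mem_top
      obtain ⟨c, hc⟩ := Submodule.mem_span_singleton.1 this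
      exact ⟨c, by simpa [LinearMap.toSpanSingleton_apply] using hc⟩
  let e := LinearEquiv.ofBijective _ hbij
  refine ⟨e.symm.toLinearMap.comp H.mkQ, ?_⟩
  ext a
  simp only [LinearMap.mem_ker, LinearMap.comp_apply, LinearEquiv.coe_coe]
  constructor
  · intro h
    have : H.mkQ a = 0 := by
      have h2 : e.symm (H.mkQ a) = 0 := h
      rwa [LinearEquiv.map_eq_zero_iff] at h2
    rwa [Submodule.mkQ_apply, Submodule.Quotient.mk_eq_zero] at this
  · intro h
    have : H.mkQ a = 0 := by
      rw [Submodule.mkQ_apply, Submodule.Quotient.mk_eq_zero]; exact h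
    simp [this]

/-- A choice of defining functional for each hyperplane. -/
def gf (H : Submodule ℝ A) : A →ₗ[ℝ] ℝ :=
  if h : ∃ f : A →ₗ[ℝ] ℝ, LinearMap.ker f = H then h.choose else 0

theorem gf_ker {H : Submodule ℝ A} (hH : IsCoatom H) : LinearMap.ker (gf H) = H := by
  have h : ∃ f : A →ₗ[ℝ] ℝ, LinearMap.ker f = H := exists_ker_eq hH
  rw [gf, dif_pos h]; exact h.choose_spec

variable {𝒜 : RealArr A}

theorem gf_ker' {H : Submodule ℝ A} (hH : H ∈ 𝒜.hyps) : LinearMap.ker (gf H) = H :=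
  gf_ker (𝒜.coatoms H hH)

theorem gf_ne_zero {H : Submodule ℝ A} (hH : H ∈ 𝒜.hyps) : gf H ≠ 0 := by
  intro h
  have := gf_ker' hH
  rw [h, LinearMap.ker_zero] at this
  exact (𝒜.coatoms H hH).1 this.symm

theorem gf_eq_zero_iff {H : Submodule ℝ A} (hH : H ∈ 𝒜.hyps) {a : A} :
    gf H a = 0 ↔ a ∈ H := by
  conv_rhs => rw [← gf_ker' (𝒜 := 𝒜) hH]
  exact (LinearMap.mem_ker).symm

theorem gf_cont (H : Submodule ℝ A) : Continuous (gf H) :=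
  (gf H).continuous_of_finiteDimensional

theorem isOpen_cmpl : IsOpen (cmpl 𝒜) := by
  have : cmpl 𝒜 = ⋂ H ∈ 𝒜.hyps, ((H : Set A))ᶜ := by
    ext y; simp [cmpl]
  rw [this]
  exact isOpen_biInter_finset fun H hH =>
    (Submodule.closed_of_finiteDimensional H).isOpen_compl

theorem gf_ne_zero_of_cmpl {H : Submodule ℝ A} (hH : H ∈ 𝒜.hyps) {y : A}
    (hy : y ∈ cmpl 𝒜) : gf H y ≠ 0 := fun h => hy H hH ((gf_eq_zero_iff hH).1 h)

/-- Sign constancy on preconnected subsets of the complement. -/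
theorem sign_const {s : Set A} (hs : IsPreconnected s) (hsub : s ⊆ cmpl 𝒜)
    {H : Submodule ℝ A} (hH : H ∈ 𝒜.hyps) {y z : A} (hy : y ∈ s) (hz : z ∈ s) :
    0 < gf H y * gf H z := by
  rcases lt_trichotomy (gf H y * gf H z) 0 with h | h | h
  · exfalso
    have hy0 : gf H y ≠ 0 := gf_ne_zero_of_cmpl hH (hsub hy)
    have hcont : ContinuousOn (gf H) s := (gf_cont H).continuousOn
    rcases mul_neg_iff.1 h with ⟨h1, h2⟩ | ⟨h1, h2⟩
    · obtain ⟨x, hxs, hx⟩ := hs.intermediate_value₂ hz hy hcont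
        (continuousOn_const : ContinuousOn (fun _ => (0:ℝ)) s) h2.le h1.le
      exact gf_ne_zero_of_cmpl hH (hsub hxs) hx
    · obtain ⟨x, hxs, hx⟩ := hs.intermediate_value₂ hy hz hcont
        (continuousOn_const : ContinuousOn (fun _ => (0:ℝ)) s) h1.le h2.le
      exact gf_ne_zero_of_cmpl hH (hsub hxs) hx
  · exfalso
    rcases mul_eq_zero.1 h with h | h
    · exact gf_ne_zero_of_cmpl hH (hsub hy) h
    · exact gf_ne_zero_of_cmpl hH (hsub hz) h
  · exact h

/-- The open sign region of a point. -/
def reg (𝒜 : RealArr A) (a : A) : Set A := {y | ∀ H ∈ 𝒜.hyps, 0 < gf H y * gf H a}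

theorem reg_subset_cmpl (a : A) : reg 𝒜 a ⊆ cmpl 𝒜 := by
  intro y hy H hH hmem
  have := hy H hH
  rw [(gf_eq_zero_iff hH).2 hmem] at this
  simp at this

theorem combo_pos {p q a b : ℝ} (hp : 0 ≤ p) (hq : 0 ≤ q) (hpq : p + q = 1)
    (ha : 0 < a) (hb : 0 < b) : 0 < p * a + q * b := by
  have hm : 0 < min a b := lt_min ha hb
  have h1 : p * min a b ≤ p * a := mul_le_mul_of_nonneg_left (min_le_left a b) hp
  have h2 : q * min a b ≤ q * b := mul_le_mul_of_nonneg_left (min_le_right a b) hq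
  nlinarith

theorem convex_reg (a : A) : Convex ℝ (reg 𝒜 a) := by
  intro y hy z hz p q hp hq hpq H hH
  have h1 := hy H hH
  have h2 := hz H hH
  have heq : gf H (p • y + q • z) = p * gf H y + q * gf H z := by
    simp [map_add, map_smul]
  rw [heq]
  rcases (mul_pos_iff.1 h1) with ⟨hy1, ha1⟩ | ⟨hy1, ha1⟩
  · rcases (mul_pos_iff.1 h2) with ⟨hz1, _⟩ | ⟨hz1, hz2⟩
    · exact mul_pos (combo_pos hp hq hpq hy1 hz1) ha1
    · exact absurd ha1 (not_lt.2 hz2.le)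
  · rcases (mul_pos_iff.1 h2) with ⟨hz1, hz2⟩ | ⟨hz1, _⟩
    · exact absurd hz2 (not_lt.2 ha1.le)
    · have := combo_pos hp hq hpq (neg_pos.2 hy1) (neg_pos.2 hz1)
      nlinarith

theorem mem_reg_self {a : A} (ha : a ∈ cmpl 𝒜) : a ∈ reg 𝒜 a := by
  intro H hH
  have := gf_ne_zero_of_cmpl hH ha
  exact mul_self_pos.2 this

namespace Chamber

variable (v : Chamber 𝒜)

/-- A chosen base point of a chamber. -/
def pt : A := v.2.choose

theorem pt_cmpl : v.pt ∈ cmpl 𝒜 := v.2.choose_spec.1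

theorem eq_comp : v.1 = connectedComponentIn (cmpl 𝒜) v.pt := v.2.choose_spec.2

theorem pt_mem : v.pt ∈ v.1 := by
  rw [v.eq_comp]; exact mem_connectedComponentIn v.pt_cmpl

theorem subset_cmpl : v.1 ⊆ cmpl 𝒜 := by
  rw [v.eq_comp]; exact connectedComponentIn_subset _ _

theorem preconnected : IsPreconnected v.1 := by
  rw [v.eq_comp]; exact isPreconnected_connectedComponentIn

theorem eq_reg : v.1 = reg 𝒜 v.pt := by
  apply Set.Subset.antisymm
  · intro y hy H hH
    exact sign_const v.preconnected v.subset_cmpl hH hy v.pt_mem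
  · rw [v.eq_comp]
    exact (convex_reg v.pt).isPreconnected.subset_connectedComponentIn
      (mem_reg_self v.pt_cmpl) (reg_subset_cmpl v.pt)

theorem mem_iff {y : A} : y ∈ v.1 ↔ ∀ H ∈ 𝒜.hyps, 0 < gf H y * gf H v.pt := by
  rw [v.eq_reg]; rfl

theorem eq_of_mem {v w : Chamber 𝒜} {y : A} (hv : y ∈ v.1) (hw : y ∈ w.1) : v = w := by
  apply Subtype.ext
  rw [v.eq_comp] at hv ⊢
  rw [w.eq_comp] at hw ⊢
  have e1 := connectedComponentIn_eq hv
  have e2 := connectedComponentIn_eq hw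
  rw [e1, e2]

theorem nonempty : v.1.Nonempty := ⟨v.pt, v.pt_mem⟩

end Chamber

/-- Chambers with matching sign vectors are equal. -/
theorem chamber_eq_of_signs {v w : Chamber 𝒜}
    (h : ∀ H ∈ 𝒜.hyps, 0 < gf H v.pt * gf H w.pt) : v = w := by
  have : v.pt ∈ w.1 := w.mem_iff.2 h
  exact Chamber.eq_of_mem v.pt_mem this

/-- Sign constancy of a nonvanishing continuous function on a preconnected set. -/
theorem sign_const_gen {f : A → ℝ} (hf : Continuous f) {s : Set A}
    (hs : IsPreconnected s) (hnz : ∀ x ∈ s, f x ≠ 0) {y z : A}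
    (hy : y ∈ s) (hz : z ∈ s) : 0 < f y * f z := by
  rcases lt_trichotomy (f y * f z) 0 with h | h | h
  · exfalso
    rcases mul_neg_iff.1 h with ⟨h1, h2⟩ | ⟨h1, h2⟩
    · obtain ⟨x, hxs, hx⟩ := hs.intermediate_value₂ hz hy hf.continuousOn
        (continuousOn_const : ContinuousOn (fun _ => (0:ℝ)) s) h2.le h1.le
      exact hnz x hxs hx
    · obtain ⟨x, hxs, hx⟩ := hs.intermediate_value₂ hy hz hf.continuousOn
        (continuousOn_const : ContinuousOn (fun _ => (0:ℝ)) s) h1.le h2.le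
      exact hnz x hxs hx
  · exact absurd h (mul_ne_zero (hnz y hy) (hnz z hz))
  · exact h


theorem sgn_mul_trans {a b c : ℝ} (h1 : 0 < a * b) (h2 : 0 < b * c) : 0 < a * c := by
  nlinarith [mul_pos h1 h2, sq_nonneg b]

theorem sgn_mul_neg_trans {a b c : ℝ} (h1 : 0 < a * b) (h2 : b * c < 0) : a * c < 0 := by
  nlinarith [mul_pos h1 (neg_pos.2 h2), sq_nonneg b]

theorem sgn_neg_neg {a b c : ℝ} (h1 : a * b < 0) (h2 : b * c < 0) : 0 < a * c := by
  nlinarith [mul_pos (neg_pos.2 h1) (neg_pos.2 h2), sq_nonneg b]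

theorem add_smul_sign {a b d : ℝ} (h : 0 < a * b) (hd : 0 < d) : 0 < (a + d * b) * b := by
  have hb : b ≠ 0 := by rintro rfl; simp at h
  nlinarith [mul_self_pos.2 hb, mul_pos hd (mul_self_pos.2 hb)]

/-- Characterization of separation for hyperplanes of the arrangement. -/
theorem sep_iff {H : Submodule ℝ A} (hH : H ∈ 𝒜.hyps) (v w : Chamber 𝒜) :
    Separates H v.1 w.1 ↔ gf H v.pt * gf H w.pt < 0 := by
  constructor
  · rintro ⟨f, hker, hpos, hneg⟩
    have hf : f ≠ 0 := by
      intro h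
      rw [h, LinearMap.ker_zero] at hker
      exact (𝒜.coatoms H hH).1 hker.symm
    obtain ⟨c, hc⟩ := aux_prop (gf H) f (le_of_eq ((gf_ker' hH).trans hker.symm)) (gf_ne_zero hH)
    have hc0 : c ≠ 0 := by
      intro h; rw [h, zero_smul] at hc; exact hf hc
    have h1 := hpos v.pt v.pt_mem
    have h2 := hneg w.pt w.pt_mem
    rw [hc] at h1 h2
    simp only [LinearMap.smul_apply, smul_eq_mul] at h1 h2
    have h1' : 0 < gf H v.pt * c := by linarith [mul_comm c (gf H v.pt) ▸ h1]
    exact sgn_mul_neg_trans h1' h2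
  · intro h
    have hcne : gf H v.pt ≠ 0 := gf_ne_zero_of_cmpl hH v.pt_cmpl
    refine ⟨gf H v.pt • gf H, by rw [LinearMap.ker_smul _ _ hcne]; exact gf_ker' hH, ?_, ?_⟩
    · intro y hy
      have hy' := (v.mem_iff).1 hy H hH
      simp only [LinearMap.smul_apply, smul_eq_mul]
      have := sgn_mul_trans hy' (mul_self_pos.2 hcne)
      linarith [mul_comm (gf H y) (gf H v.pt) ▸ this]
    · intro y hy
      have hy' := (w.mem_iff).1 hy H hH
      simp only [LinearMap.smul_apply, smul_eq_mul]
      have h2 : 0 < gf H y * gf H w.pt := hy'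
      have h3 : gf H w.pt * gf H v.pt < 0 := by
        rw [mul_comm]; exact h
      have h4 : gf H y * gf H v.pt < 0 := sgn_mul_neg_trans h2 h3
      rw [mul_comm] at h4
      exact h4

/-- The separating set of two chambers. -/
def SS (v w : Chamber 𝒜) : Finset (Submodule ℝ A) :=
  𝒜.hyps.filter fun H => gf H v.pt * gf H w.pt < 0

theorem mem_SS {H : Submodule ℝ A} {v w : Chamber 𝒜} :
    H ∈ SS v w ↔ H ∈ 𝒜.hyps ∧ gf H v.pt * gf H w.pt < 0 := Finset.mem_filter

theorem mem_SS_iff_sep {H : Submodule ℝ A} {v w : Chamber 𝒜} :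
    H ∈ SS v w ↔ H ∈ 𝒜.hyps ∧ Separates H v.1 w.1 := by
  rw [mem_SS]
  exact and_congr_right fun hH => (sep_iff hH v w).symm

theorem SS_symm (v w : Chamber 𝒜) : SS v w = SS w v := by
  ext H
  rw [mem_SS, mem_SS, mul_comm]

theorem not_sep_iff {H : Submodule ℝ A} (hH : H ∈ 𝒜.hyps) (v w : Chamber 𝒜) :
    ¬ Separates H v.1 w.1 ↔ 0 < gf H v.pt * gf H w.pt := by
  rw [sep_iff hH, not_lt]
  constructor
  · intro h
    rcases h.lt_or_eq with h' | h'
    · exact h'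
    · exact absurd h'.symm
        (mul_ne_zero (gf_ne_zero_of_cmpl hH v.pt_cmpl) (gf_ne_zero_of_cmpl hH w.pt_cmpl))
  · exact le_of_lt

theorem SS_eq_empty_iff {v w : Chamber 𝒜} : SS v w = ∅ ↔ v = w := by
  constructor
  · intro h
    apply chamber_eq_of_signs
    intro H hH
    have : H ∉ SS v w := by rw [h]; exact Finset.notMem_empty H
    rw [mem_SS] at this
    push_neg at this
    rcases (this hH).lt_or_eq with h' | h'
    · exact h'
    · exact absurd h'.symm
        (mul_ne_zero (gf_ne_zero_of_cmpl hH v.pt_cmpl) (gf_ne_zero_of_cmpl hH w.pt_cmpl))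
  · rintro rfl
    rw [Finset.eq_empty_iff_forall_notMem]
    intro H hH
    rw [mem_SS] at hH
    exact absurd hH.2 (not_lt.2 (mul_self_nonneg _))

theorem SS_triangle {v m w : Chamber 𝒜} {H : Submodule ℝ A} (h : H ∈ SS v w) :
    H ∈ SS v m ∪ SS m w := by
  rw [mem_SS] at h
  obtain ⟨hH, hs⟩ := h
  have hm : gf H m.pt ≠ 0 := gf_ne_zero_of_cmpl hH m.pt_cmpl
  rw [Finset.mem_union, mem_SS, mem_SS]
  rcases lt_trichotomy (gf H v.pt * gf H m.pt) 0 with h1 | h1 | h1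
  · exact Or.inl ⟨hH, h1⟩
  · exfalso
    rcases mul_eq_zero.1 h1 with h0 | h0
    · rw [h0, zero_mul] at hs; exact lt_irrefl _ hs
    · exact hm h0
  · refine Or.inr ⟨hH, ?_⟩
    have h1' : 0 < gf H m.pt * gf H v.pt := by linarith [mul_comm (gf H v.pt) (gf H m.pt) ▸ h1]
    exact sgn_mul_neg_trans h1' hs

namespace Face

variable (F : Face 𝒜)

/-- The ambient stratum containing the cone of `F`. -/
def S : Set A := {y : A | y ∈ F.B ∧ ∀ H ∈ 𝒜.hyps, ¬ F.B ≤ H → y ∉ H}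

/-- A chosen base point of a face. -/
def pt : A := F.hc.choose

theorem pt_B : F.pt ∈ F.B := F.hc.choose_spec.1

theorem pt_notmem : ∀ H ∈ 𝒜.hyps, ¬ F.B ≤ H → F.pt ∉ H := F.hc.choose_spec.2.1

theorem pt_S : F.pt ∈ F.S := ⟨F.pt_B, F.pt_notmem⟩

theorem c_eq : F.c = connectedComponentIn F.S F.pt := F.hc.choose_spec.2.2

theorem pt_mem_c : F.pt ∈ F.c := by
  rw [F.c_eq]; exact mem_connectedComponentIn F.pt_S

theorem c_subset_S : F.c ⊆ F.S := by
  rw [F.c_eq]; exact connectedComponentIn_subset _ _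

theorem c_preconnected : IsPreconnected F.c := by
  rw [F.c_eq]; exact isPreconnected_connectedComponentIn

theorem gf_pt_ne {H : Submodule ℝ A} (hH : H ∈ 𝒜.hyps) (hB : ¬ F.B ≤ H) :
    gf H F.pt ≠ 0 :=
  fun h => F.pt_notmem H hH hB ((gf_eq_zero_iff hH).1 h)

theorem gf_pt_zero {H : Submodule ℝ A} (hH : H ∈ 𝒜.hyps) (hB : F.B ≤ H) :
    gf H F.pt = 0 := (gf_eq_zero_iff hH).2 (hB F.pt_B)

theorem gf_c_sign {H : Submodule ℝ A} (hH : H ∈ 𝒜.hyps) (hB : ¬ F.B ≤ H)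
    {c : A} (hc : c ∈ F.c) : 0 < gf H c * gf H F.pt :=
  sign_const_gen (gf_cont H) F.c_preconnected
    (fun x hx => fun h0 => (F.c_subset_S hx).2 H hH hB ((gf_eq_zero_iff hH).1 h0))
    hc F.pt_mem_c

theorem gf_c_zero {H : Submodule ℝ A} (hH : H ∈ 𝒜.hyps) (hB : F.B ≤ H)
    {c : A} (hc : c ∈ F.c) : gf H c = 0 :=
  (gf_eq_zero_iff hH).2 (hB (F.c_subset_S hc).1)

end Face

/-- Characterization of vertices of a face by sign vectors. -/
theorem vert_iff (F : Face 𝒜) (v : Chamber 𝒜) :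
    F.vert v ↔ ∀ H ∈ 𝒜.hyps, ¬ F.B ≤ H → 0 < gf H F.pt * gf H v.pt := by
  constructor
  · intro hv H hH hB
    have hcl : F.pt ∈ closure v.1 := hv F.pt_mem_c
    have hsub : closure v.1 ⊆ {y | 0 ≤ gf H y * gf H v.pt} := by
      apply closure_minimal
      · intro y hy
        exact ((v.mem_iff).1 hy H hH).le
      · exact isClosed_le continuous_const ((gf_cont H).mul continuous_const)
    have h0 : 0 ≤ gf H F.pt * gf H v.pt := hsub hcl
    rcases h0.lt_or_eq with h' | h'
    · exact h'
    · exact absurd h'.symm (mul_ne_zero (F.gf_pt_ne hH hB)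
        (gf_ne_zero_of_cmpl hH v.pt_cmpl))
  · intro h c hc
    have key : ∀ δ : ℝ, 0 < δ → c + δ • v.pt ∈ v.1 := by
      intro δ hδ
      rw [v.mem_iff]
      intro H hH
      have hb : gf H v.pt ≠ 0 := gf_ne_zero_of_cmpl hH v.pt_cmpl
      have heval : gf H (c + δ • v.pt) = gf H c + δ * gf H v.pt := by
        simp [map_add, map_smul]
      rw [heval]
      by_cases hB : F.B ≤ H
      · rw [F.gf_c_zero hH hB hc, zero_add]
        have h2 : (0:ℝ) + δ * gf H v.pt = δ * gf H v.pt := by ring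
        have := mul_pos hδ (mul_self_pos.2 hb)
        nlinarith [this]
      · have h1 := F.gf_c_sign hH hB hc
        have h2 := h H hH hB
        have hab : 0 < gf H c * gf H v.pt := sgn_mul_trans h1 h2
        exact add_smul_sign hab hδ
    have htend : Filter.Tendsto (fun δ : ℝ => c + δ • v.pt) (nhdsWithin 0 (Set.Ioi 0)) (nhds c) := by
      have hcont : Continuous (fun δ : ℝ => c + δ • v.pt) := by
        continuity
      have := hcont.tendsto 0
      simp only [zero_smul, add_zero] at this
      exact this.mono_left nhdsWithin_le_nhds
    exact mem_closure_of_tendsto htend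
      (Filter.eventually_of_mem self_mem_nhdsWithin fun δ hδ => key δ hδ)

theorem sgn_zero {a b c : ℝ} (h1 : 0 ≤ a * b) (h2 : 0 ≤ a * c) (h3 : b * c < 0) :
    a = 0 := by
  by_contra ha
  have := mul_self_pos.2 ha
  nlinarith [mul_nonneg h1 h2]

/-- Constructing a chamber from a point of the complement. -/
def mkChamber (𝒜 : RealArr A) (y : A) (hy : y ∈ cmpl 𝒜) : Chamber 𝒜 :=
  ⟨connectedComponentIn (cmpl 𝒜) y, ⟨y, hy, rfl⟩⟩

theorem mkChamber_mem (𝒜 : RealArr A) (y : A) (hy : y ∈ cmpl 𝒜) :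
    y ∈ (mkChamber 𝒜 y hy).1 := mem_connectedComponentIn hy

theorem mkChamber_sign {y : A} {hy : y ∈ cmpl 𝒜} {H : Submodule ℝ A} (hH : H ∈ 𝒜.hyps) :
    0 < gf H y * gf H (mkChamber 𝒜 y hy).pt :=
  ((mkChamber 𝒜 y hy).mem_iff).1 (mkChamber_mem 𝒜 y hy) H hH

/-- Perturbing the base point of a face into a chamber with prescribed behaviour. -/
theorem exists_chamber_mix (G : Face 𝒜) (x : Chamber 𝒜) (σ : ℝ) (hσ : σ ≠ 0) :
    ∃ z : Chamber 𝒜, ∀ H ∈ 𝒜.hyps,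
      (¬ G.B ≤ H → 0 < gf H z.pt * gf H G.pt) ∧
      (G.B ≤ H → 0 < gf H z.pt * (σ * gf H x.pt)) := by
  have hev : ∀ᶠ ε in nhdsWithin (0:ℝ) (Set.Ioi 0), ∀ H ∈ 𝒜.hyps,
      (¬ G.B ≤ H → 0 < gf H (G.pt + (ε * σ) • x.pt) * gf H G.pt) ∧
      (G.B ≤ H → 0 < gf H (G.pt + (ε * σ) • x.pt) * (σ * gf H x.pt)) := by
    rw [Finset.eventually_all]
    intro H hH
    have hx : gf H x.pt ≠ 0 := gf_ne_zero_of_cmpl hH x.pt_cmpl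
    by_cases hB : G.B ≤ H
    · refine Filter.eventually_of_mem self_mem_nhdsWithin fun ε hε => ⟨fun h => absurd hB h, fun _ => ?_⟩
      have h0 : gf H G.pt = 0 := G.gf_pt_zero hH hB
      have heval : gf H (G.pt + (ε * σ) • x.pt) = ε * σ * gf H x.pt := by
        simp [map_add, map_smul, h0]
      rw [heval]
      have hε' : (0:ℝ) < ε := hε
      have : ε * σ * gf H x.pt * (σ * gf H x.pt) = ε * ((σ * gf H x.pt) * (σ * gf H x.pt)) := by
        ring
      rw [this]
      exact mul_pos hε' (mul_self_pos.2 (mul_ne_zero hσ hx))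
    · have hG : gf H G.pt ≠ 0 := G.gf_pt_ne hH hB
      have hcont : Filter.Tendsto (fun ε : ℝ => gf H (G.pt + (ε * σ) • x.pt) * gf H G.pt)
          (nhdsWithin (0:ℝ) (Set.Ioi 0)) (nhds (gf H G.pt * gf H G.pt)) := by
        have hc : Continuous (fun ε : ℝ => gf H (G.pt + (ε * σ) • x.pt) * gf H G.pt) := by
          continuity
        have := hc.tendsto 0
        simp only [zero_mul, zero_smul, add_zero] at this
        exact this.mono_left nhdsWithin_le_nhds
      have hpos : 0 < gf H G.pt * gf H G.pt := mul_self_pos.2 hG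
      filter_upwards [hcont.eventually (eventually_gt_nhds hpos)] with ε hε
      exact ⟨fun _ => hε, fun h => absurd h hB⟩
  obtain ⟨ε, hε⟩ := hev.exists
  set y := G.pt + (ε * σ) • x.pt with hy
  have hycmpl : y ∈ cmpl 𝒜 := by
    intro H hH hmem
    have h0 : gf H y = 0 := (gf_eq_zero_iff hH).2 hmem
    rcases hε H hH with ⟨h1, h2⟩
    by_cases hB : G.B ≤ H
    · have := h2 hB; rw [h0, zero_mul] at this; exact lt_irrefl _ this
    · have := h1 hB; rw [h0, zero_mul] at this; exact lt_irrefl _ this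
  refine ⟨mkChamber 𝒜 y hycmpl, fun H hH => ?_⟩
  have hsgn := mkChamber_sign (hy := hycmpl) hH
  rcases hε H hH with ⟨h1, h2⟩
  constructor
  · intro hB
    have := h1 hB
    exact sgn_mul_trans (by rw [mul_comm]; exact hsgn) this
  · intro hB
    have := h2 hB
    exact sgn_mul_trans (by rw [mul_comm]; exact hsgn) this

/-- Every face has a vertex matching a given chamber on the hyperplanes containing `B`. -/
theorem exists_vert_matching (G : Face 𝒜) (x : Chamber 𝒜) :
    ∃ z : Chamber 𝒜, G.vert z ∧ ∀ H ∈ 𝒜.hyps, G.B ≤ H → 0 < gf H z.pt * gf H x.pt := by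
  obtain ⟨z, hz⟩ := exists_chamber_mix G x 1 one_ne_zero
  refine ⟨z, (vert_iff G z).2 fun H hH hB => by rw [mul_comm]; exact (hz H hH).1 hB,
    fun H hH hB => by simpa using (hz H hH).2 hB⟩

/-- Antipodal vertex construction: flips exactly the hyperplanes containing `B`. -/
theorem exists_ant_chamber (G : Face 𝒜) (x : Chamber 𝒜) :
    ∃ z : Chamber 𝒜, G.vert z ∧ ∀ H ∈ 𝒜.hyps, G.B ≤ H → gf H z.pt * gf H x.pt < 0 := by
  obtain ⟨z, hz⟩ := exists_chamber_mix G x (-1) (by norm_num)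
  refine ⟨z, (vert_iff G z).2 fun H hH hB => by rw [mul_comm]; exact (hz H hH).1 hB,
    fun H hH hB => ?_⟩
  have := (hz H hH).2 hB
  nlinarith

/-- A small positive multiple of any direction of `B` moves `G.pt` inside `G.c`. -/
theorem Face.exists_mem_c_add (G : Face 𝒜) {k : A} (hk : k ∈ G.B) :
    ∃ ε : ℝ, 0 < ε ∧ G.pt + ε • k ∈ G.c := by
  have hev : ∀ᶠ ε in nhdsWithin (0:ℝ) (Set.Ioi 0), ∀ H ∈ 𝒜.hyps, ¬ G.B ≤ H →
      0 < gf H (G.pt + ε • k) * gf H G.pt := by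
    rw [Finset.eventually_all]
    intro H hH
    by_cases hB : G.B ≤ H
    · exact Filter.Eventually.of_forall fun ε h => absurd hB h
    · have hG : gf H G.pt ≠ 0 := G.gf_pt_ne hH hB
      have hcont : Filter.Tendsto (fun ε : ℝ => gf H (G.pt + ε • k) * gf H G.pt)
          (nhdsWithin (0:ℝ) (Set.Ioi 0)) (nhds (gf H G.pt * gf H G.pt)) := by
        have hc : Continuous (fun ε : ℝ => gf H (G.pt + ε • k) * gf H G.pt) := by
          continuity
        have := hc.tendsto 0
        simp only [zero_smul, add_zero] at this
        exact this.mono_left nhdsWithin_le_nhds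
      filter_upwards [hcont.eventually (eventually_gt_nhds (mul_self_pos.2 hG))] with ε hε
      exact fun _ => hε
  obtain ⟨ε, hε, hε0⟩ := (hev.and (Filter.eventually_of_mem self_mem_nhdsWithin
      (fun ε (hε : ε ∈ Set.Ioi (0:ℝ)) => hε))).exists
  refine ⟨ε, hε0, ?_⟩
  have hseg : segment ℝ G.pt (G.pt + ε • k) ⊆ G.S := by
    rintro y ⟨p, q, hp, hq, hpq, rfl⟩
    constructor
    · exact G.B.add_mem (G.B.smul_mem p G.pt_B)
        (G.B.smul_mem q (G.B.add_mem G.pt_B (G.B.smul_mem ε hk)))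
    · intro H hH hB hmem
      have h0 : gf H (p • G.pt + q • (G.pt + ε • k)) = 0 := (gf_eq_zero_iff hH).2 hmem
      have heval : gf H (p • G.pt + q • (G.pt + ε • k))
          = p * gf H G.pt + q * gf H (G.pt + ε • k) := by
        simp [map_add, map_smul]
        ring
      rw [heval] at h0
      have h1 := hε H hH hB
      have hG : gf H G.pt ≠ 0 := G.gf_pt_ne hH hB
      rcases mul_pos_iff.1 h1 with ⟨ha, hb⟩ | ⟨ha, hb⟩
      · have := combo_pos hp hq hpq hb ha
        rw [h0] at this; exact lt_irrefl _ this
      · have := combo_pos hp hq hpq (neg_pos.2 hb) (neg_pos.2 ha)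
        clear hε hB hev
        nlinarith
  have : segment ℝ G.pt (G.pt + ε • k) ⊆ connectedComponentIn G.S G.pt :=
    (convex_segment _ _).isPreconnected.subset_connectedComponentIn
      (left_mem_segment ℝ _ _) hseg
  rw [← G.c_eq] at this
  exact this (right_mem_segment ℝ _ _)

/-- If a hyperplane of the arrangement contains the cone of a face, it contains its dual
subspace. -/
theorem Face.B_le_of_c_subset (G : Face 𝒜) {H : Submodule ℝ A}
    (h : G.c ⊆ (H : Set A)) : G.B ≤ H := by
  intro k hk
  obtain ⟨ε, hε, hmem⟩ := G.exists_mem_c_add hk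
  have h1 : G.pt ∈ H := h G.pt_mem_c
  have h2 : G.pt + ε • k ∈ H := h hmem
  have h3 : ε • k ∈ H := by
    have := H.sub_mem h2 h1
    simpa using this
  have := H.smul_mem ε⁻¹ h3
  rwa [smul_smul, inv_mul_cancel₀ (ne_of_gt hε), one_smul] at this

/-- Sign on the closure of a chamber. -/
theorem closure_sign {v : Chamber 𝒜} {c : A} (hc : c ∈ closure v.1)
    {H : Submodule ℝ A} (hH : H ∈ 𝒜.hyps) : 0 ≤ gf H c * gf H v.pt := by
  have hsub : closure v.1 ⊆ {y | 0 ≤ gf H y * gf H v.pt} :=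
    closure_minimal (fun y hy => ((v.mem_iff).1 hy H hH).le)
      (isClosed_le continuous_const ((gf_cont H).mul continuous_const))
  exact hsub hc

theorem Face.ext' {F F' : Face 𝒜} (h1 : F.B = F'.B) (h2 : F.c = F'.c) : F = F' := by
  cases F; cases F'
  simp only at h1 h2
  subst h1; subst h2
  rfl

theorem B_trans_le {F F₀ : Face 𝒜} (hle : F.le F₀) {x : Chamber 𝒜} (hx : F.vert x)
    {H : Submodule ℝ A} (hH : H ∈ 𝒜.hyps) (hB : F.B ≤ H) : F₀.B ≤ H := by
  obtain ⟨z, hzvert, hzflip⟩ := exists_ant_chamber F x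
  apply F₀.B_le_of_c_subset
  intro c hc
  have hxv : F₀.vert x := hle x hx
  have hzv : F₀.vert z := hle z hzvert
  have h1 : 0 ≤ gf H c * gf H x.pt := closure_sign (hxv hc) hH
  have h2 : 0 ≤ gf H c * gf H z.pt := closure_sign (hzv hc) hH
  have h3 : gf H x.pt * gf H z.pt < 0 := by
    have := hzflip H hH hB
    linarith [mul_comm (gf H z.pt) (gf H x.pt)]
  have := sgn_zero h1 h2 h3
  exact (gf_eq_zero_iff hH).1 this

theorem B0_le_B {F F₀ : Face 𝒜} (hle : F.le F₀) {x : Chamber 𝒜} (hx : F.vert x) :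
    F₀.B ≤ F.B := by
  obtain ⟨S, hS, hBeq⟩ := F.hB
  conv_rhs => rw [hBeq]
  apply Finset.le_inf
  intro H hH
  have hBH : F.B ≤ H := by
    rw [hBeq]
    exact Finset.inf_le hH
  exact B_trans_le hle hx (hS hH) hBH

section Flip

variable {F F' F₀ : Face 𝒜} {x : Chamber 𝒜}

/-- Off the hyperplanes containing `F₀.B`, adjacent parallel faces have the same sign. -/
theorem flip_agree (hBB' : F.B = F'.B) (hFF₀ : F.le F₀) (hF'F₀ : F'.le F₀)
    (hx : F.vert x) {H : Submodule ℝ A} (hH : H ∈ 𝒜.hyps) (hB0 : ¬ F₀.B ≤ H) :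
    0 < gf H F.pt * gf H F'.pt := by
  have hBF : ¬ F.B ≤ H := fun h => hB0 (B_trans_le hFF₀ hx hH h)
  obtain ⟨v', hv'vert, _⟩ := exists_vert_matching F' x
  have hBF' : ¬ F'.B ≤ H := hBB' ▸ hBF
  have h1 : 0 < gf H F.pt * gf H x.pt := (vert_iff F x).1 hx H hH hBF
  have h2 : 0 < gf H F₀.pt * gf H x.pt := (vert_iff F₀ x).1 (hFF₀ x hx) H hH hB0
  have h3 : 0 < gf H F₀.pt * gf H v'.pt := (vert_iff F₀ v').1 (hF'F₀ v' hv'vert) H hH hB0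
  have h4 : 0 < gf H F'.pt * gf H v'.pt := (vert_iff F' v').1 hv'vert H hH hBF'
  have h5 : 0 < gf H F.pt * gf H F₀.pt :=
    sgn_mul_trans h1 (by rw [mul_comm]; exact h2)
  have h6 : 0 < gf H F₀.pt * gf H F'.pt :=
    sgn_mul_trans h3 (by rw [mul_comm]; exact h4)
  exact sgn_mul_trans h5 h6

theorem inf_eq_B0 (hFF₀ : F.le F₀) (hx : F.vert x)
    (hdim : Module.finrank ℝ F.B = Module.finrank ℝ F₀.B + 1)
    {H : Submodule ℝ A} (hH : H ∈ 𝒜.hyps) (h0 : F₀.B ≤ H) (hB : ¬ F.B ≤ H) :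
    H ⊓ F.B = F₀.B := by
  have hle : F₀.B ≤ H ⊓ F.B := le_inf h0 (B0_le_B hFF₀ hx)
  have hlt : H ⊓ F.B < F.B := lt_of_le_of_ne inf_le_right (by
    intro h
    exact hB (by rw [← h]; exact inf_le_left))
  have hrk : Module.finrank ℝ (H ⊓ F.B : Submodule ℝ A) < Module.finrank ℝ F.B :=
    Submodule.finrank_lt_finrank_of_lt hlt
  rw [hdim] at hrk
  exact (Submodule.eq_of_le_of_finrank_le hle (by omega)).symm

/-- All hyperplanes in `D'` flip together. -/
theorem flip_together (hBB' : F.B = F'.B) (hFF₀ : F.le F₀) (hx : F.vert x)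
    (hdim : Module.finrank ℝ F.B = Module.finrank ℝ F₀.B + 1)
    {H₁ H₂ : Submodule ℝ A} (h1 : H₁ ∈ 𝒜.hyps) (h2 : H₂ ∈ 𝒜.hyps)
    (h01 : F₀.B ≤ H₁) (h02 : F₀.B ≤ H₂) (hB1 : ¬ F.B ≤ H₁) (hB2 : ¬ F.B ≤ H₂)
    (hflip : gf H₁ F.pt * gf H₁ F'.pt < 0) : gf H₂ F.pt * gf H₂ F'.pt < 0 := by
  set r₁ : F.B →ₗ[ℝ] ℝ := (gf H₁).comp F.B.subtype with hr₁
  set r₂ : F.B →ₗ[ℝ] ℝ := (gf H₂).comp F.B.subtype with hr₂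
  have hker : LinearMap.ker r₁ ≤ LinearMap.ker r₂ := by
    intro b hb
    simp only [hr₁, LinearMap.mem_ker, LinearMap.comp_apply, Submodule.coe_subtype] at hb
    have hbH1 : (b : A) ∈ H₁ := (gf_eq_zero_iff h1).1 hb
    have : (b : A) ∈ H₁ ⊓ F.B := ⟨hbH1, b.2⟩
    rw [inf_eq_B0 hFF₀ hx hdim h1 h01 hB1, ← inf_eq_B0 hFF₀ hx hdim h2 h02 hB2] at this
    simp only [hr₂, LinearMap.mem_ker, LinearMap.comp_apply, Submodule.coe_subtype]
    exact (gf_eq_zero_iff h2).2 this.1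
  have hr1ne : r₁ ≠ 0 := by
    obtain ⟨b, hbB, hbH⟩ := SetLike.not_le_iff_exists.1 hB1
    intro h
    have : gf H₁ b = 0 := by
      have h' := LinearMap.congr_fun h ⟨b, hbB⟩
      simpa [hr₁] using h'
    exact hbH ((gf_eq_zero_iff h1).1 this)
  obtain ⟨c, hc⟩ := aux_prop r₁ r₂ hker hr1ne
  have hcne : c ≠ 0 := by
    rintro rfl
    rw [zero_smul] at hc
    obtain ⟨b, hbB, hbH⟩ := SetLike.not_le_iff_exists.1 hB2
    have : gf H₂ b = 0 := by
      have h' := LinearMap.congr_fun hc ⟨b, hbB⟩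
      simpa [hr₂] using h'
    exact hbH ((gf_eq_zero_iff h2).1 this)
  have hFpt : gf H₂ F.pt = c * gf H₁ F.pt := by
    have h' := LinearMap.congr_fun hc ⟨F.pt, F.pt_B⟩
    simpa [hr₁, hr₂] using h'
  have hF'B : F'.pt ∈ F.B := by rw [hBB']; exact F'.pt_B
  have hF'pt : gf H₂ F'.pt = c * gf H₁ F'.pt := by
    have h' := LinearMap.congr_fun hc ⟨F'.pt, hF'B⟩
    simpa [hr₁, hr₂] using h'
  rw [hFpt, hF'pt]
  have hc2 : 0 < c * c := mul_self_pos.2 hcne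
  clear hker hB1 hB2 hr1ne hc
  nlinarith

/-- Distinct parallel faces must flip some hyperplane. -/
theorem flip_exists (hBB' : F.B = F'.B) (hne : F ≠ F') :
    ∃ H ∈ 𝒜.hyps, ¬ F.B ≤ H ∧ gf H F.pt * gf H F'.pt < 0 := by
  by_contra hcon
  push_neg at hcon
  apply hne
  have hSS : F.S = F'.S := by
    unfold Face.S
    rw [hBB']
  have hsign : ∀ H ∈ 𝒜.hyps, ¬ F.B ≤ H → 0 < gf H F.pt * gf H F'.pt := by
    intro H hH hB
    have h1 := hcon H hH hB
    rcases h1.lt_or_eq with h' | h'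
    · exact h'
    · exfalso
      rcases mul_eq_zero.1 h'.symm with h0 | h0
      · exact F.gf_pt_ne hH hB h0
      · exact F'.gf_pt_ne hH (hBB' ▸ hB) h0
  have hseg : segment ℝ F.pt F'.pt ⊆ F.S := by
    rintro y ⟨p, q, hp, hq, hpq, rfl⟩
    constructor
    · exact F.B.add_mem (F.B.smul_mem p F.pt_B)
        (F.B.smul_mem q (by rw [hBB']; exact F'.pt_B))
    · intro H hH hB hmem
      have h0 : gf H (p • F.pt + q • F'.pt) = 0 := (gf_eq_zero_iff hH).2 hmem
      have heval : gf H (p • F.pt + q • F'.pt) = p * gf H F.pt + q * gf H F'.pt := by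
        simp [map_add, map_smul]
      rw [heval] at h0
      have h1 := hsign H hH hB
      rcases mul_pos_iff.1 h1 with ⟨ha, hb⟩ | ⟨ha, hb⟩
      · have := combo_pos hp hq hpq ha hb
        rw [h0] at this; exact lt_irrefl _ this
      · have := combo_pos hp hq hpq (neg_pos.2 ha) (neg_pos.2 hb)
        clear hsign hcon hB
        nlinarith
  have hmem : F'.pt ∈ connectedComponentIn F.S F.pt :=
    ((convex_segment _ _).isPreconnected.subset_connectedComponentIn
      (left_mem_segment ℝ _ _) hseg) (right_mem_segment ℝ _ _)
  apply Face.ext' hBB'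
  rw [F.c_eq, F'.c_eq, ← hSS]
  exact (connectedComponentIn_eq hmem)

/-- The flip criterion: a hyperplane not containing `B` separates `F` from `F'` exactly
when it contains `F₀.B`. -/
theorem flip_iff (hBB' : F.B = F'.B) (hne : F ≠ F') (hFF₀ : F.le F₀) (hF'F₀ : F'.le F₀)
    (hx : F.vert x) (hdim : Module.finrank ℝ F.B = Module.finrank ℝ F₀.B + 1)
    {H : Submodule ℝ A} (hH : H ∈ 𝒜.hyps) (hB : ¬ F.B ≤ H) :
    gf H F.pt * gf H F'.pt < 0 ↔ F₀.B ≤ H := by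
  constructor
  · intro h
    by_contra h0
    exact absurd (flip_agree hBB' hFF₀ hF'F₀ hx hH h0) (not_lt.2 h.le)
  · intro h0
    obtain ⟨H₁, h1, hB1, hflip⟩ := flip_exists hBB' hne
    have h01 : F₀.B ≤ H₁ := by
      by_contra hcon
      exact absurd (flip_agree hBB' hFF₀ hF'F₀ hx h1 hcon) (not_lt.2 hflip.le)
    exact flip_together hBB' hFF₀ hx hdim h1 hH h01 h0 hB1 hB hflip
end Flip

/-- Separation is symmetric. -/
theorem sep_comm {H : Submodule ℝ A} {C D : Set A} (h : Separates H C D) :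
    Separates H D C := by
  obtain ⟨f, hker, hpos, hneg⟩ := h
  have hneg1 : (-f) = (-1 : ℝ) • f := by ext x; simp
  refine ⟨-f, by rw [hneg1, LinearMap.ker_smul _ _ (by norm_num : (-1:ℝ) ≠ 0)]; exact hker,
    fun x hx => ?_, fun x hx => ?_⟩
  · simpa using hneg x hx
  · simpa using hpos x hx

/-- A nonempty convex set covered by finitely many subspaces lies in one of them. -/
theorem convex_subset_of_cover {Φ : Set A} (hΦ : Convex ℝ Φ) (hne : Φ.Nonempty)
    (s : Finset (Submodule ℝ A)) (hcov : ∀ y ∈ Φ, ∃ V ∈ s, y ∈ V) :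
    ∃ V ∈ s, Φ ⊆ (V : Set A) := by
  classical
  induction s using Finset.induction_on with
  | empty =>
      obtain ⟨y, hy⟩ := hne
      obtain ⟨V, hV, _⟩ := hcov y hy
      exact absurd hV (Finset.notMem_empty V)
  | @insert V t hVt ih =>
      by_cases hsub : Φ ⊆ (V : Set A)
      · exact ⟨V, Finset.mem_insert_self V t, hsub⟩
      by_cases hcov' : ∀ y ∈ Φ, ∃ W ∈ t, y ∈ W
      · obtain ⟨W, hW, hsubW⟩ := ih hcov'
        exact ⟨W, Finset.mem_insert_of_mem hW, hsubW⟩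
      push_neg at hcov'
      obtain ⟨a, ha, hnotW⟩ := hcov'
      obtain ⟨b, hb, hbV⟩ := Set.not_subset.1 hsub
      have haV : a ∈ V := by
        obtain ⟨U, hU, haU⟩ := hcov a ha
        rcases Finset.mem_insert.1 hU with rfl | hU'
        · exact haU
        · exact absurd haU (hnotW U hU')
      -- bad parameters
      set bad : Set ℝ := {u : ℝ | ∃ W ∈ t, (1 - u) • a + u • b ∈ W} with hbad
      have hbadfin : bad.Finite := by
        have : bad ⊆ ⋃ W ∈ t, {u : ℝ | (1 - u) • a + u • b ∈ W} := by
          intro u hu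
          obtain ⟨W, hW, hmem⟩ := hu
          exact Set.mem_biUnion hW hmem
        refine Set.Finite.subset (Set.Finite.biUnion t.finite_toSet fun W hW => ?_) this
        by_cases hWfin : ({u : ℝ | (1 - u) • a + u • b ∈ W} : Set ℝ).Subsingleton
        · exact hWfin.finite
        · exfalso
          rw [Set.not_subsingleton_iff] at hWfin
          obtain ⟨u1, hu1, u2, hu2, hneq⟩ := hWfin
          have hsubmem : (u1 - u2) • (b - a) ∈ W := by
            have := W.sub_mem hu1 hu2
            have heq : ((1 - u1) • a + u1 • b) - ((1 - u2) • a + u2 • b)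
                = (u1 - u2) • (b - a) := by
              simp only [smul_sub, sub_smul, one_smul]
              abel
            rwa [heq] at this
          have hba : b - a ∈ W := by
            have := W.smul_mem (u1 - u2)⁻¹ hsubmem
            rwa [smul_smul, inv_mul_cancel₀ (sub_ne_zero.2 hneq), one_smul] at this
          have haW : a ∈ W := by
            have := W.sub_mem hu1 (W.smul_mem u1 hba)
            have heq : ((1 - u1) • a + u1 • b) - u1 • (b - a) = a := by
              simp only [smul_sub, sub_smul, one_smul]
              abel
            rwa [heq] at this
          exact hnotW W hW haW
      obtain ⟨u, hu⟩ := ((Set.Ioc_infinite (zero_lt_one (α := ℝ))).diff hbadfin).nonempty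
      obtain ⟨huIoc, hubad⟩ := hu
      have hmem : (1 - u) • a + u • b ∈ Φ :=
        hΦ ha hb (by linarith [huIoc.2]) (le_of_lt huIoc.1) (by ring)
      obtain ⟨U, hU, haU⟩ := hcov _ hmem
      rcases Finset.mem_insert.1 hU with rfl | hU'
      · exfalso
        have hba : b - a ∈ U := by
          have h1 : ((1 - u) • a + u • b) - a = u • (b - a) := by
            simp only [smul_sub, sub_smul, one_smul]; abel
          have := U.sub_mem haU haV
          rw [h1] at this
          have := U.smul_mem u⁻¹ this
          rwa [smul_smul, inv_mul_cancel₀ (ne_of_gt huIoc.1), one_smul] at this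
        exact hbV (by simpa using U.add_mem haV hba)
      · exact absurd ⟨U, hU', haU⟩ hubad

/-- A point with prescribed values on a linearly independent family of functionals of
full size. -/
theorem exists_dual_point {f : Fin (Module.finrank ℝ A) → (A →ₗ[ℝ] ℝ)}
    (hf : LinearIndependent ℝ f) (c : Fin (Module.finrank ℝ A) → ℝ) :
    ∃ z : A, ∀ i, f i z = c i := by
  by_cases h0 : Module.finrank ℝ A = 0
  · exact ⟨0, fun i => absurd i.isLt (by omega)⟩
  haveI : Nonempty (Fin (Module.finrank ℝ A)) := ⟨⟨0, Nat.pos_of_ne_zero h0⟩⟩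
  have hcard : Fintype.card (Fin (Module.finrank ℝ A))
      = Module.finrank ℝ (Module.Dual ℝ A) := by
    rw [Subspace.dual_finrank_eq, Fintype.card_fin]
  let bD : Module.Basis (Fin (Module.finrank ℝ A)) ℝ (Module.Dual ℝ A) :=
    basisOfLinearIndependentOfCardEqFinrank hf hcard
  refine ⟨(Module.evalEquiv ℝ A).symm (∑ i, c i • bD.dualBasis i), fun j => ?_⟩
  have hcoe : (f j : A →ₗ[ℝ] ℝ) = bD j := by
    have := coe_basisOfLinearIndependentOfCardEqFinrank hf hcard
    rw [show bD = basisOfLinearIndependentOfCardEqFinrank hf hcard from rfl, this]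
  rw [hcoe, Module.apply_evalEquiv_symm_apply]
  simp only [LinearMap.coe_sum, Finset.sum_apply, LinearMap.smul_apply, smul_eq_mul,
    Module.Basis.dualBasis_apply_self]
  simp [Finset.sum_ite_eq]

theorem eventually_sign (g : A →ₗ[ℝ] ℝ) (z d : A) (hz : g z ≠ 0) :
    ∀ᶠ ε in nhdsWithin (0:ℝ) (Set.Ioi 0), 0 < g (z + ε • d) * g z := by
  have hcont : Filter.Tendsto (fun ε : ℝ => g (z + ε • d) * g z)
      (nhdsWithin (0:ℝ) (Set.Ioi 0)) (nhds (g z * g z)) := by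
    have hc : Continuous (fun ε : ℝ => g (z + ε • d) * g z) := by
      have : Continuous g := g.continuous_of_finiteDimensional
      continuity
    have := hc.tendsto 0
    simp only [zero_smul, add_zero] at this
    exact this.mono_left nhdsWithin_le_nhds
  exact hcont.eventually (eventually_gt_nhds (mul_self_pos.2 hz))

theorem eventually_pos (g : A →ₗ[ℝ] ℝ) (z d : A) (hz : 0 < g z) :
    ∀ᶠ ε in nhdsWithin (0:ℝ) (Set.Ioi 0), 0 < g (z + ε • d) := by
  have hcont : Filter.Tendsto (fun ε : ℝ => g (z + ε • d))
      (nhdsWithin (0:ℝ) (Set.Ioi 0)) (nhds (g z)) := by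
    have hc : Continuous (fun ε : ℝ => g (z + ε • d)) := by
      have : Continuous g := g.continuous_of_finiteDimensional
      continuity
    have := hc.tendsto 0
    simp only [zero_smul, add_zero] at this
    exact this.mono_left nhdsWithin_le_nhds
  exact hcont.eventually (eventually_gt_nhds hz)

/-- The key wall-crossing construction in a simplicial arrangement. -/
theorem crossing (hsimp : Simplicial 𝒜) {v w : Chamber 𝒜} (hne : v ≠ w) :
    ∃ (u : Chamber 𝒜) (H₀ : Submodule ℝ A), Adj 𝒜 v u ∧ SS v u = {H₀} ∧ H₀ ∈ SS v w := by
  obtain ⟨f, hfli, hveq⟩ := hsimp v.1 v.2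
  have hmemv : ∀ y : A, y ∈ v.1 ↔ ∀ i, 0 < f i y := by
    intro y; rw [hveq]; exact Iff.rfl
  have hSSne : (SS v w).Nonempty :=
    Finset.nonempty_of_ne_empty (fun h => hne (SS_eq_empty_iff.1 h))
  -- rule out the zero-dimensional case
  by_cases hn0 : Module.finrank ℝ A = 0
  · exfalso
    obtain ⟨H, hH⟩ := hSSne
    have hHhyps : H ∈ 𝒜.hyps := (mem_SS.1 hH).1
    haveI : Subsingleton A := Module.finrank_zero_iff.1 hn0
    have : H = ⊤ := by
      ext a
      simp only [Submodule.mem_top, iff_true]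
      have : a = 0 := Subsingleton.elim a 0
      rw [this]; exact H.zero_mem
    exact (𝒜.coatoms H hHhyps).1 this
  have hfpos : ∀ i, 0 < f i v.pt := (hmemv v.pt).1 v.pt_mem
  -- the open facets of the chamber
  set Φ : Fin (Module.finrank ℝ A) → Set A :=
    fun i => {z | f i z = 0 ∧ ∀ j, j ≠ i → 0 < f j z} with hΦ
  have hΦconv : ∀ i, Convex ℝ (Φ i) := by
    intro i y hy z hz p q hp hq hpq
    constructor
    · simp only [map_add, map_smul, smul_eq_mul, hy.1, hz.1]; ring
    · intro j hj
      have : f j (p • y + q • z) = p * f j y + q * f j z := by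
        simp [map_add, map_smul]
      rw [this]
      exact combo_pos hp hq hpq (hy.2 j hj) (hz.2 j hj)
  have hΦwit : ∀ i, ∃ z, z ∈ Φ i := by
    intro i
    obtain ⟨z, hz⟩ := exists_dual_point hfli (fun j => if j = i then 0 else 1)
    refine ⟨z, by simpa using hz i, fun j hj => ?_⟩
    rw [hz j, if_neg hj]; norm_num
  have hup : ∀ i z, z ∈ Φ i → ∀ δ : ℝ, 0 < δ → z + δ • v.pt ∈ v.1 := by
    intro i z hz δ hδ
    rw [hmemv]
    intro j
    have : f j (z + δ • v.pt) = f j z + δ * f j v.pt := by simp [map_add, map_smul]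
    rw [this]
    by_cases hj : j = i
    · subst hj
      rw [hz.1, zero_add]
      exact mul_pos hδ (hfpos j)
    · have := hz.2 j hj
      have := mul_pos hδ (hfpos j)
      linarith
  have hsig : ∀ i z, z ∈ Φ i → ∀ H ∈ 𝒜.hyps, gf H z ≠ 0 → 0 < gf H z * gf H v.pt := by
    intro i z hz H hH hgz
    obtain ⟨δ, hδev, hδpos⟩ := ((eventually_sign (gf H) z v.pt hgz).and
      (Filter.eventually_of_mem self_mem_nhdsWithin
        (fun ε (hε : ε ∈ Set.Ioi (0:ℝ)) => hε))).exists
    have hmem : z + δ • v.pt ∈ v.1 := hup i z hz δ hδpos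
    have h2 : 0 < gf H (z + δ • v.pt) * gf H v.pt := (v.mem_iff).1 hmem H hH
    have h1 : 0 < gf H z * gf H (z + δ • v.pt) := by
      rw [mul_comm]; exact hδev
    exact sgn_mul_trans h1 h2
  have hnotcmpl : ∀ i z, z ∈ Φ i → z ∉ cmpl 𝒜 := by
    intro i z hz hcm
    have : z ∈ v.1 := by
      rw [v.mem_iff]
      intro H hH
      exact hsig i z hz H hH (gf_ne_zero_of_cmpl hH hcm)
    have := (hmemv z).1 this i
    rw [hz.1] at this
    exact lt_irrefl _ this
  have hKle : ∀ i (H : Submodule ℝ A), Φ i ⊆ (H : Set A) → LinearMap.ker (f i) ≤ H := by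
    intro i H hsub k hk
    obtain ⟨z₀, hz₀⟩ := hΦwit i
    have hev : ∀ᶠ ε in nhdsWithin (0:ℝ) (Set.Ioi 0), ∀ j, j ≠ i → 0 < f j (z₀ + ε • k) := by
      rw [Filter.eventually_all]
      intro j
      by_cases hj : j = i
      · exact Filter.Eventually.of_forall fun ε h => absurd hj h
      · filter_upwards [eventually_pos (f j) z₀ k (hz₀.2 j hj)] with ε hε
        exact fun _ => hε
    obtain ⟨ε, hεev, hεpos⟩ := (hev.and (Filter.eventually_of_mem self_mem_nhdsWithin
      (fun ε (hε : ε ∈ Set.Ioi (0:ℝ)) => hε))).exists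
    have hmem : z₀ + ε • k ∈ Φ i := by
      constructor
      · simp only [map_add, map_smul, smul_eq_mul, hz₀.1, LinearMap.mem_ker.1 hk]
        ring
      · exact hεev
    have h1 : z₀ ∈ H := hsub hz₀
    have h2 : z₀ + ε • k ∈ H := hsub hmem
    have h3 := H.sub_mem h2 h1
    simp only [add_sub_cancel_left] at h3
    have := H.smul_mem ε⁻¹ h3
    rwa [smul_smul, inv_mul_cancel₀ (ne_of_gt hεpos), one_smul] at this
  have hwall : ∀ i, ∀ H ∈ 𝒜.hyps, Φ i ⊆ (H : Set A) → H = LinearMap.ker (f i) := by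
    intro i H hH hsub
    have hKH := hKle i H hsub
    have hHK : ∀ h ∈ H, f i h = 0 := by
      by_contra hcon
      push_neg at hcon
      obtain ⟨h, hhH, hfh⟩ := hcon
      have htop : H = ⊤ := by
        rw [Submodule.eq_top_iff']
        intro a
        have hmem : a - (f i a / f i h) • h ∈ LinearMap.ker (f i) := by
          simp only [LinearMap.mem_ker, map_sub, map_smul, smul_eq_mul]
          field_simp
          ring
        have h1 : a - (f i a / f i h) • h ∈ H := hKH hmem
        have h2 : (f i a / f i h) • h ∈ H := H.smul_mem _ hhH
        have := H.add_mem h1 h2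
        simpa using this
      exact (𝒜.coatoms H hH).1 htop
    exact le_antisymm (fun h hh => LinearMap.mem_ker.2 (hHK h hh)) hKH
  have hKhyps : ∀ i, LinearMap.ker (f i) ∈ 𝒜.hyps := by
    intro i
    obtain ⟨z₀, hz₀⟩ := hΦwit i
    obtain ⟨H, hH, hsub⟩ := convex_subset_of_cover (hΦconv i) ⟨z₀, hz₀⟩ 𝒜.hyps
      (fun y hy => by
        have := hnotcmpl i y hy
        simp only [cmpl, Set.mem_setOf_eq] at this
        push_neg at this
        obtain ⟨H, hH, hmem⟩ := this
        exact ⟨H, hH, hmem⟩)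
    rw [← hwall i H hH hsub]
    exact hH
  have hsgniff : ∀ i (y1 y2 : A),
      0 < gf (LinearMap.ker (f i)) y1 * gf (LinearMap.ker (f i)) y2 → 0 < f i y1 * f i y2 := by
    intro i y1 y2 hgf
    have hker : LinearMap.ker (gf (LinearMap.ker (f i))) = LinearMap.ker (f i) :=
      gf_ker' (hKhyps i)
    obtain ⟨c, hc⟩ := aux_prop (gf (LinearMap.ker (f i))) (f i) (le_of_eq hker)
      (gf_ne_zero (hKhyps i))
    have hcne : c ≠ 0 := by
      rintro rfl
      rw [zero_smul] at hc
      exact hfli.ne_zero i hc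
    rw [hc]
    simp only [LinearMap.smul_apply, smul_eq_mul]
    have hc2 : 0 < c * c := mul_self_pos.2 hcne
    nlinarith
  -- some wall separates v from w
  have hex : ∃ i, LinearMap.ker (f i) ∈ SS v w := by
    by_contra hcon
    push_neg at hcon
    apply hne
    have hwmem : w.pt ∈ v.1 := by
      rw [hmemv]
      intro i
      have hne' := hcon i
      rw [mem_SS] at hne'
      have hiK := hKhyps i
      have h1 : 0 < gf (LinearMap.ker (f i)) v.pt * gf (LinearMap.ker (f i)) w.pt := by
        rcases lt_trichotomy (gf (LinearMap.ker (f i)) v.pt * gf (LinearMap.ker (f i)) w.pt) 0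
          with h | h | h
        · exact absurd ⟨hiK, h⟩ hne'
        · exact absurd h (mul_ne_zero (gf_ne_zero_of_cmpl hiK v.pt_cmpl)
            (gf_ne_zero_of_cmpl hiK w.pt_cmpl))
        · exact h
      have := hsgniff i v.pt w.pt h1
      nlinarith [hfpos i]
    exact Chamber.eq_of_mem hwmem w.pt_mem
  obtain ⟨i, hiSS⟩ := hex
  set K := LinearMap.ker (f i) with hK
  -- generic facet point
  have hgen : ∃ z, z ∈ Φ i ∧ ∀ H ∈ 𝒜.hyps.erase K, z ∉ H := by
    by_contra hcon
    push_neg at hcon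
    obtain ⟨z₀, hz₀⟩ := hΦwit i
    obtain ⟨H, hH, hsub⟩ := convex_subset_of_cover (hΦconv i) ⟨z₀, hz₀⟩ (𝒜.hyps.erase K)
      (fun y hy => hcon y hy)
    have := hwall i H (Finset.mem_of_mem_erase hH) hsub
    rw [← hK] at this
    exact (Finset.ne_of_mem_erase hH) this
  obtain ⟨zs, hzsΦ, hzsgen⟩ := hgen
  have hzsK : zs ∈ K := LinearMap.mem_ker.2 hzsΦ.1
  -- choose the perturbation parameter
  have hev : ∀ᶠ ε in nhdsWithin (0:ℝ) (Set.Ioi 0), ∀ H ∈ 𝒜.hyps, H ≠ K →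
      0 < gf H (zs + ε • (-v.pt)) * gf H zs := by
    rw [Finset.eventually_all]
    intro H hH
    by_cases hHK : H = K
    · exact Filter.Eventually.of_forall fun ε h => absurd hHK h
    · have hzsne : gf H zs ≠ 0 := by
        intro h0
        exact hzsgen H (Finset.mem_erase.2 ⟨hHK, hH⟩) ((gf_eq_zero_iff hH).1 h0)
      filter_upwards [eventually_sign (gf H) zs (-v.pt) hzsne] with ε hε
      exact fun _ => hε
  obtain ⟨ε, hεev, hεpos⟩ := (hev.and (Filter.eventually_of_mem self_mem_nhdsWithin
    (fun ε (hε : ε ∈ Set.Ioi (0:ℝ)) => hε))).exists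
  set y := zs + ε • (-v.pt) with hy
  have hKhyp : K ∈ 𝒜.hyps := hKhyps i
  have hgfKy : gf K y = -(ε * gf K v.pt) := by
    have h0 : gf K zs = 0 := (gf_eq_zero_iff hKhyp).2 hzsK
    simp [hy, map_add, map_smul, h0]
  have hgfKv : gf K v.pt ≠ 0 := gf_ne_zero_of_cmpl hKhyp v.pt_cmpl
  have hycmpl : y ∈ cmpl 𝒜 := by
    intro H hH hmem
    have h0 : gf H y = 0 := (gf_eq_zero_iff hH).2 hmem
    by_cases hHK : H = K
    · rw [hHK, hgfKy] at h0
      have h1 : ε * gf K v.pt = 0 := by linarith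
      rcases mul_eq_zero.1 h1 with h | h
      · exact (ne_of_gt hεpos) h
      · exact hgfKv h
    · have := hεev H hH hHK
      rw [h0, zero_mul] at this
      exact lt_irrefl _ this
  set u := mkChamber 𝒜 y hycmpl with hu
  have husign : ∀ H ∈ 𝒜.hyps, 0 < gf H u.pt * gf H y := by
    intro H hH
    have := mkChamber_sign (hy := hycmpl) hH
    rw [mul_comm]
    exact this
  have hSSvu : SS v u = {K} := by
    ext H
    rw [mem_SS, Finset.mem_singleton]
    constructor
    · rintro ⟨hH, hsep⟩
      by_contra hHK
      have h1 := hεev H hH hHK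
      have hzsne : gf H zs ≠ 0 := by
        intro h0
        exact hzsgen H (Finset.mem_erase.2 ⟨hHK, hH⟩) ((gf_eq_zero_iff hH).1 h0)
      have h2 : 0 < gf H zs * gf H v.pt := hsig i zs hzsΦ H hH hzsne
      have h3 : 0 < gf H y * gf H v.pt := sgn_mul_trans h1 h2
      have h4 : 0 < gf H u.pt * gf H v.pt := sgn_mul_trans (husign H hH) h3
      rw [mul_comm] at h4
      exact absurd hsep (not_lt.2 h4.le)
    · rintro rfl
      refine ⟨hKhyp, ?_⟩
      have h3 : gf K y * gf K v.pt < 0 := by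
        rw [hgfKy]
        nlinarith [mul_pos hεpos (mul_self_pos.2 hgfKv)]
      have h4 : gf K u.pt * gf K v.pt < 0 := sgn_mul_neg_trans (husign K hKhyp) h3
      rw [mul_comm] at h4
      exact h4
  refine ⟨u, K, ?_, hSSvu, hK ▸ hiSS⟩
  refine ⟨K, mem_SS_iff_sep.1 (by rw [hSSvu]; exact Finset.mem_singleton_self K), ?_⟩
  intro H hyp
  have : H ∈ SS v u := mem_SS_iff_sep.2 ⟨hyp.1, hyp.2⟩
  rw [hSSvu, Finset.mem_singleton] at this
  exact this

theorem adj_SS {v m : Chamber 𝒜} (h : Adj 𝒜 v m) : ∃ H₀, SS v m = {H₀} := by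
  obtain ⟨H₀, hmem, huniq⟩ := h
  refine ⟨H₀, ?_⟩
  ext H
  rw [Finset.mem_singleton, mem_SS_iff_sep]
  constructor
  · exact fun hh => huniq H hh
  · rintro rfl; exact hmem

theorem step_SS {v m : Chamber 𝒜} (s : Step 𝒜 v m) : ∃ H₀, SS v m = {H₀} := by
  cases s with
  | pos h => exact adj_SS h
  | neg h =>
      obtain ⟨H₀, h'⟩ := adj_SS h
      exact ⟨H₀, by rw [SS_symm]; exact h'⟩

theorem SS_step {v u w : Chamber 𝒜} {H₀ : Submodule ℝ A} (h : SS v u = {H₀})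
    (hmem : H₀ ∈ SS v w) : SS u w = (SS v w).erase H₀ := by
  have hH₀ : H₀ ∈ 𝒜.hyps := (mem_SS.1 (h ▸ Finset.mem_singleton_self H₀)).1
  have hvu : gf H₀ v.pt * gf H₀ u.pt < 0 :=
    (mem_SS.1 (h ▸ Finset.mem_singleton_self H₀)).2
  have hvw : gf H₀ v.pt * gf H₀ w.pt < 0 := (mem_SS.1 hmem).2
  ext H
  rw [Finset.mem_erase, mem_SS, mem_SS]
  constructor
  · rintro ⟨hH, hs⟩
    by_cases hHK : H = H₀
    · subst hHK
      exfalso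
      have : 0 < gf H u.pt * gf H w.pt := by
        have h1 : gf H u.pt * gf H v.pt < 0 := by rw [mul_comm]; exact hvu
        have h2 : gf H v.pt * gf H w.pt < 0 := hvw
        exact sgn_neg_neg h1 h2
      exact absurd hs (not_lt.2 this.le)
    · have hnot : H ∉ SS v u := by rw [h, Finset.mem_singleton]; exact hHK
      have h1 : 0 < gf H v.pt * gf H u.pt := by
        rcases lt_trichotomy (gf H v.pt * gf H u.pt) 0 with h' | h' | h'
        · exact absurd (mem_SS.2 ⟨hH, h'⟩) hnot
        · exact absurd h' (mul_ne_zero (gf_ne_zero_of_cmpl hH v.pt_cmpl)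
            (gf_ne_zero_of_cmpl hH u.pt_cmpl))
        · exact h'
      refine ⟨hHK, hH, ?_⟩
      have h2 : gf H u.pt * gf H w.pt < 0 := hs
      exact sgn_mul_neg_trans h1 h2
  · rintro ⟨hHK, hH, hs⟩
    have hnot : H ∉ SS v u := by rw [h, Finset.mem_singleton]; exact hHK
    have h1 : 0 < gf H v.pt * gf H u.pt := by
      rcases lt_trichotomy (gf H v.pt * gf H u.pt) 0 with h' | h' | h'
      · exact absurd (mem_SS.2 ⟨hH, h'⟩) hnot
      · exact absurd h' (mul_ne_zero (gf_ne_zero_of_cmpl hH v.pt_cmpl)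
          (gf_ne_zero_of_cmpl hH u.pt_cmpl))
      · exact h'
    refine ⟨hH, ?_⟩
    have h1' : 0 < gf H u.pt * gf H v.pt := by rw [mul_comm]; exact h1
    exact sgn_mul_neg_trans h1' hs

/-- Existence of positive galleries of length the number of separating hyperplanes. -/
theorem exists_gallery (hsimp : Simplicial 𝒜) :
    ∀ (n : ℕ) (v w : Chamber 𝒜), (SS v w).card = n →
      ∃ p : Path 𝒜 v w, p.Positive ∧ p.length = n := by
  intro n
  induction n using Nat.strong_induction_on with
  | _ n ih =>
    intro v w hcard
    by_cases hvw : v = w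
    · subst hvw
      have h0 : SS v v = ∅ := SS_eq_empty_iff.2 rfl
      rw [h0, Finset.card_empty] at hcard
      exact ⟨Path.nil v, trivial, by rw [← hcard]; rfl⟩
    · obtain ⟨u, H₀, hadj, hSSvu, hmem⟩ := crossing hsimp hvw
      have hSSuw := SS_step hSSvu hmem
      have hn : 1 ≤ n := by rw [← hcard]; exact Finset.card_pos.2 ⟨H₀, hmem⟩
      have hcard' : (SS u w).card = n - 1 := by
        rw [hSSuw, Finset.card_erase_of_mem hmem, hcard]
      obtain ⟨p, hpos, hlen⟩ := ih (n-1) (by omega) u w hcard'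
      refine ⟨Path.cons (Step.pos hadj) p, hpos, ?_⟩
      show p.length + 1 = n
      omega

theorem card_SS_le_length {v w : Chamber 𝒜} (p : Path 𝒜 v w) :
    (SS v w).card ≤ p.length := by
  induction p with
  | nil x =>
      rw [SS_eq_empty_iff.2 rfl, Finset.card_empty]
      exact Nat.zero_le _
  | @cons x m w s p ih =>
      obtain ⟨H₀, hSSxm⟩ := step_SS s
      have hsub : SS x w ⊆ SS x m ∪ SS m w := fun H hH => SS_triangle hH
      calc (SS x w).card ≤ (SS x m ∪ SS m w).card := Finset.card_le_card hsub
        _ ≤ (SS x m).card + (SS m w).card := Finset.card_union_le _ _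
        _ = 1 + (SS m w).card := by rw [hSSxm, Finset.card_singleton]
        _ ≤ 1 + p.length := by omega
        _ = p.length + 1 := by omega

theorem minimal_of_length_eq {v w : Chamber 𝒜} {p : Path 𝒜 v w}
    (h : p.length = (SS v w).card) : p.Minimal := by
  intro q
  rw [h]
  exact card_SS_le_length q

theorem minimal_iff (hsimp : Simplicial 𝒜) {v w : Chamber 𝒜} {p : Path 𝒜 v w} :
    p.Minimal ↔ p.length = (SS v w).card := by
  constructor
  · intro hm
    obtain ⟨q, _, hqlen⟩ := exists_gallery hsimp (SS v w).card v w rfl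
    have h1 := hm q
    rw [hqlen] at h1
    exact le_antisymm h1 (card_SS_le_length p)
  · exact minimal_of_length_eq

section Icount

theorem icount_comp {x y z : Chamber 𝒜} (p : Path 𝒜 x y) (q : Path 𝒜 y z)
    (H : Submodule ℝ A) : (p.comp q).icount H = p.icount H + q.icount H := by
  induction p with
  | nil _ => show q.icount H = 0 + q.icount H; omega
  | cons s p ih =>
      show _ + (p.comp q).icount H = _ + p.icount H + q.icount H
      rw [ih]; omega

theorem sep_comm_iff {H : Submodule ℝ A} {C D : Set A} :
    Separates H C D ↔ Separates H D C := ⟨sep_comm, sep_comm⟩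

theorem icount_single {x y : Chamber 𝒜} (s : Step 𝒜 x y) (H : Submodule ℝ A) :
    (Path.cons s (Path.nil y)).icount H = if Separates H x.1 y.1 then s.sign else 0 := by
  show (if Separates H x.1 y.1 then s.sign else 0) + 0 = _
  omega

theorem icount_inv {x y : Chamber 𝒜} (p : Path 𝒜 x y) (H : Submodule ℝ A) :
    p.inv.icount H = - p.icount H := by
  induction p with
  | nil _ => rfl
  | @cons x m y s p ih =>
      show (Path.comp p.inv (Path.cons s.symm (Path.nil x))).icount H = _
      rw [icount_comp, ih, icount_single]
      have hsign : s.symm.sign = - s.sign := by cases s <;> rfl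
      have : (if Separates H m.1 x.1 then s.symm.sign else 0)
          = - (if Separates H x.1 m.1 then s.sign else 0) := by
        by_cases hsep : Separates H x.1 m.1
        · rw [if_pos (sep_comm hsep), if_pos hsep, hsign]
        · rw [if_neg (fun h => hsep (sep_comm h)), if_neg hsep, neg_zero]
      rw [this]
      show -Path.icount H p + -(if Separates H x.1 m.1 then s.sign else 0)
        = -((if Separates H x.1 m.1 then s.sign else 0) + Path.icount H p)
      ring

theorem icount_nonneg {x y : Chamber 𝒜} {p : Path 𝒜 x y} (hpos : p.Positive)
    (H : Submodule ℝ A) : 0 ≤ p.icount H := by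
  induction p with
  | nil _ => exact le_refl 0
  | cons s p ih =>
      cases s with
      | pos h =>
          have hp : p.Positive := hpos
          have := ih hp
          show 0 ≤ (if _ then Step.sign _ else 0) + p.icount H
          have hs : Step.sign (Step.pos (𝒜 := 𝒜) h) = 1 := rfl
          split <;> omega
      | neg h => exact absurd hpos (by simp [Path.Positive])

theorem one_le_icount {x y : Chamber 𝒜} {p : Path 𝒜 x y} (hpos : p.Positive)
    {H : Submodule ℝ A} (hmem : H ∈ SS x y) : 1 ≤ p.icount H := by
  induction p with
  | nil v =>
      rw [SS_eq_empty_iff.2 rfl] at hmem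
      exact absurd hmem (Finset.notMem_empty H)
  | @cons x m y s p ih =>
      cases s with
      | pos h =>
          have hp : p.Positive := hpos
          have hH : H ∈ 𝒜.hyps := (mem_SS.1 hmem).1
          by_cases hsep : Separates H x.1 m.1
          · have := icount_nonneg hp H
            show 1 ≤ (if Separates H x.1 m.1 then Step.sign _ else 0) + p.icount H
            rw [if_pos hsep]
            show 1 ≤ 1 + p.icount H
            omega
          · have hmem' : H ∈ SS m y := by
              have h1 : 0 < gf H x.pt * gf H m.pt := (not_sep_iff hH x m).1 hsep
              have h2 : gf H x.pt * gf H y.pt < 0 := (mem_SS.1 hmem).2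
              have h1' : 0 < gf H m.pt * gf H x.pt := by rw [mul_comm]; exact h1
              exact mem_SS.2 ⟨hH, sgn_mul_neg_trans h1' h2⟩
            have := ih hp hmem'
            show 1 ≤ (if Separates H x.1 m.1 then Step.sign _ else 0) + p.icount H
            rw [if_neg hsep]
            omega
      | neg h => exact absurd hpos (by simp [Path.Positive])

theorem length_eq_sum_icount {x y : Chamber 𝒜} {p : Path 𝒜 x y} (hpos : p.Positive) :
    (p.length : ℤ) = ∑ H ∈ 𝒜.hyps, p.icount H := by
  induction p with
  | nil _ => simp [Path.length, Path.icount]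
  | @cons x m y s p ih =>
      cases s with
      | pos h =>
          have hp : p.Positive := hpos
          have hlen : (Path.cons (Step.pos h) p).length = p.length + 1 := rfl
          rw [hlen]
          have : ∑ H ∈ 𝒜.hyps, (Path.cons (Step.pos h) p).icount H
              = ∑ H ∈ 𝒜.hyps, ((if Separates H x.1 m.1 then (1:ℤ) else 0) + p.icount H) := by
            apply Finset.sum_congr rfl
            intro H _
            rfl
          rw [this, Finset.sum_add_distrib, ← ih hp]
          have hsum : ∑ H ∈ 𝒜.hyps, (if Separates H x.1 m.1 then (1:ℤ) else 0)
              = ((𝒜.hyps.filter fun H => Separates H x.1 m.1).card : ℤ) := by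
            rw [Finset.sum_boole]
          have hfilter : (𝒜.hyps.filter fun H => Separates H x.1 m.1) = SS x m := by
            ext H
            rw [Finset.mem_filter, mem_SS_iff_sep]
          obtain ⟨H₀, hH₀⟩ := adj_SS h
          rw [hsum, hfilter, hH₀, Finset.card_singleton]
          push_cast
          ring
      | neg h => exact absurd hpos (by simp [Path.Positive])

theorem icount_eq_indicator (hsimp : Simplicial 𝒜) {x y : Chamber 𝒜} {p : Path 𝒜 x y}
    (hpos : p.Positive) (hmin : p.Minimal) {H : Submodule ℝ A} (hH : H ∈ 𝒜.hyps) :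
    p.icount H = if H ∈ SS x y then 1 else 0 := by
  have hlen : p.length = (SS x y).card := (minimal_iff hsimp).1 hmin
  have hsum := length_eq_sum_icount hpos
  have hind : ∑ K ∈ 𝒜.hyps, (if K ∈ SS x y then (1:ℤ) else 0) = ((SS x y).card : ℤ) := by
    rw [Finset.sum_boole]
    have : 𝒜.hyps.filter (fun K => K ∈ SS x y) = SS x y := by
      ext K
      rw [Finset.mem_filter]
      exact ⟨fun h => h.2, fun h => ⟨(mem_SS.1 h).1, h⟩⟩
    rw [this]
  have hle : ∀ K ∈ 𝒜.hyps, (if K ∈ SS x y then (1:ℤ) else 0) ≤ p.icount K := by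
    intro K _
    by_cases hmem : K ∈ SS x y
    · rw [if_pos hmem]; exact one_le_icount hpos hmem
    · rw [if_neg hmem]; exact icount_nonneg hpos K
  by_contra hne
  have hlt : (if H ∈ SS x y then (1:ℤ) else 0) < p.icount H :=
    lt_of_le_of_ne (hle H hH) (fun h => hne h.symm)
  have : ∑ K ∈ 𝒜.hyps, (if K ∈ SS x y then (1:ℤ) else 0) < ∑ K ∈ 𝒜.hyps, p.icount K :=
    Finset.sum_lt_sum hle ⟨H, hH, hlt⟩
  rw [hind, ← hsum, hlen] at this
  exact lt_irrefl _ this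

/-- The intersection count is invariant under path equivalence. -/
theorem icount_rel (hsimp : Simplicial 𝒜) {x y : Chamber 𝒜} {p q : Path 𝒜 x y}
    (h : Rel 𝒜 p q) {H : Submodule ℝ A} (hH : H ∈ 𝒜.hyps) : p.icount H = q.icount H := by
  induction h with
  | refl _ => rfl
  | symm _ ih => exact ih.symm
  | trans _ _ ih1 ih2 => exact ih1.trans ih2
  | cancel p =>
      rw [icount_comp, icount_inv]
      show _ = (Path.nil _).icount H
      show p.icount H + -p.icount H = 0
      ring
  | inv _ ih => rw [icount_inv, icount_inv, ih]
  | congr_left h _ ih => rw [icount_comp, icount_comp, ih]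
  | congr_right h _ ih => rw [icount_comp, icount_comp, ih]
  | minpos p q hp hq hpm hqm =>
      rw [icount_eq_indicator hsimp hp hpm hH, icount_eq_indicator hsimp hq hqm hH]

theorem not_crosses_of_icount_zero {x y : Chamber 𝒜} {p : Path 𝒜 x y} (hpos : p.Positive)
    {H : Submodule ℝ A} (hzero : p.icount H = 0) : ¬ p.Crosses H := by
  induction p with
  | nil _ => exact fun h => h
  | @cons x m y s p ih =>
      cases s with
      | pos h =>
          have hp : p.Positive := hpos
          have hrest : 0 ≤ p.icount H := icount_nonneg hp H
          have hhead : (0:ℤ) ≤ (if Separates H x.1 m.1 then Step.sign (Step.pos h) else 0) := by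
            split <;> simp [Step.sign]
          have hz : (if Separates H x.1 m.1 then Step.sign (Step.pos h) else 0) + p.icount H = 0 := hzero
          intro hcr
          rcases hcr with hsep | hcr
          · rw [if_pos hsep] at hz hhead
            show False
            have : Step.sign (Step.pos (𝒜 := 𝒜) h) = 1 := rfl
            rw [this] at hz
            omega
          · exact ih hp (by omega) hcr
      | neg h => exact absurd hpos (by simp [Path.Positive])

end Icount

theorem sgn_bridge {a b c d : ℝ} (h1 : 0 < a * b) (h2 : 0 < c * d) :
    (a * c < 0 ↔ b * d < 0) := by
  constructor
  · intro h
    have h3 : b * c < 0 := sgn_mul_neg_trans (by rw [mul_comm]; exact h1) h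
    have h4 : c * b < 0 := by rw [mul_comm]; exact h3
    have h5 : d * b < 0 := sgn_mul_neg_trans (by rw [mul_comm]; exact h2) h4
    rw [mul_comm]; exact h5
  · intro h
    have h3 : a * d < 0 := sgn_mul_neg_trans h1 h
    have h4 : d * a < 0 := by rw [mul_comm]; exact h3
    have h5 : c * a < 0 := sgn_mul_neg_trans h2 h4
    rw [mul_comm]; exact h5

theorem isAnt_iff {G : Face 𝒜} {x y : Chamber 𝒜} :
    IsAnt G x y ↔ G.vert x ∧ G.vert y ∧
      ∀ H ∈ 𝒜.hyps, (G.B ≤ H ↔ gf H x.pt * gf H y.pt < 0) := by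
  unfold IsAnt
  refine and_congr_right fun _ => and_congr_right fun _ => ?_
  constructor
  · intro h H hH
    rw [← sep_iff hH x y]
    exact h H hH
  · intro h H hH
    rw [sep_iff hH x y]
    exact h H hH

theorem SS_of_isAnt {G : Face 𝒜} {x y : Chamber 𝒜} (h : IsAnt G x y) :
    SS x y = 𝒜.hyps.filter (fun H => G.B ≤ H) := by
  ext H
  rw [mem_SS, Finset.mem_filter]
  exact and_congr_right fun hH => ((isAnt_iff.1 h).2.2 H hH).symm

theorem exists_isAnt (G : Face 𝒜) (x : Chamber 𝒜) (hx : G.vert x) :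
    ∃ y : Chamber 𝒜, IsAnt G x y := by
  obtain ⟨z, hzv, hzflip⟩ := exists_ant_chamber G x
  refine ⟨z, hx, hzv, fun H hH => ?_⟩
  rw [sep_iff hH x z]
  constructor
  · intro hB
    have := hzflip H hH hB
    rw [mul_comm] at this
    exact this
  · intro h
    by_contra hB
    have h1 : 0 < gf H G.pt * gf H x.pt := (vert_iff G x).1 hx H hH hB
    have h2 : 0 < gf H G.pt * gf H z.pt := (vert_iff G z).1 hzv H hH hB
    have h3 : 0 < gf H x.pt * gf H z.pt :=
      sgn_mul_trans (by rw [mul_comm]; exact h1) h2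
    exact absurd h (not_lt.2 h3.le)

theorem positive_comp : ∀ {x y z : Chamber 𝒜} (p : Path 𝒜 x y) (q : Path 𝒜 y z),
    p.Positive → q.Positive → (p.comp q).Positive := by
  intro x y z p
  induction p with
  | nil _ => exact fun q _ hq => hq
  | cons s p ih =>
      intro q hp hq
      cases s with
      | pos h => exact ih q hp hq
      | neg h => exact absurd hp (by simp [Path.Positive])

theorem length_comp : ∀ {x y z : Chamber 𝒜} (p : Path 𝒜 x y) (q : Path 𝒜 y z),
    (p.comp q).length = p.length + q.length := by
  intro x y z p
  induction p with
  | nil _ => intro q; show q.length = 0 + q.length; omega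
  | cons s p ih =>
      intro q
      show (p.comp q).length + 1 = (p.length + 1) + q.length
      rw [ih q]
      omega

/-- A minimal positive gallery between antipodes stays inside the face. -/
theorem inface_of_minpos (hsimp : Simplicial 𝒜) {G : Face 𝒜} :
    ∀ {x y : Chamber 𝒜} (p : Path 𝒜 x y),
      G.vert x → (∀ H ∈ SS x y, G.B ≤ H) → p.Positive → p.Minimal → p.InFace G := by
  intro x y p
  induction p with
  | nil v => exact fun hx _ _ _ => hx
  | @cons x m y s p ih =>
      intro hx hsub hpos hmin
      cases s with
      | pos h =>
          have hp : p.Positive := hpos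
          obtain ⟨H₀, hSSxm⟩ := adj_SS h
          have hH₀hyps : H₀ ∈ 𝒜.hyps := (mem_SS.1 (hSSxm ▸ Finset.mem_singleton_self H₀)).1
          have hsep₀ : Separates H₀ x.1 m.1 :=
            (mem_SS_iff_sep.1 (hSSxm ▸ Finset.mem_singleton_self H₀)).2
          have hH₀mem : H₀ ∈ SS x y := by
            by_contra hnot
            have hind := icount_eq_indicator hsimp (p := Path.cons (Step.pos h) p)
              hpos hmin hH₀hyps
            rw [if_neg hnot] at hind
            have hrest := icount_nonneg hp H₀
            have : (Path.cons (Step.pos h) p).icount H₀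
                = (if Separates H₀ x.1 m.1 then (1:ℤ) else 0) + p.icount H₀ := rfl
            rw [if_pos hsep₀] at this
            omega
          have hB₀ : G.B ≤ H₀ := hsub H₀ hH₀mem
          have hSSmy : SS m y = (SS x y).erase H₀ := SS_step hSSxm hH₀mem
          have hmvert : G.vert m := by
            rw [vert_iff]
            intro H hH hB
            have hne0 : H ≠ H₀ := fun h' => hB (h' ▸ hB₀)
            have hnot : H ∉ SS x m := by
              rw [hSSxm, Finset.mem_singleton]; exact hne0
            have h1 : 0 < gf H x.pt * gf H m.pt := by
              rcases lt_trichotomy (gf H x.pt * gf H m.pt) 0 with h' | h' | h'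
              · exact absurd (mem_SS.2 ⟨hH, h'⟩) hnot
              · exact absurd h' (mul_ne_zero (gf_ne_zero_of_cmpl hH x.pt_cmpl)
                  (gf_ne_zero_of_cmpl hH m.pt_cmpl))
              · exact h'
            have h2 : 0 < gf H G.pt * gf H x.pt := (vert_iff G x).1 hx H hH hB
            exact sgn_mul_trans h2 h1
          have hlen : (Path.cons (Step.pos h) p).length = (SS x y).card :=
            (minimal_iff hsimp).1 hmin
          have hlen' : p.length = (SS m y).card := by
            have h1 : (Path.cons (Step.pos h) p).length = p.length + 1 := rfl
            have h2 : (SS m y).card = (SS x y).card - 1 := by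
              rw [hSSmy, Finset.card_erase_of_mem hH₀mem]
            have h3 : 1 ≤ (SS x y).card := Finset.card_pos.2 ⟨H₀, hH₀mem⟩
            omega
          have hpmin : p.Minimal := minimal_of_length_eq hlen'
          have hsub' : ∀ H ∈ SS m y, G.B ≤ H := by
            intro H hH
            rw [hSSmy] at hH
            exact hsub H (Finset.mem_of_mem_erase hH)
          exact ⟨hx, ih hmvert hsub' hp hpmin⟩
      | neg h => exact absurd hpos (by simp [Path.Positive])

namespace Mor

theorem comp_assoc' {w x y z : Chamber 𝒜} (f : Mor 𝒜 w x) (g : Mor 𝒜 x y)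
    (h : Mor 𝒜 y z) : (f.comp g).comp h = f.comp (g.comp h) := by
  refine Quotient.inductionOn₃ f g h fun p q r => ?_
  show (⟦(p.comp q).comp r⟧ : Mor 𝒜 w z) = ⟦p.comp (q.comp r)⟧
  rw [Path.comp_assoc]

theorem symm_mk {x y : Chamber 𝒜} (p : Path 𝒜 x y) :
    Mor.symm (⟦p⟧ : Mor 𝒜 x y) = ⟦p.inv⟧ := rfl

theorem comp_symm_self {x y : Chamber 𝒜} (p : Path 𝒜 x y) :
    Mor.comp (⟦p⟧ : Mor 𝒜 x y) (Mor.symm (⟦p⟧ : Mor 𝒜 x y)) = ⟦Path.nil x⟧ := by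
  rw [symm_mk, comp_mk]
  exact Quotient.sound (Rel.cancel p)

theorem cancel_right {x y z : Chamber 𝒜} (u : Mor 𝒜 x y) (q : Path 𝒜 y z) :
    Mor.comp (u.comp ⟦q⟧) (Mor.symm (⟦q⟧ : Mor 𝒜 y z)) = u := by
  refine ((comp_assoc' u _ _).trans (congrArg (Mor.comp u) (comp_symm_self q))).trans ?_
  refine Quotient.inductionOn u fun p => ?_
  show (⟦p.comp (Path.nil y)⟧ : Mor 𝒜 x y) = ⟦p⟧
  rw [Path.comp_nil]

end Mor

/-- Two minimal positive paths with the same endpoints give the same morphism. -/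
theorem mor_eq_of_minpos {x y : Chamber 𝒜} {p q : Path 𝒜 x y}
    (hp : p.Positive) (hq : q.Positive) (hpm : p.Minimal) (hqm : q.Minimal) :
    (⟦p⟧ : Mor 𝒜 x y) = ⟦q⟧ :=
  Quotient.sound (Rel.minpos p q hp hq hpm hqm)

section Main

variable {B : Submodule ℝ A} {F F' F₀ : Face 𝒜}

/-- membership in `SS` through products. -/
theorem mem_SS_pos {v w : Chamber 𝒜} {H : Submodule ℝ A} (hH : H ∈ 𝒜.hyps)
    (hnot : H ∉ SS v w) : 0 < gf H v.pt * gf H w.pt := by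
  rcases lt_trichotomy (gf H v.pt * gf H w.pt) 0 with h' | h' | h'
  · exact absurd (mem_SS.2 ⟨hH, h'⟩) hnot
  · exact absurd h' (mul_ne_zero (gf_ne_zero_of_cmpl hH v.pt_cmpl)
      (gf_ne_zero_of_cmpl hH w.pt_cmpl))
  · exact h'

theorem not_mem_SS_of_pos {v w : Chamber 𝒜} {H : Submodule ℝ A}
    (h : 0 < gf H v.pt * gf H w.pt) : H ∉ SS v w := by
  intro hmem
  exact absurd (mem_SS.1 hmem).2 (not_lt.2 h.le)

/-- The separating set of a parallel pair is the set of flipped hyperplanes. -/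
theorem SS_parTrans (hFB : F.B = B) (hF'B : F'.B = B) (hne : F ≠ F')
    (hFF₀ : F.le F₀) (hF'F₀ : F'.le F₀)
    (hdim : Module.finrank ℝ F.B = Module.finrank ℝ F₀.B + 1)
    {x x' : Chamber 𝒜} (hpt : ParTrans F F' x x') :
    SS x x' = 𝒜.hyps.filter fun H => F₀.B ≤ H ∧ ¬ F.B ≤ H := by
  obtain ⟨hBB, hx, hx', hnosep⟩ := hpt
  have hBB' : F.B = F'.B := hFB.trans hF'B.symm
  ext H
  rw [mem_SS, Finset.mem_filter]
  refine and_congr_right fun hH => ?_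
  by_cases hB : F.B ≤ H
  · constructor
    · intro hs
      exact absurd ((sep_iff hH x x').2 hs) (hnosep H hH hB)
    · rintro ⟨_, hB'⟩
      exact absurd hB hB'
  · have h1 : 0 < gf H F.pt * gf H x.pt := (vert_iff F x).1 hx H hH hB
    have h2 : 0 < gf H F'.pt * gf H x'.pt :=
      (vert_iff F' x').1 hx' H hH (hBB' ▸ hB)
    have hbr := sgn_bridge (by rw [mul_comm]; exact h1) (by rw [mul_comm]; exact h2)
    constructor
    · intro hs
      exact ⟨(flip_iff hBB' hne hFF₀ hF'F₀ hx hdim hH hB).1 (hbr.1 hs), hB⟩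
    · rintro ⟨h0, _⟩
      exact hbr.2 ((flip_iff hBB' hne hFF₀ hF'F₀ hx hdim hH hB).2 h0)

/-- `Ant(x, F₀)` is a vertex of `F'`. -/
theorem vertF'_of_ant (hFB : F.B = B) (hF'B : F'.B = B) (hne : F ≠ F')
    (hFF₀ : F.le F₀) (hF'F₀ : F'.le F₀)
    (hdim : Module.finrank ℝ F.B = Module.finrank ℝ F₀.B + 1)
    {x yy : Chamber 𝒜} (hx : F.vert x) (hant : IsAnt F₀ x yy) :
    F'.vert yy := by
  have hBB' : F.B = F'.B := hFB.trans hF'B.symm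
  rw [vert_iff]
  intro H hH hB'
  have hB : ¬ F.B ≤ H := hBB' ▸ hB'
  have hiff := (isAnt_iff.1 hant).2.2 H hH
  by_cases h0 : F₀.B ≤ H
  · have hflip : gf H F.pt * gf H F'.pt < 0 :=
      (flip_iff hBB' hne hFF₀ hF'F₀ hx hdim hH hB).2 h0
    have hxy : gf H x.pt * gf H yy.pt < 0 := hiff.1 h0
    have h1 : 0 < gf H F.pt * gf H x.pt := (vert_iff F x).1 hx H hH hB
    have h2 : gf H x.pt * gf H F'.pt < 0 :=
      sgn_mul_neg_trans (by rw [mul_comm]; exact h1) hflip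
    exact sgn_neg_neg (by rw [mul_comm]; exact h2) hxy
  · have hagree : 0 < gf H F.pt * gf H F'.pt :=
      flip_agree hBB' hFF₀ hF'F₀ hx hH h0
    have hnoxy : ¬ gf H x.pt * gf H yy.pt < 0 := fun h => h0 (hiff.2 h)
    have hxy : 0 < gf H x.pt * gf H yy.pt := by
      rcases lt_trichotomy (gf H x.pt * gf H yy.pt) 0 with h' | h' | h'
      · exact absurd h' hnoxy
      · exact absurd h' (mul_ne_zero (gf_ne_zero_of_cmpl hH x.pt_cmpl)
          (gf_ne_zero_of_cmpl hH yy.pt_cmpl))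
      · exact h'
    have h1 : 0 < gf H x.pt * gf H F.pt := by
      rw [mul_comm]; exact (vert_iff F x).1 hx H hH hB
    have h2 : 0 < gf H F'.pt * gf H x.pt :=
      sgn_mul_trans (by rw [mul_comm]; exact hagree) (by rw [mul_comm]; exact h1)
    exact sgn_mul_trans h2 hxy

/-- Separating set between `x` and the `F'`-antipode `v'` of `Ant(x,F₀)`. -/
theorem SS_x_v' (hFB : F.B = B) (hF'B : F'.B = B)
    (hFF₀ : F.le F₀)
    {x yy v' : Chamber 𝒜} (hx : F.vert x) (hant : IsAnt F₀ x yy)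
    (hant' : IsAnt F' v' yy) :
    SS x v' = 𝒜.hyps.filter fun H => F₀.B ≤ H ∧ ¬ F.B ≤ H := by
  have hBB' : F.B = F'.B := hFB.trans hF'B.symm
  ext H
  rw [mem_SS, Finset.mem_filter]
  refine and_congr_right fun hH => ?_
  have hiff := (isAnt_iff.1 hant).2.2 H hH
  have hiff' := (isAnt_iff.1 hant').2.2 H hH
  by_cases hB : F.B ≤ H
  · have h0 : F₀.B ≤ H := B_trans_le hFF₀ hx hH hB
    have hv'yy : gf H v'.pt * gf H yy.pt < 0 := hiff'.1 (hBB' ▸ hB)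
    have hxyy : gf H x.pt * gf H yy.pt < 0 := hiff.1 h0
    have hpos : 0 < gf H x.pt * gf H v'.pt :=
      sgn_neg_neg hxyy (by rw [mul_comm]; exact hv'yy)
    constructor
    · intro h; exact absurd h (not_lt.2 hpos.le)
    · rintro ⟨_, hB'⟩; exact absurd hB hB'
  · have hnov' : ¬ gf H v'.pt * gf H yy.pt < 0 := fun h => (hBB' ▸ hB) (hiff'.2 h)
    have hv'yy : 0 < gf H v'.pt * gf H yy.pt := by
      rcases lt_trichotomy (gf H v'.pt * gf H yy.pt) 0 with h' | h' | h'
      · exact absurd h' hnov'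
      · exact absurd h' (mul_ne_zero (gf_ne_zero_of_cmpl hH v'.pt_cmpl)
          (gf_ne_zero_of_cmpl hH yy.pt_cmpl))
      · exact h'
    constructor
    · intro hs
      refine ⟨?_, hB⟩
      apply hiff.2
      have h1 : gf H v'.pt * gf H x.pt < 0 := by rw [mul_comm]; exact hs
      have h2 : gf H yy.pt * gf H x.pt < 0 :=
        sgn_mul_neg_trans (by rw [mul_comm]; exact hv'yy) h1
      rw [mul_comm]; exact h2
    · rintro ⟨h0, _⟩
      have hxyy : gf H x.pt * gf H yy.pt < 0 := hiff.1 h0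
      have h2 : gf H v'.pt * gf H x.pt < 0 :=
        sgn_mul_neg_trans hv'yy (by rw [mul_comm]; exact hxyy)
      rw [mul_comm]; exact h2

/-- `Ant(x, F₀)` seen from the parallel translate `x'` is the `F'`-antipode. -/
theorem isAnt_F'_of (hFB : F.B = B) (hF'B : F'.B = B) (hne : F ≠ F')
    (hFF₀ : F.le F₀) (hF'F₀ : F'.le F₀)
    (hdim : Module.finrank ℝ F.B = Module.finrank ℝ F₀.B + 1)
    {x x' yy : Chamber 𝒜} (hpt : ParTrans F F' x x')
    (hant : IsAnt F₀ x yy) : IsAnt F' x' yy := by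
  have hBB' : F.B = F'.B := hFB.trans hF'B.symm
  have hSSxx' := SS_parTrans hFB hF'B hne hFF₀ hF'F₀ hdim hpt
  obtain ⟨hBB, hx, hx', hnosep⟩ := hpt
  refine ⟨hx', vertF'_of_ant hFB hF'B hne hFF₀ hF'F₀ hdim hx hant, fun H hH => ?_⟩
  rw [sep_iff hH]
  have hiff := (isAnt_iff.1 hant).2.2 H hH
  have hxx' : H ∈ SS x x' ↔ (F₀.B ≤ H ∧ ¬ F.B ≤ H) := by
    rw [hSSxx', Finset.mem_filter]
    exact ⟨fun h => h.2, fun h => ⟨hH, h⟩⟩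
  by_cases hB : F.B ≤ H
  · have h0 : F₀.B ≤ H := B_trans_le hFF₀ hx hH hB
    have hxyy : gf H x.pt * gf H yy.pt < 0 := hiff.1 h0
    have hnx : H ∉ SS x x' := fun h => (hxx'.1 h).2 hB
    have hxxpos : 0 < gf H x.pt * gf H x'.pt := mem_SS_pos hH hnx
    constructor
    · intro _
      exact sgn_mul_neg_trans (by rw [mul_comm]; exact hxxpos) hxyy
    · intro _
      rw [← hBB']; exact hB
  · have hB' : ¬ F'.B ≤ H := hBB' ▸ hB
    constructor
    · intro h; exact absurd h hB'
    · intro h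
      exfalso
      by_cases h0 : F₀.B ≤ H
      · have hmem : H ∈ SS x x' := hxx'.2 ⟨h0, hB⟩
        have hxx : gf H x.pt * gf H x'.pt < 0 := (mem_SS.1 hmem).2
        have : 0 < gf H x'.pt * gf H yy.pt :=
          sgn_neg_neg (by rw [mul_comm]; exact hxx) (hiff.1 h0)
        exact absurd h (not_lt.2 this.le)
      · have hnx : H ∉ SS x x' := fun hmem => h0 (hxx'.1 hmem).1
        have hxxpos : 0 < gf H x.pt * gf H x'.pt := mem_SS_pos hH hnx
        have hnoxy : ¬ gf H x.pt * gf H yy.pt < 0 := fun hh => h0 (hiff.2 hh)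
        have hxyy : 0 < gf H x.pt * gf H yy.pt := by
          rcases lt_trichotomy (gf H x.pt * gf H yy.pt) 0 with h' | h' | h'
          · exact absurd h' hnoxy
          · exact absurd h' (mul_ne_zero (gf_ne_zero_of_cmpl hH x.pt_cmpl)
              (gf_ne_zero_of_cmpl hH yy.pt_cmpl))
          · exact h'
        have : 0 < gf H x'.pt * gf H yy.pt :=
          sgn_mul_trans (by rw [mul_comm]; exact hxxpos) hxyy
        exact absurd h (not_lt.2 this.le)

/-- Cardinality splitting of the separating sets. -/
theorem card_split (hFF₀ : F.le F₀) {x : Chamber 𝒜} (hx : F.vert x) :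
    (𝒜.hyps.filter fun H => F₀.B ≤ H).card
      = (𝒜.hyps.filter fun H => F.B ≤ H).card
        + (𝒜.hyps.filter fun H => F₀.B ≤ H ∧ ¬ F.B ≤ H).card := by
  have h1 : (𝒜.hyps.filter fun H => F₀.B ≤ H).filter (fun H => F.B ≤ H)
      = 𝒜.hyps.filter fun H => F.B ≤ H := by
    ext H
    simp only [Finset.mem_filter]
    constructor
    · rintro ⟨⟨h1, _⟩, h3⟩; exact ⟨h1, h3⟩
    · rintro ⟨h1, h2⟩; exact ⟨⟨h1, B_trans_le hFF₀ hx h1 h2⟩, h2⟩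
  have h2 : (𝒜.hyps.filter fun H => F₀.B ≤ H).filter (fun H => ¬ F.B ≤ H)
      = 𝒜.hyps.filter fun H => F₀.B ≤ H ∧ ¬ F.B ≤ H := by
    ext H
    simp only [Finset.mem_filter]
    tauto
  have h3 := Finset.card_filter_add_card_filter_not
    (s := 𝒜.hyps.filter fun H => F₀.B ≤ H) (p := fun H => F.B ≤ H)
  rw [h1, h2] at h3
  omega

theorem parTrans_of_ant (hFB : F.B = B) (hF'B : F'.B = B)
    {x x' z z' : Chamber 𝒜} (hpt : ParTrans F F' x x')
    (hant1 : IsAnt F x z) (hant1' : IsAnt F' x' z') : ParTrans F F' z z' := by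
  have hBB' : F.B = F'.B := hFB.trans hF'B.symm
  refine ⟨hBB', hant1.2.1, hant1'.2.1, fun H hH hB => ?_⟩
  have hxz : gf H x.pt * gf H z.pt < 0 := ((isAnt_iff.1 hant1).2.2 H hH).1 hB
  have hxz' : gf H x'.pt * gf H z'.pt < 0 :=
    ((isAnt_iff.1 hant1').2.2 H hH).1 (hBB' ▸ hB)
  have hxx : 0 < gf H x.pt * gf H x'.pt :=
    (not_sep_iff hH x x').1 (hpt.2.2.2 H hH hB)
  have h1 : gf H x'.pt * gf H z.pt < 0 :=
    sgn_mul_neg_trans (by rw [mul_comm]; exact hxx) hxz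
  have h2 : 0 < gf H z.pt * gf H z'.pt :=
    sgn_neg_neg (by rw [mul_comm]; exact h1) hxz'
  rw [not_sep_iff hH]
  exact h2

theorem SS_x_z' (hFB : F.B = B) (hF'B : F'.B = B) (hne : F ≠ F')
    (hFF₀ : F.le F₀) (hF'F₀ : F'.le F₀)
    (hdim : Module.finrank ℝ F.B = Module.finrank ℝ F₀.B + 1)
    {x x' z' : Chamber 𝒜} (hpt : ParTrans F F' x x') (hant' : IsAnt F' x' z') :
    SS x z' = 𝒜.hyps.filter fun H => F₀.B ≤ H := by
  have hBB' : F.B = F'.B := hFB.trans hF'B.symm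
  have hSSxx' := SS_parTrans hFB hF'B hne hFF₀ hF'F₀ hdim hpt
  have hx : F.vert x := hpt.2.1
  ext H
  rw [mem_SS, Finset.mem_filter]
  refine and_congr_right fun hH => ?_
  have hiff' := (isAnt_iff.1 hant').2.2 H hH
  by_cases hB : F.B ≤ H
  · have h0 : F₀.B ≤ H := B_trans_le hFF₀ hx hH hB
    have hxx : 0 < gf H x.pt * gf H x'.pt :=
      (not_sep_iff hH x x').1 (hpt.2.2.2 H hH hB)
    have hxz' : gf H x'.pt * gf H z'.pt < 0 := hiff'.1 (hBB' ▸ hB)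
    have : gf H x.pt * gf H z'.pt < 0 := sgn_mul_neg_trans hxx hxz'
    exact ⟨fun _ => h0, fun _ => this⟩
  · have hnxz' : ¬ gf H x'.pt * gf H z'.pt < 0 := fun h => (hBB' ▸ hB) (hiff'.2 h)
    have hxz' : 0 < gf H x'.pt * gf H z'.pt := by
      rcases lt_trichotomy (gf H x'.pt * gf H z'.pt) 0 with h' | h' | h'
      · exact absurd h' hnxz'
      · exact absurd h' (mul_ne_zero (gf_ne_zero_of_cmpl hH x'.pt_cmpl)
          (gf_ne_zero_of_cmpl hH z'.pt_cmpl))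
      · exact h'
    have hmemiff : H ∈ SS x x' ↔ (F₀.B ≤ H ∧ ¬ F.B ≤ H) := by
      rw [hSSxx', Finset.mem_filter]
      exact ⟨fun h => h.2, fun h => ⟨hH, h⟩⟩
    constructor
    · intro hs
      have h1 : gf H z'.pt * gf H x.pt < 0 := by rw [mul_comm]; exact hs
      have h2 : gf H x'.pt * gf H x.pt < 0 :=
        sgn_mul_neg_trans hxz' h1
      exact (hmemiff.1 (mem_SS.2 ⟨hH, by rw [mul_comm]; exact h2⟩)).1
    · intro h0
      have hmem : H ∈ SS x x' := hmemiff.2 ⟨h0, hB⟩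
      have hxx : gf H x.pt * gf H x'.pt < 0 := (mem_SS.1 hmem).2
      have h2 : gf H z'.pt * gf H x.pt < 0 :=
        sgn_mul_neg_trans (by rw [mul_comm]; exact hxz') (by rw [mul_comm]; exact hxx)
      rw [mul_comm]; exact h2

theorem SS_z_x' (hFB : F.B = B) (hF'B : F'.B = B) (hne : F ≠ F')
    (hFF₀ : F.le F₀) (hF'F₀ : F'.le F₀)
    (hdim : Module.finrank ℝ F.B = Module.finrank ℝ F₀.B + 1)
    {x x' z : Chamber 𝒜} (hpt : ParTrans F F' x x') (hant : IsAnt F x z) :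
    SS z x' = 𝒜.hyps.filter fun H => F₀.B ≤ H := by
  have hSSxx' := SS_parTrans hFB hF'B hne hFF₀ hF'F₀ hdim hpt
  have hx : F.vert x := hpt.2.1
  ext H
  rw [mem_SS, Finset.mem_filter]
  refine and_congr_right fun hH => ?_
  have hiff := (isAnt_iff.1 hant).2.2 H hH
  by_cases hB : F.B ≤ H
  · have h0 : F₀.B ≤ H := B_trans_le hFF₀ hx hH hB
    have hxx : 0 < gf H x.pt * gf H x'.pt :=
      (not_sep_iff hH x x').1 (hpt.2.2.2 H hH hB)
    have hxz : gf H x.pt * gf H z.pt < 0 := hiff.1 hB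
    have h1 : gf H x'.pt * gf H z.pt < 0 :=
      sgn_mul_neg_trans (by rw [mul_comm]; exact hxx) hxz
    have : gf H z.pt * gf H x'.pt < 0 := by rw [mul_comm]; exact h1
    exact ⟨fun _ => h0, fun _ => this⟩
  · have hnxz : ¬ gf H x.pt * gf H z.pt < 0 := fun h => hB (hiff.2 h)
    have hxz : 0 < gf H x.pt * gf H z.pt := by
      rcases lt_trichotomy (gf H x.pt * gf H z.pt) 0 with h' | h' | h'
      · exact absurd h' hnxz
      · exact absurd h' (mul_ne_zero (gf_ne_zero_of_cmpl hH x.pt_cmpl)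
          (gf_ne_zero_of_cmpl hH z.pt_cmpl))
      · exact h'
    have hmemiff : H ∈ SS x x' ↔ (F₀.B ≤ H ∧ ¬ F.B ≤ H) := by
      rw [hSSxx', Finset.mem_filter]
      exact ⟨fun h => h.2, fun h => ⟨hH, h⟩⟩
    constructor
    · intro hs
      have h2 : gf H x.pt * gf H x'.pt < 0 :=
        sgn_mul_neg_trans hxz hs
      exact (hmemiff.1 (mem_SS.2 ⟨hH, h2⟩)).1
    · intro h0
      have hmem : H ∈ SS x x' := hmemiff.2 ⟨h0, hB⟩
      have hxx : gf H x.pt * gf H x'.pt < 0 := (mem_SS.1 hmem).2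
      exact sgn_mul_neg_trans (by rw [mul_comm]; exact hxz) hxx

namespace Mor

theorem id_comp {x y : Chamber 𝒜} (u : Mor 𝒜 x y) :
    Mor.comp (⟦Path.nil x⟧ : Mor 𝒜 x x) u = u := by
  refine Quotient.inductionOn u fun p => ?_
  show (⟦(Path.nil x).comp p⟧ : Mor 𝒜 x y) = ⟦p⟧
  rw [Path.nil_comp]

theorem comp_id {x y : Chamber 𝒜} (u : Mor 𝒜 x y) :
    Mor.comp u (⟦Path.nil y⟧ : Mor 𝒜 y y) = u := by
  refine Quotient.inductionOn u fun p => ?_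
  show (⟦p.comp (Path.nil y)⟧ : Mor 𝒜 x y) = ⟦p⟧
  rw [Path.comp_nil]

theorem mul_def {x : Chamber 𝒜} (a b : Mor 𝒜 x x) : a * b = a.comp b := rfl

theorem one_def {x : Chamber 𝒜} : (1 : Mor 𝒜 x x) = ⟦Path.nil x⟧ := rfl

end Mor

/-- Conjugation by a morphism intertwining two elements extends to powers. -/
theorem pow_conj {x x' : Chamber 𝒜} (a : Mor 𝒜 x x) (b : Mor 𝒜 x' x')
    (u : Mor 𝒜 x x') (key : a.comp u = u.comp b) :
    ∀ m : ℕ, (a ^ m).comp u = u.comp (b ^ m) := by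
  intro m
  induction m with
  | zero =>
      rw [pow_zero, pow_zero, Mor.one_def, Mor.one_def, Mor.id_comp, Mor.comp_id]
  | succ k ih =>
      rw [pow_succ, pow_succ, Mor.mul_def, Mor.mul_def, Mor.comp_assoc', key, ← Mor.comp_assoc',
        ih, Mor.comp_assoc']

end Main

end DelGrpd

open DelGrpd in
/-- Let `F` and `F'` be adjacent parallel faces of `Z(𝒜)` dual to `B`,
both contained in the face `F₀` with `dim F₀ = dim F + 1`.  Then:
(1) for any vertex `x ∈ F`, the antipodal vertex `yy = Ant(x, F₀)` lies in `F'` and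
`Δ_x(F₀) (Δ^{yy}(F'))⁻¹` is an elementary `B`-segment; conversely every elementary
`B`-segment from `F` to `F'` has this form;
(2) if `u` is an elementary `B`-segment with source `x` and target `x'`, then
`(Δ_x(F))^k u = u (Δ_{x'}(F'))^k` for every positive even integer `k = 2m`;
(3) a positive path representing an elementary `B`-segment crosses no hyperplane dual to an
edge of `F`. -/
theorem statement_12 {A : Type} [NormedAddCommGroup A] [InnerProductSpace ℝ A]
    [FiniteDimensional ℝ A] (𝒜 : RealArr A) (hsimp : Simplicial 𝒜)
    (B : Submodule ℝ A) (F F' F₀ : Face 𝒜)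
    (hFB : F.B = B) (hF'B : F'.B = B) (hne : F ≠ F')
    (hFF₀ : F.le F₀) (hF'F₀ : F'.le F₀)
    (hdim : Module.finrank ℝ F.B = Module.finrank ℝ F₀.B + 1) :
    -- (1) elementary segments are exactly `Δ_x(F₀) (Δ^{yy}(F'))⁻¹`
    ((∀ (x yy : Chamber 𝒜), F.vert x → IsAnt F₀ x yy →
        F'.vert yy ∧
        ∀ (v' : Chamber 𝒜) (δ₀ : Mor 𝒜 x yy) (δ' : Mor 𝒜 v' yy),
          IsGarside F₀ δ₀ → IsGarside F' δ' →
          IsElemSeg F F' (δ₀.comp δ'.symm)) ∧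
      (∀ (x x' : Chamber 𝒜) (u : Mor 𝒜 x x'), IsElemSeg F F' u →
        ∃ (yy : Chamber 𝒜) (δ₀ : Mor 𝒜 x yy) (δ' : Mor 𝒜 x' yy),
          IsGarside F₀ δ₀ ∧ IsGarside F' δ' ∧ u = δ₀.comp δ'.symm)) ∧
    -- (2) elementary segments conjugate even powers of the Garside elements
    (∀ (x x' : Chamber 𝒜) (u : Mor 𝒜 x x'), IsElemSeg F F' u →
      ∀ (z z' : Chamber 𝒜) (δ₁ : Mor 𝒜 x z) (δ₂ : Mor 𝒜 z x)
        (δ₁' : Mor 𝒜 x' z') (δ₂' : Mor 𝒜 z' x'),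
        IsGarside F δ₁ → IsGarside F δ₂ → IsGarside F' δ₁' → IsGarside F' δ₂' →
        ∀ m : ℕ, 0 < m →
          ((δ₁.comp δ₂) ^ m).comp u = u.comp ((δ₁'.comp δ₂') ^ m)) ∧
    -- (3) elementary segments do not cross hyperplanes dual to edges of `F`
    (∀ (x x' : Chamber 𝒜) (u : Mor 𝒜 x x'), IsElemSeg F F' u →
      ∀ p : Path 𝒜 x x', p.Positive → u = ⟦p⟧ →
        ∀ H : Submodule ℝ A, DualEdge F H → ¬ p.Crosses H) := by
  classical
  have hBB' : F.B = F'.B := hFB.trans hF'B.symm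
  have hAdjF : AdjFaces F F' := ⟨hne, hBB', F₀, hFF₀, hF'F₀, hdim⟩
  have hfun : 𝒜.hyps.filter (fun H => F'.B ≤ H) = 𝒜.hyps.filter fun H => F.B ≤ H := by
    ext H
    simp only [Finset.mem_filter]
    rw [hBB']
  refine ⟨⟨?_, ?_⟩, ?_, ?_⟩
  · -- (1) forward direction
    intro x yy hx hant
    refine ⟨vertF'_of_ant hFB hF'B hne hFF₀ hF'F₀ hdim hx hant, ?_⟩
    intro v' δ₀ δ' hδ₀ hδ'
    obtain ⟨hant₀, q₀, hq₀pos, hq₀min, hq₀in, hδ₀eq⟩ := hδ₀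
    obtain ⟨hant', q', hq'pos, hq'min, hq'in, hδ'eq⟩ := hδ'
    have hSSxv' : SS x v' = 𝒜.hyps.filter fun H => F₀.B ≤ H ∧ ¬ F.B ≤ H :=
      SS_x_v' hFB hF'B hFF₀ hx hant hant'
    have hSSv'yy : SS v' yy = 𝒜.hyps.filter fun H => F.B ≤ H := by
      rw [SS_of_isAnt hant', hfun]
    have hSSxyy : SS x yy = 𝒜.hyps.filter fun H => F₀.B ≤ H := SS_of_isAnt hant
    have hpt : ParTrans F F' x v' := by
      refine ⟨hBB', hx, hant'.1, fun H hH hB => ?_⟩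
      intro hsep
      have hmem : H ∈ SS x v' := mem_SS_iff_sep.2 ⟨hH, hsep⟩
      rw [hSSxv', Finset.mem_filter] at hmem
      exact hmem.2.2 hB
    obtain ⟨p, hppos, hplen⟩ := exists_gallery hsimp (SS x v').card x v' rfl
    have hpmin : p.Minimal := minimal_of_length_eq hplen
    refine ⟨hAdjF, hpt, p, hppos, hpmin, ?_⟩
    have hcomp_min : (p.comp q').Minimal := by
      apply minimal_of_length_eq
      have hcs := card_split (F := F) (F₀ := F₀) hFF₀ hx
      rw [length_comp, hplen, (minimal_iff hsimp).1 hq'min, hSSxv', hSSv'yy, hSSxyy]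
      omega
    have heq : (⟦q₀⟧ : Mor 𝒜 x yy) = ⟦p.comp q'⟧ :=
      mor_eq_of_minpos hq₀pos (positive_comp p q' hppos hq'pos) hq₀min hcomp_min
    rw [hδ₀eq, hδ'eq, heq, ← Mor.comp_mk]; exact Mor.cancel_right _ _
  · -- (1) converse direction
    intro x x' u hseg
    obtain ⟨hadjf, hpt, p, hppos, hpmin, hueq⟩ := hseg
    have hx : F.vert x := hpt.2.1
    have hx' : F'.vert x' := hpt.2.2.1
    obtain ⟨yy, hant⟩ := exists_isAnt F₀ x (hFF₀ x hx)
    have hant' : IsAnt F' x' yy := isAnt_F'_of hFB hF'B hne hFF₀ hF'F₀ hdim hpt hant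
    obtain ⟨q₀, hq₀pos, hq₀len⟩ := exists_gallery hsimp (SS x yy).card x yy rfl
    have hq₀min := minimal_of_length_eq hq₀len
    obtain ⟨q', hq'pos, hq'len⟩ := exists_gallery hsimp (SS x' yy).card x' yy rfl
    have hq'min := minimal_of_length_eq hq'len
    have hSSxyy : SS x yy = 𝒜.hyps.filter fun H => F₀.B ≤ H := SS_of_isAnt hant
    have hSSx'yy : SS x' yy = 𝒜.hyps.filter fun H => F.B ≤ H := by
      rw [SS_of_isAnt hant', hfun]
    have hq₀in : q₀.InFace F₀ :=
      inface_of_minpos hsimp q₀ (hFF₀ x hx)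
        (fun H hH => by rw [hSSxyy] at hH; exact (Finset.mem_filter.1 hH).2) hq₀pos hq₀min
    have hq'in : q'.InFace F' :=
      inface_of_minpos hsimp q' hx'
        (fun H hH => by
          rw [hSSx'yy] at hH
          exact hBB' ▸ (Finset.mem_filter.1 hH).2) hq'pos hq'min
    refine ⟨yy, ⟦q₀⟧, ⟦q'⟧, ⟨hant, q₀, hq₀pos, hq₀min, hq₀in, rfl⟩,
      ⟨hant', q', hq'pos, hq'min, hq'in, rfl⟩, ?_⟩
    have hSSxx' := SS_parTrans hFB hF'B hne hFF₀ hF'F₀ hdim hpt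
    have hcomp_min : (p.comp q').Minimal := by
      apply minimal_of_length_eq
      have hcs := card_split (F := F) (F₀ := F₀) hFF₀ hx
      rw [length_comp, (minimal_iff hsimp).1 hpmin, hq'len, hSSxx', hSSx'yy, hSSxyy]
      omega
    have heq : (⟦q₀⟧ : Mor 𝒜 x yy) = ⟦p.comp q'⟧ :=
      mor_eq_of_minpos hq₀pos (positive_comp p q' hppos hq'pos) hq₀min hcomp_min
    rw [hueq, heq, ← Mor.comp_mk]; exact (Mor.cancel_right _ _).symm
  · -- (2) the conjugation identity
    intro x x' u hseg z z' δ₁ δ₂ δ₁' δ₂' h1 h2 h1' h2' m hm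
    obtain ⟨hadjf, hpt, p, hppos, hpmin, hueq⟩ := hseg
    have hx : F.vert x := hpt.2.1
    obtain ⟨hant1, q1, hq1pos, hq1min, hq1in, hq1eq⟩ := h1
    obtain ⟨hant2, q2, hq2pos, hq2min, hq2in, hq2eq⟩ := h2
    obtain ⟨hant1', q1', hq1'pos, hq1'min, hq1'in, hq1'eq⟩ := h1'
    obtain ⟨hant2', q2', hq2'pos, hq2'min, hq2'in, hq2'eq⟩ := h2'
    have hpt2 : ParTrans F F' z z' := parTrans_of_ant hFB hF'B hpt hant1 hant1'
    obtain ⟨p2, hp2pos, hp2len⟩ := exists_gallery hsimp (SS z z').card z z' rfl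
    have hp2min := minimal_of_length_eq hp2len
    have hSSxz : SS x z = 𝒜.hyps.filter fun H => F.B ≤ H := SS_of_isAnt hant1
    have hSSzx : SS z x = 𝒜.hyps.filter fun H => F.B ≤ H := SS_of_isAnt hant2
    have hSSx'z' : SS x' z' = 𝒜.hyps.filter fun H => F.B ≤ H := by
      rw [SS_of_isAnt hant1', hfun]
    have hSSz'x' : SS z' x' = 𝒜.hyps.filter fun H => F.B ≤ H := by
      rw [SS_of_isAnt hant2', hfun]
    have hSSxx' := SS_parTrans hFB hF'B hne hFF₀ hF'F₀ hdim hpt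
    have hSSzz' := SS_parTrans hFB hF'B hne hFF₀ hF'F₀ hdim hpt2
    have hSSxz' : SS x z' = 𝒜.hyps.filter fun H => F₀.B ≤ H :=
      SS_x_z' hFB hF'B hne hFF₀ hF'F₀ hdim hpt hant1'
    have hSSzx' : SS z x' = 𝒜.hyps.filter fun H => F₀.B ≤ H :=
      SS_z_x' hFB hF'B hne hFF₀ hF'F₀ hdim hpt hant1
    have hK1 : δ₁.comp ⟦p2⟧ = u.comp δ₁' := by
      rw [hq1eq, hueq, hq1'eq, Mor.comp_mk, Mor.comp_mk]
      apply mor_eq_of_minpos (positive_comp _ _ hq1pos hp2pos)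
        (positive_comp _ _ hppos hq1'pos)
      · apply minimal_of_length_eq
        have hcs := card_split (F := F) (F₀ := F₀) hFF₀ hx
        rw [length_comp, (minimal_iff hsimp).1 hq1min, hp2len, hSSxz, hSSzz', hSSxz']
        omega
      · apply minimal_of_length_eq
        have hcs := card_split (F := F) (F₀ := F₀) hFF₀ hx
        rw [length_comp, (minimal_iff hsimp).1 hpmin, (minimal_iff hsimp).1 hq1'min,
          hSSxx', hSSx'z', hSSxz']
        omega
    have hK2 : δ₂.comp u = Mor.comp (⟦p2⟧ : Mor 𝒜 z z') δ₂' := by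
      rw [hq2eq, hueq, hq2'eq, Mor.comp_mk, Mor.comp_mk]
      apply mor_eq_of_minpos (positive_comp _ _ hq2pos hppos)
        (positive_comp _ _ hp2pos hq2'pos)
      · apply minimal_of_length_eq
        have hcs := card_split (F := F) (F₀ := F₀) hFF₀ hx
        rw [length_comp, (minimal_iff hsimp).1 hq2min, (minimal_iff hsimp).1 hpmin,
          hSSzx, hSSxx', hSSzx']
        omega
      · apply minimal_of_length_eq
        have hcs := card_split (F := F) (F₀ := F₀) hFF₀ hx
        rw [length_comp, hp2len, (minimal_iff hsimp).1 hq2'min, hSSzz', hSSz'x', hSSzx']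
        omega
    have hkey : (δ₁.comp δ₂).comp u = u.comp (δ₁'.comp δ₂') := by
      exact (Mor.comp_assoc' _ _ _).trans ((congrArg (Mor.comp δ₁) hK2).trans
        ((Mor.comp_assoc' _ _ _).symm.trans ((congrArg (fun t => Mor.comp t δ₂') hK1).trans
          (Mor.comp_assoc' _ _ _))))
    exact pow_conj _ _ u hkey m
  · -- (3) no crossing of dual-edge hyperplanes
    intro x x' u hseg p hppos hueq H hdual
    obtain ⟨hadjf, hpt, p₀, hp₀pos, hp₀min, hueq₀⟩ := hseg
    have hHhyps : H ∈ 𝒜.hyps := hdual.1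
    have hBH : F.B ≤ H := by
      by_contra hB
      obtain ⟨v, w, hv, hw, _, hsep⟩ := hdual.2
      have h1 : 0 < gf H F.pt * gf H v.pt := (vert_iff F v).1 hv H hHhyps hB
      have h2 : 0 < gf H F.pt * gf H w.pt := (vert_iff F w).1 hw H hHhyps hB
      have h3 : 0 < gf H v.pt * gf H w.pt :=
        sgn_mul_trans (by rw [mul_comm]; exact h1) h2
      exact absurd ((sep_iff hHhyps v w).1 hsep) (not_lt.2 h3.le)
    have hnot : H ∉ SS x x' := by
      intro hmem
      exact hpt.2.2.2 H hHhyps hBH (mem_SS_iff_sep.1 hmem).2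
    have hrel : Rel 𝒜 p p₀ := by
      have : (⟦p⟧ : Mor 𝒜 x x') = ⟦p₀⟧ := by rw [← hueq, ← hueq₀]
      exact Quotient.exact this
    have hic : Path.icount H p = 0 := by
      rw [icount_rel hsimp hrel hHhyps,
        icount_eq_indicator hsimp hp₀pos hp₀min hHhyps, if_neg hnot]
    exact not_crosses_of_icount_zero hppos hic
end
end
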